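/- arXiv:1604.01461 — 17 statements merged into one kernel-verified Lean document; each statement's English description precedes it below -/
import Mathlib

section
/- Let X be a finite-dimensional Banach space over 𝕜 (𝕜 = ℝ or ℂ) and let Y be any Banach space over 𝕜. Then the pair (X, Y) has the strong Bishop-Phelps-Bollobás property: for every ε > 0 and every bounded linear operator T : X → Y with ‖T‖ = 1 there exists η > 0 such that whenever x₀ ∈ X with ‖x₀‖ = 1 satisfies ‖T x₀‖ > 1 - η, there exists x₁ ∈ X with ‖x₁‖ = 1, ‖T x₁‖ = 1 and ‖x₁ - x₀‖ < ε. -/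
/-- If `X` is a finite-dimensional Banach space over `𝕜` (`ℝ` or `ℂ`) and `Y` is
any Banach space over `𝕜`, then the pair `(X, Y)` has the strong Bishop-Phelps-Bollobás
property. -/
theorem finiteDimensional_sBPBp
    (𝕜 : Type*) [RCLike 𝕜]
    (X : Type*) [NormedAddCommGroup X] [NormedSpace 𝕜 X] [CompleteSpace X]
    [FiniteDimensional 𝕜 X]
    (Y : Type*) [NormedAddCommGroup Y] [NormedSpace 𝕜 Y] [CompleteSpace Y] :
    ∀ ε : ℝ, 0 < ε → ∀ T : X →L[𝕜] Y, ‖T‖ = 1 →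
      ∃ η : ℝ, 0 < η ∧ ∀ x₀ : X, ‖x₀‖ = 1 → 1 - η < ‖T x₀‖ →
        ∃ x₁ : X, ‖x₁‖ = 1 ∧ ‖T x₁‖ = 1 ∧ ‖x₁ - x₀‖ < ε := by
  intro ε hε T hT
  haveI : ProperSpace X := FiniteDimensional.proper 𝕜 X
  by_contra h
  push_neg at h
  have key : ∀ n : ℕ, ∃ x₀ : X, ‖x₀‖ = 1 ∧ 1 - 1 / (n + 1) < ‖T x₀‖ ∧
      ∀ x₁ : X, ‖x₁‖ = 1 → ‖T x₁‖ = 1 → ε ≤ ‖x₁ - x₀‖ := by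
    intro n
    exact h (1 / (n + 1)) (by positivity)
  choose x hx1 hx2 hx3 using key
  have hxs : ∀ n, x n ∈ Metric.sphere (0 : X) 1 := by
    intro n; simpa [mem_sphere_iff_norm] using hx1 n
  obtain ⟨a, ha, φ, hφ, hconv⟩ :=
    (isCompact_sphere (0 : X) 1).tendsto_subseq hxs
  have ha1 : ‖a‖ = 1 := by simpa [mem_sphere_iff_norm] using ha
  -- ‖T a‖ = 1
  have hTconv : Filter.Tendsto (fun n => ‖T (x (φ n))‖) Filter.atTop (nhds ‖T a‖) :=
    ((T.continuous.tendsto a).comp hconv).norm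
  have hlow : Filter.Tendsto (fun n : ℕ => 1 - 1 / ((φ n : ℝ) + 1)) Filter.atTop
      (nhds (1 - 0)) := by
    apply Filter.Tendsto.const_sub
    apply tendsto_one_div_add_atTop_nhds_zero_nat.comp
    exact hφ.tendsto_atTop.comp Filter.tendsto_id |>.comp Filter.tendsto_id
  have hTa_ge : (1 : ℝ) - 0 ≤ ‖T a‖ := by
    refine le_of_tendsto_of_tendsto hlow hTconv ?_
    filter_upwards with n
    exact (hx2 (φ n)).le
  have hTa_le : ‖T a‖ ≤ 1 := by
    calc ‖T a‖ ≤ ‖T‖ * ‖a‖ := T.le_opNorm a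
    _ = 1 := by rw [hT, ha1, mul_one]
  have hTa : ‖T a‖ = 1 := le_antisymm hTa_le (by linarith)
  -- get n with ‖x (φ n) - a‖ < ε, contradiction
  have hdist : Filter.Tendsto (fun n => ‖x (φ n) - a‖) Filter.atTop (nhds 0) := by
    simpa using (hconv.sub_const a).norm
  obtain ⟨n, hn⟩ := (hdist.eventually (gt_mem_nhds hε)).exists
  have := hx3 (φ n) a ha1 hTa
  rw [norm_sub_rev] at this
  exact absurd hn (not_lt.mpr this)
end

section
/- Let X be a uniformly convex Banach space and Y any Banach space (over ℝ, or over ℂ regarded as real normed spaces for uniform convexity). Then the pair (X, Y) has the strong Bishop-Phelps-Bollobás property for compact operators: for every ε > 0 and every compact bounded linear operator T : X → Y with ‖T‖ = 1 there exists η > 0 such that whenever x₀ ∈ X with ‖x₀‖ = 1 satisfies ‖T x₀‖ > 1 - η, there exists x₁ ∈ X with ‖x₁‖ = 1, ‖T x₁‖ = 1 and ‖x₁ - x₀‖ < ε. -/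
/-- If `X` is a uniformly convex Banach space and `Y` is any Banach space, then
the pair `(X, Y)` has the strong Bishop-Phelps-Bollobás property for compact operators. -/
theorem uniformConvex_sBPBp_compact
    (𝕜 : Type*) [RCLike 𝕜]
    (X : Type*) [NormedAddCommGroup X] [NormedSpace 𝕜 X] [CompleteSpace X]
    [UniformConvexSpace X]
    (Y : Type*) [NormedAddCommGroup Y] [NormedSpace 𝕜 Y] [CompleteSpace Y] :
    ∀ ε : ℝ, 0 < ε → ∀ T : X →L[𝕜] Y, IsCompactOperator T → ‖T‖ = 1 →
      ∃ η : ℝ, 0 < η ∧ ∀ x₀ : X, ‖x₀‖ = 1 → 1 - η < ‖T x₀‖ →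
        ∃ x₁ : X, ‖x₁‖ = 1 ∧ ‖T x₁‖ = 1 ∧ ‖x₁ - x₀‖ < ε := by
  intro ε hε T hTc hT1
  by_contra hcon
  push_neg at hcon
  -- a bad sequence
  choose u hu1 hu2 hu3 using fun n : ℕ => hcon (1 / (n + 1)) (by positivity)
  -- norm bound
  have hTle : ∀ z : X, ‖T z‖ ≤ ‖z‖ := by
    intro z
    simpa [hT1] using T.le_opNorm z
  have huTle : ∀ n, ‖T (u n)‖ ≤ 1 := fun n => (hTle (u n)).trans_eq (hu1 n)
  -- compactness: extract a convergent subsequence of T (u n)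
  have hK : IsCompact (closure (⇑(T : X →ₛₗ[RingHom.id 𝕜] Y) '' Metric.closedBall 0 1)) :=
    hTc.isCompact_closure_image_closedBall 1
  have hmem : ∀ n, T (u n) ∈ closure (⇑(T : X →ₛₗ[RingHom.id 𝕜] Y) '' Metric.closedBall 0 1) := by
    intro n
    exact subset_closure ⟨u n, by simp [mem_closedBall_zero_iff, (hu1 n).le], rfl⟩
  obtain ⟨y, -, φ, hφ, hconv⟩ := hK.isSeqCompact hmem
  -- norms of T (u (φ k)) tend to 1
  have hφk : ∀ k : ℕ, (k : ℝ) ≤ (φ k : ℝ) := fun k => Nat.cast_le.2 hφ.le_apply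
  have hlow : ∀ k, 1 - 1 / (k + 1) < ‖T (u (φ k))‖ := by
    intro k
    refine lt_of_le_of_lt ?_ (hu2 (φ k))
    have h1 : (1 : ℝ) / (φ k + 1) ≤ 1 / (k + 1) := by
      apply one_div_le_one_div_of_le (by positivity)
      linarith [hφk k]
    linarith
  have hTnorm : Filter.Tendsto (fun k => ‖T (u (φ k))‖) Filter.atTop (nhds 1) := by
    have hlim : Filter.Tendsto (fun k : ℕ => 1 - 1 / ((k : ℝ) + 1)) Filter.atTop (nhds 1) := by
      simpa using tendsto_const_nhds.sub (tendsto_one_div_add_atTop_nhds_zero_nat : Filter.Tendsto (fun n : ℕ => 1 / ((n : ℝ) + 1)) Filter.atTop (nhds 0))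
    exact tendsto_of_tendsto_of_tendsto_of_le_of_le hlim tendsto_const_nhds
      (fun k => (hlow k).le) (fun k => huTle (φ k))
  have hy : ‖y‖ = 1 := tendsto_nhds_unique (hconv.norm) hTnorm
  -- Cauchy via uniform convexity
  have hcauchyT : CauchySeq (fun k => T (u (φ k))) := hconv.cauchySeq
  have hcauchy : CauchySeq (fun k => u (φ k)) := by
    rw [Metric.cauchySeq_iff]
    intro ε' hε'
    obtain ⟨δ, hδ, hδ'⟩ := exists_forall_sphere_dist_add_le_two_sub X hε'
    rw [Metric.cauchySeq_iff] at hcauchyT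
    obtain ⟨N₁, hN₁⟩ := hcauchyT (δ / 4) (by positivity)
    obtain ⟨N₂, hN₂⟩ := (Filter.tendsto_atTop'.1 hTnorm) (Set.Ioo (1 - δ / 4) 2)
      (Ioo_mem_nhds (by linarith) (by norm_num))
    refine ⟨max N₁ N₂, fun m hm n hn => ?_⟩
    by_contra hc
    push_neg at hc
    rw [dist_eq_norm] at hc
    have h2 : ‖u (φ m) + u (φ n)‖ ≤ 2 - δ := hδ' (hu1 (φ m)) (hu1 (φ n)) hc
    have h3 : ‖T (u (φ m)) + T (u (φ n))‖ ≤ ‖u (φ m) + u (φ n)‖ := by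
      have := hTle (u (φ m) + u (φ n))
      simpa using this
    have h4 : 2 * ‖T (u (φ m))‖ - ‖T (u (φ m)) - T (u (φ n))‖
        ≤ ‖T (u (φ m)) + T (u (φ n))‖ := by
      have hdouble : ‖T (u (φ m)) + T (u (φ m))‖ = 2 * ‖T (u (φ m))‖ := by
        rw [← two_smul 𝕜, norm_smul]
        norm_num
      have hsplit : T (u (φ m)) + T (u (φ m))
          = (T (u (φ m)) + T (u (φ n))) + (T (u (φ m)) - T (u (φ n))) := by abel
      have htri := norm_add_le (T (u (φ m)) + T (u (φ n))) (T (u (φ m)) - T (u (φ n)))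
      rw [← hsplit, hdouble] at htri
      linarith
    have h5 : dist (T (u (φ m))) (T (u (φ n))) < δ / 4 :=
      hN₁ m (le_of_max_le_left hm) n (le_of_max_le_left hn)
    rw [dist_eq_norm] at h5
    have h6 : 1 - δ / 4 < ‖T (u (φ m))‖ := (hN₂ m (le_of_max_le_right hm)).1
    linarith
  -- limit point
  obtain ⟨x₁, hx₁⟩ := cauchySeq_tendsto_of_complete hcauchy
  have hx₁norm : ‖x₁‖ = 1 := by
    have hconst : Filter.Tendsto (fun k => ‖u (φ k)‖) Filter.atTop (nhds 1) := by
      simp only [hu1]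
      exact tendsto_const_nhds
    exact tendsto_nhds_unique hx₁.norm hconst
  have hTx₁ : T x₁ = y :=
    tendsto_nhds_unique ((T.continuous.tendsto x₁).comp hx₁) hconv
  have hTx₁norm : ‖T x₁‖ = 1 := by rw [hTx₁, hy]
  -- contradiction with badness
  have hbad : ∀ k, ε ≤ ‖x₁ - u (φ k)‖ := fun k => hu3 (φ k) x₁ hx₁norm hTx₁norm
  have h0 : Filter.Tendsto (fun k => ‖x₁ - u (φ k)‖) Filter.atTop (nhds 0) := by
    have h := (tendsto_const_nhds (x := x₁) (f := Filter.atTop (α := ℕ))).sub hx₁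
    rw [sub_self] at h
    simpa using h.norm
  have : ε ≤ 0 := ge_of_tendsto h0 (Filter.Eventually.of_forall hbad)
  linarith
end

section
/- Let X be a uniformly convex Banach space and let Y be a Banach space with the Schur property (every weakly convergent sequence in Y converges in norm). Then the pair (X, Y) has the strong Bishop-Phelps-Bollobás property: for every ε > 0 and every bounded linear operator T : X → Y with ‖T‖ = 1 there exists η > 0 such that whenever x₀ ∈ X with ‖x₀‖ = 1 satisfies ‖T x₀‖ > 1 - η, there exists x₁ ∈ X with ‖x₁‖ = 1, ‖T x₁‖ = 1 and ‖x₁ - x₀‖ < ε. -/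
open Set Metric Filter Topology
section UC
variable {X : Type*} [NormedAddCommGroup X] [NormedSpace ℝ X] [UniformConvexSpace X]

lemma uc_pair' {ε : ℝ} (hε : 0 < ε) :
    ∃ δ > 0, ∀ x y : X, ‖x‖ ≤ 1 → ‖y‖ ≤ 1 → 2 - δ ≤ ‖x + y‖ → ‖x - y‖ ≤ ε := by
  obtain ⟨δ, hδ, h⟩ := exists_forall_closed_ball_dist_add_le_two_sub X hε
  refine ⟨δ / 2, by positivity, fun x y hx hy hxy => ?_⟩
  by_contra hc
  have := h hx hy (le_of_lt (lt_of_not_ge hc))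
  linarith

variable [CompleteSpace X]

lemma exists_norm_min' (K : Set X) (hne : K.Nonempty) (hcl : IsClosed K)
    (hconv : Convex ℝ K) : ∃ p ∈ K, ∀ q ∈ K, ‖p‖ ≤ ‖q‖ := by
  set d : ℝ := sInf (norm '' K) with hd
  have hbdd : BddBelow (norm '' K) := ⟨0, fun r ⟨q, _, hq⟩ => hq ▸ norm_nonneg q⟩
  have hneim : (norm '' K).Nonempty := hne.image _
  have hd0 : 0 ≤ d := le_csInf hneim (fun r ⟨q, _, hq⟩ => hq ▸ norm_nonneg q)
  have hdle : ∀ q ∈ K, d ≤ ‖q‖ := fun q hq => csInf_le hbdd ⟨q, hq, rfl⟩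
  -- minimizing sequence
  have hsel : ∀ n : ℕ, ∃ q ∈ K, ‖q‖ < d + 1 / (n + 1) := by
    intro n
    have : d < d + 1 / (n + 1) := by
      have : (0:ℝ) < 1 / (n + 1) := by positivity
      linarith
    obtain ⟨r, ⟨q, hqK, rfl⟩, hr⟩ := exists_lt_of_csInf_lt hneim this
    exact ⟨q, hqK, hr⟩
  choose q hqK hqlt using hsel
  have hmid : ∀ m n : ℕ, 2 * d ≤ ‖q m + q n‖ := by
    intro m n
    have hmem : (1/2 : ℝ) • q m + (1/2 : ℝ) • q n ∈ K :=
      hconv (hqK m) (hqK n) (by norm_num) (by norm_num) (by norm_num)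
    have := hdle _ hmem
    have heq : ‖(1/2 : ℝ) • q m + (1/2 : ℝ) • q n‖ = ‖q m + q n‖ / 2 := by
      rw [← smul_add, norm_smul]
      simp [abs_of_nonneg]
      ring
    rw [heq] at this
    linarith
  -- Cauchy
  have hcauchy : CauchySeq q := by
    rw [Metric.cauchySeq_iff]
    intro ε hε
    rcases eq_or_lt_of_le hd0 with hd0' | hdpos
    · -- d = 0
      obtain ⟨N, hN⟩ := exists_nat_gt (4 / ε)
      refine ⟨N, fun m hm n hn => ?_⟩
      have hqm : ‖q m‖ < d + 1 / (N + 1) := by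
        refine (hqlt m).trans_le ?_
        have : (1:ℝ) / (m + 1) ≤ 1 / (N + 1) := by
          apply one_div_le_one_div_of_le (by positivity)
          exact_mod_cast Nat.succ_le_succ hm
        linarith
      have hqn : ‖q n‖ < d + 1 / (N + 1) := by
        refine (hqlt n).trans_le ?_
        have : (1:ℝ) / (n + 1) ≤ 1 / (N + 1) := by
          apply one_div_le_one_div_of_le (by positivity)
          exact_mod_cast Nat.succ_le_succ hn
        linarith
      rw [dist_eq_norm]
      have h1 : (1:ℝ) / (N + 1) < ε / 4 := by
        rw [div_lt_iff₀ (by positivity)]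
        rw [div_lt_iff₀ (by positivity)] at hN
        nlinarith [hN]
      calc ‖q m - q n‖ ≤ ‖q m‖ + ‖q n‖ := norm_sub_le _ _
        _ < 2 * d + 2 * (1 / (N+1)) := by linarith
        _ < ε := by rw [← hd0']; linarith
    · -- d > 0
      obtain ⟨δ, hδpos, hδ⟩ := uc_pair' (X := X) (ε := ε / (2 * (d + 1)))
        (by positivity)
      -- choose t > 0 small
      set t : ℝ := min 1 (min (δ * d / 4) (d * d * δ / 4)) with ht
      have htpos : 0 < t := by
        refine lt_min one_pos (lt_min (by positivity) (by positivity))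
      obtain ⟨N, hN⟩ := exists_nat_gt (1 / t)
      refine ⟨N, fun m hm n hn => ?_⟩
      have hRpos : 0 < d + t := by linarith
      have hbound : ∀ k : ℕ, N ≤ k → ‖q k‖ ≤ d + t := by
        intro k hk
        have h1 : (1:ℝ) / (k + 1) ≤ 1 / (N + 1) := by
          apply one_div_le_one_div_of_le (by positivity)
          exact_mod_cast Nat.succ_le_succ hk
        have h2 : (1:ℝ) / (N + 1) ≤ t := by
          rw [div_le_iff₀ (by positivity)]
          rw [div_lt_iff₀ htpos] at hN
          nlinarith
        have := hqlt k
        linarith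
      -- scaled vectors
      set u := (d + t)⁻¹ • q m
      set v := (d + t)⁻¹ • q n
      have hu : ‖u‖ ≤ 1 := by
        rw [norm_smul, Real.norm_of_nonneg (by positivity : (0:ℝ) ≤ (d+t)⁻¹)]
        rw [inv_mul_le_iff₀ hRpos, mul_one]
        exact hbound m hm
      have hv : ‖v‖ ≤ 1 := by
        rw [norm_smul, Real.norm_of_nonneg (by positivity : (0:ℝ) ≤ (d+t)⁻¹)]
        rw [inv_mul_le_iff₀ hRpos, mul_one]
        exact hbound n hn
      have huv : 2 - δ ≤ ‖u + v‖ := by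
        have : ‖u + v‖ = (d + t)⁻¹ * ‖q m + q n‖ := by
          rw [← smul_add, norm_smul, Real.norm_of_nonneg (by positivity : (0:ℝ) ≤ (d+t)⁻¹)]
        rw [this]
        have h2 : (d + t)⁻¹ * (2 * d) ≤ (d+t)⁻¹ * ‖q m + q n‖ :=
          mul_le_mul_of_nonneg_left (hmid m n) (by positivity)
        have h3 : 2 - δ ≤ (d + t)⁻¹ * (2 * d) := by
          rw [inv_mul_eq_div, le_div_iff₀ hRpos]
          have htle : t ≤ δ * d / 4 := le_trans (min_le_right _ _) (min_le_left _ _)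
          nlinarith
        linarith
      have := hδ u v hu hv huv
      have hfin : ‖q m - q n‖ ≤ (d + t) * (ε / (2 * (d + 1))) := by
        have heq : ‖u - v‖ = (d + t)⁻¹ * ‖q m - q n‖ := by
          rw [← smul_sub, norm_smul, Real.norm_of_nonneg (by positivity : (0:ℝ) ≤ (d+t)⁻¹)]
        rw [heq, inv_mul_le_iff₀ hRpos] at this
        linarith [this]
      rw [dist_eq_norm]
      have ht1 : t ≤ 1 := min_le_left _ _
      calc ‖q m - q n‖ ≤ (d + t) * (ε / (2 * (d + 1))) := hfin
        _ ≤ (d + 1) * (ε / (2 * (d + 1))) := by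
            apply mul_le_mul_of_nonneg_right (by linarith) (by positivity)
        _ = ε / 2 := by field_simp
        _ < ε := by linarith
  obtain ⟨p, hp⟩ := cauchySeq_tendsto_of_complete hcauchy
  have hpK : p ∈ K := hcl.mem_of_tendsto hp (Eventually.of_forall hqK)
  refine ⟨p, hpK, fun r hr => ?_⟩
  have hnorm : Tendsto (fun n => ‖q n‖) atTop (𝓝 ‖p‖) := (continuous_norm.tendsto p).comp hp
  have hle : ‖p‖ ≤ d := by
    have haux : Tendsto (fun n : ℕ => d + 1 / ((n:ℝ) + 1)) atTop (𝓝 (d + 0)) :=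
      tendsto_const_nhds.add tendsto_one_div_add_atTop_nhds_zero_nat
    rw [add_zero] at haux
    exact le_of_tendsto_of_tendsto' hnorm haux (fun n => (hqlt n).le)
  exact hle.trans (hdle r hr)


/-- Decreasing sequences of nonempty bounded closed convex sets in a complete
uniformly convex space have nonempty intersection. -/
lemma iInter_nonempty_of_antitone (K : ℕ → Set X)
    (hanti : ∀ {m n : ℕ}, m ≤ n → K n ⊆ K m)
    (hne : ∀ n, (K n).Nonempty) (hcl : ∀ n, IsClosed (K n)) (hconv : ∀ n, Convex ℝ (K n))
    {R : ℝ} (hbdd : ∀ x ∈ K 0, ‖x‖ ≤ R) : ∃ p, ∀ n, p ∈ K n := by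
  choose p hpK hpmin using fun n => exists_norm_min' (K n) (hne n) (hcl n) (hconv n)
  set d : ℕ → ℝ := fun n => ‖p n‖ with hd
  have hK0 : ∀ n, p n ∈ K 0 := fun n => hanti (Nat.zero_le n) (hpK n)
  have hmono : Monotone d := by
    intro m n hmn
    exact hpmin m (p n) (hanti hmn (hpK n))
  have hub : ∀ n, d n ≤ R := fun n => hbdd _ (hK0 n)
  have hbddA : BddAbove (range d) := ⟨R, fun r ⟨n, hn⟩ => hn ▸ hub n⟩
  set D : ℝ := ⨆ n, d n with hD
  have hdleD : ∀ n, d n ≤ D := fun n => le_ciSup hbddA n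
  have hD0 : 0 ≤ D := le_trans (norm_nonneg (p 0)) (hdleD 0)
  have hmid : ∀ m n : ℕ, 2 * d (min m n) ≤ ‖p m + p n‖ := by
    intro m n
    have h1 : p m ∈ K (min m n) := hanti (min_le_left m n) (hpK m)
    have h2 : p n ∈ K (min m n) := hanti (min_le_right m n) (hpK n)
    have hmem : (1/2 : ℝ) • p m + (1/2 : ℝ) • p n ∈ K (min m n) :=
      hconv _ h1 h2 (by norm_num) (by norm_num) (by norm_num)
    have := hpmin (min m n) _ hmem
    have heq : ‖(1/2 : ℝ) • p m + (1/2 : ℝ) • p n‖ = ‖p m + p n‖ / 2 := by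
      rw [← smul_add, norm_smul]
      simp [Real.norm_of_nonneg]
      ring
    rw [heq] at this
    linarith
  have hcauchy : CauchySeq p := by
    rw [Metric.cauchySeq_iff]
    intro ε hε
    rcases eq_or_lt_of_le hD0 with hD0' | hDpos
    · refine ⟨0, fun m _ n _ => ?_⟩
      have h1 : d m ≤ 0 := hD0' ▸ hdleD m
      have h2 : d n ≤ 0 := hD0' ▸ hdleD n
      have h1' : ‖p m‖ = 0 := le_antisymm h1 (norm_nonneg _)
      have h2' : ‖p n‖ = 0 := le_antisymm h2 (norm_nonneg _)
      rw [dist_eq_norm]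
      calc ‖p m - p n‖ ≤ ‖p m‖ + ‖p n‖ := norm_sub_le _ _
        _ = 0 := by rw [h1', h2']; ring
        _ < ε := hε
    · obtain ⟨δ, hδpos, hδ⟩ := uc_pair' (X := X) (ε := ε / (2 * D)) (by positivity)
      have hδ' : 0 < δ * D / 2 := by positivity
      -- choose N with d N ≥ D - δ*D/2
      obtain ⟨N, hN⟩ : ∃ N, D - δ * D / 2 < d N := by
        by_contra hc
        push_neg at hc
        have : D ≤ D - δ * D / 2 := ciSup_le hc
        linarith
      refine ⟨N, fun m hm n hn => ?_⟩
      have hdm : d N ≤ d (min m n) := hmono (le_min hm hn)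
      set u := D⁻¹ • p m
      set v := D⁻¹ • p n
      have hDinv : (0:ℝ) ≤ D⁻¹ := by positivity
      have hu : ‖u‖ ≤ 1 := by
        rw [norm_smul, Real.norm_of_nonneg hDinv, inv_mul_le_iff₀ hDpos, mul_one]
        exact hdleD m
      have hv : ‖v‖ ≤ 1 := by
        rw [norm_smul, Real.norm_of_nonneg hDinv, inv_mul_le_iff₀ hDpos, mul_one]
        exact hdleD n
      have huv : 2 - δ ≤ ‖u + v‖ := by
        have heq : ‖u + v‖ = D⁻¹ * ‖p m + p n‖ := by
          rw [← smul_add, norm_smul, Real.norm_of_nonneg hDinv]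
        rw [heq]
        have h2 : D⁻¹ * (2 * d (min m n)) ≤ D⁻¹ * ‖p m + p n‖ :=
          mul_le_mul_of_nonneg_left (hmid m n) hDinv
        have h3 : 2 - δ ≤ D⁻¹ * (2 * d (min m n)) := by
          rw [inv_mul_eq_div, le_div_iff₀ hDpos]
          nlinarith
        linarith
      have hres := hδ u v hu hv huv
      have heq : ‖u - v‖ = D⁻¹ * ‖p m - p n‖ := by
        rw [← smul_sub, norm_smul, Real.norm_of_nonneg hDinv]
      rw [heq, inv_mul_le_iff₀ hDpos] at hres
      rw [dist_eq_norm]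
      have hDne : D ≠ 0 := ne_of_gt hDpos
      calc ‖p m - p n‖ ≤ D * (ε / (2 * D)) := hres
        _ = ε / 2 := by field_simp
        _ < ε := by linarith
  obtain ⟨q, hq⟩ := cauchySeq_tendsto_of_complete hcauchy
  refine ⟨q, fun n => ?_⟩
  refine (hcl n).mem_of_tendsto (hq.comp (tendsto_add_atTop_nat n)) ?_
  exact Eventually.of_forall (fun k => hanti (Nat.le_add_left n k) (hpK (k + n)))
end UC

lemma isSeparable_convexHull' {X : Type*} [NormedAddCommGroup X] [NormedSpace ℝ X]
    {s : Set X} (hs : s.Countable) :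
    TopologicalSpace.IsSeparable (convexHull ℝ s) := by
  rw [convexHull_eq_union_convexHull_finite_subsets]
  have hS : {t : Finset X | (t : Set X) ⊆ s}.Countable := by
    have h1 : {u : Set X | u.Finite ∧ u ⊆ s}.Countable := Set.countable_setOf_finite_subset hs
    have h2 : {t : Finset X | (t : Set X) ⊆ s} =
        (fun t : Finset X => (t : Set X)) ⁻¹' {u | u.Finite ∧ u ⊆ s} := by
      ext t; simp [Finset.finite_toSet]
    rw [h2]
    exact h1.preimage Finset.coe_injective
  have heq : (⋃ (t : Finset X), ⋃ (_ : (t : Set X) ⊆ s), convexHull ℝ (t : Set X)) =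
      ⋃ t ∈ {t : Finset X | (t : Set X) ⊆ s}, convexHull ℝ (t : Set X) := rfl
  rw [heq, Set.biUnion_eq_iUnion]
  haveI := hS.to_subtype
  exact TopologicalSpace.IsSeparable.iUnion
    (fun t => ((t : {t : Finset X | (t : Set X) ⊆ s}).1.finite_toSet.isCompact_convexHull ℝ).isSeparable)

lemma funlim_of_mem_closure_convexHull {𝕜 : Type*} [RCLike 𝕜] {X : Type*}
    [NormedAddCommGroup X] [NormedSpace 𝕜 X] [NormedSpace ℝ X] [IsScalarTower ℝ 𝕜 X]
    (f : X →L[𝕜] 𝕜) (u : ℕ → X) (c : 𝕜)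
    (h : Tendsto (fun n => f (u n)) atTop (𝓝 c))
    (w : X) (hw : ∀ m : ℕ, w ∈ closure (convexHull ℝ (u '' Ici m))) : f w = c := by
  have key : ∀ r : ℝ, 0 < r → dist (f w) c ≤ r := by
    intro r hr
    obtain ⟨m, hm⟩ := (Metric.tendsto_atTop.1 h) r hr
    have hGconv : Convex ℝ (⇑f ⁻¹' (closedBall c r)) :=
      (convex_closedBall c r).linear_preimage ((f.toLinearMap).restrictScalars ℝ)
    have hGcl : IsClosed (⇑f ⁻¹' (closedBall c r)) :=
      IsClosed.preimage f.continuous Metric.isClosed_closedBall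
    have hsub : u '' Ici m ⊆ ⇑f ⁻¹' (closedBall c r) := by
      rintro _ ⟨n, hn, rfl⟩
      exact mem_preimage.2 (mem_closedBall.2 (le_of_lt (hm n hn)))
    have hfinal : closure (convexHull ℝ (u '' Ici m)) ⊆ ⇑f ⁻¹' (closedBall c r) :=
      closure_minimal (convexHull_min hsub hGconv) hGcl
    exact mem_closedBall.1 (hfinal (hw m))
  by_contra hne
  have hpos : 0 < dist (f w) c := dist_pos.2 hne
  have := key (dist (f w) c / 2) (by positivity)
  linarith

lemma weak_cluster {𝕜 : Type*} [RCLike 𝕜] {X : Type*} [NormedAddCommGroup X] [NormedSpace 𝕜 X]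
    [NormedSpace ℝ X] [IsScalarTower ℝ 𝕜 X] [UniformConvexSpace X] [CompleteSpace X]
    (x : ℕ → X) (hx : ∀ n, ‖x n‖ ≤ 1) :
    ∃ (v : X) (φ : ℕ → ℕ), StrictMono φ ∧ ‖v‖ ≤ 1 ∧
      ∀ f : X →L[𝕜] 𝕜, Tendsto (fun n => f (x (φ n))) atTop (𝓝 (f v)) := by
  rcases subsingleton_or_nontrivial X with hX | hX
  · refine ⟨x 0, id, strictMono_id, hx 0, fun f => ?_⟩
    have heq : (fun n => f (x n)) = fun _ => f (x 0) :=
      funext fun n => by rw [Subsingleton.elim (x n) (x 0)]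
    have h2 : Tendsto (fun n => f (x n)) atTop (𝓝 (f (x 0))) := by
      rw [heq]; exact tendsto_const_nhds
    exact h2
  -- separable collection of differences
  set H : Set X := closure (convexHull ℝ (range x)) with hHdef
  have hH : TopologicalSpace.IsSeparable H :=
    (isSeparable_convexHull' (countable_range x)).closure
  have hD : TopologicalSpace.IsSeparable ((fun p : X × X => p.1 - p.2) '' (H ×ˢ H)) :=
    (hH.prod hH).image (continuous_fst.sub continuous_snd)
  obtain ⟨c0, hc0count, hc0sub⟩ := hD
  have hcount : (insert (0:X) c0).Countable := hc0count.insert 0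
  obtain ⟨z, hz⟩ := hcount.exists_eq_range ⟨0, mem_insert _ _⟩
  have hθex : ∀ i : ℕ, ∃ g : X →L[𝕜] 𝕜, ‖g‖ = 1 ∧ g (z i) = (‖z i‖ : 𝕜) := fun i =>
    exists_dual_vector' 𝕜 (z i)
  choose θ hθ1 hθ2 using hθex
  -- diagonal extraction
  have hScomp : IsCompact (univ.pi (fun _ : ℕ => closedBall (0:𝕜) 1)) :=
    isCompact_univ_pi (fun _ => isCompact_closedBall _ _)
  have hmem : ∀ n, (fun i => θ i (x n)) ∈ univ.pi (fun _ : ℕ => closedBall (0:𝕜) 1) := by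
    intro n
    rw [mem_univ_pi]
    intro i
    rw [mem_closedBall, dist_zero_right]
    calc ‖θ i (x n)‖ ≤ ‖θ i‖ * ‖x n‖ := (θ i).le_opNorm _
      _ ≤ 1 := by rw [hθ1 i, one_mul]; exact hx n
  obtain ⟨a, -, φ, hφ, hconv⟩ := hScomp.tendsto_subseq hmem
  have hcoord : ∀ i, Tendsto (fun n => θ i (x (φ n))) atTop (𝓝 (a i)) := fun i =>
    tendsto_pi_nhds.1 hconv i
  -- nested convex sets along φ
  set K : ℕ → Set X := fun m => closure (convexHull ℝ ((x ∘ φ) '' Ici m)) with hKdef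
  have hKanti : ∀ {m n : ℕ}, m ≤ n → K n ⊆ K m := fun hmn =>
    closure_mono (convexHull_mono (image_mono (Ici_subset_Ici.2 hmn)))
  have hKne : ∀ n, (K n).Nonempty := fun n =>
    ⟨x (φ n), subset_closure (subset_convexHull _ _ ⟨n, le_refl n, rfl⟩)⟩
  have hKcl : ∀ n, IsClosed (K n) := fun _ => isClosed_closure
  have hKconv : ∀ n, Convex ℝ (K n) := fun _ => (convex_convexHull ℝ _).closure
  have hKbdd : ∀ y ∈ K 0, ‖y‖ ≤ 1 := by
    intro y hy
    have hball : K 0 ⊆ closedBall (0:X) 1 := by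
      refine closure_minimal (convexHull_min ?_ (convex_closedBall _ _)) Metric.isClosed_closedBall
      rintro _ ⟨n, -, rfl⟩
      rw [mem_closedBall, dist_zero_right]
      exact hx (φ n)
    have := hball hy
    rwa [mem_closedBall, dist_zero_right] at this
  have hKH : ∀ m, K m ⊆ H := by
    intro m
    exact closure_mono (convexHull_mono (by rintro _ ⟨n, -, rfl⟩; exact ⟨φ n, rfl⟩))
  obtain ⟨v, hv⟩ := iInter_nonempty_of_antitone K (fun h => hKanti h) hKne hKcl hKconv hKbdd
  have hv1 : ‖v‖ ≤ 1 := hKbdd v (hv 0)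
  have hθv : ∀ i, θ i v = a i := fun i =>
    funlim_of_mem_closure_convexHull (θ i) (x ∘ φ) (a i) (hcoord i) v (fun m => hv m)
  refine ⟨v, φ, hφ, hv1, fun f => ?_⟩
  by_contra hcon
  rw [Metric.tendsto_atTop] at hcon
  push_neg at hcon
  obtain ⟨γ, hγpos, hfreq⟩ := hcon
  have hfreq' : ∀ N, ∃ n ≥ N, γ ≤ dist (f (x (φ n))) (f v) := hfreq
  obtain ⟨ψ₀, hψ₀mono, hψ₀⟩ :=
    Filter.extraction_of_frequently_atTop (Filter.frequently_atTop.2 hfreq')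
  have hbdd2 : ∀ k, f (x (φ (ψ₀ k))) ∈ closedBall (0:𝕜) ‖f‖ := by
    intro k
    rw [mem_closedBall, dist_zero_right]
    calc ‖f (x (φ (ψ₀ k)))‖ ≤ ‖f‖ * ‖x (φ (ψ₀ k))‖ := f.le_opNorm _
      _ ≤ ‖f‖ * 1 := mul_le_mul_of_nonneg_left (hx _) (norm_nonneg f)
      _ = ‖f‖ := mul_one _
  obtain ⟨β, -, ψ₁, hψ₁mono, hβ⟩ := (isCompact_closedBall (0:𝕜) ‖f‖).tendsto_subseq hbdd2
  set ψ : ℕ → ℕ := ψ₀ ∘ ψ₁ with hψdef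
  have hψmono : StrictMono ψ := hψ₀mono.comp hψ₁mono
  set K' : ℕ → Set X := fun m => closure (convexHull ℝ ((x ∘ φ ∘ ψ) '' Ici m)) with hK'def
  have hK'anti : ∀ {m n : ℕ}, m ≤ n → K' n ⊆ K' m := fun hmn =>
    closure_mono (convexHull_mono (image_mono (Ici_subset_Ici.2 hmn)))
  have hK'ne : ∀ n, (K' n).Nonempty := fun n =>
    ⟨x (φ (ψ n)), subset_closure (subset_convexHull _ _ ⟨n, le_refl n, rfl⟩)⟩
  have hK'sub : ∀ m, K' m ⊆ K m := by
    intro m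
    apply closure_mono
    apply convexHull_mono
    rintro _ ⟨n, hn, rfl⟩
    exact ⟨ψ n, le_trans hn (hψmono.le_apply), rfl⟩
  have hK'bdd : ∀ y ∈ K' 0, ‖y‖ ≤ 1 := fun y hy => hKbdd y (hK'sub 0 hy)
  obtain ⟨v', hv'⟩ := iInter_nonempty_of_antitone K' (fun h => hK'anti h) hK'ne
    (fun _ => isClosed_closure) (fun _ => (convex_convexHull ℝ _).closure) hK'bdd
  have hθv' : ∀ i, θ i v' = a i := fun i =>
    funlim_of_mem_closure_convexHull (θ i) (x ∘ φ ∘ ψ) (a i)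
      ((hcoord i).comp hψmono.tendsto_atTop) v' (fun m => hv' m)
  -- v = v'
  have hvv' : v = v' := by
    by_contra hne
    have hdpos : 0 < ‖v - v'‖ := by
      rw [norm_pos_iff, sub_ne_zero]; exact hne
    have hdiff : v - v' ∈ closure (range z) := by
      rw [← hz]
      refine closure_mono (subset_insert 0 c0) ?_
      apply hc0sub
      exact ⟨(v, v'), ⟨hKH 0 (hv 0), hKH 0 (hK'sub 0 (hv' 0))⟩, rfl⟩
    rw [Metric.mem_closure_iff] at hdiff
    obtain ⟨b, ⟨i, rfl⟩, hb⟩ := hdiff (‖v - v'‖/3) (by positivity)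
    rw [dist_eq_norm] at hb
    have hzero : θ i (v - v') = 0 := by
      rw [map_sub, hθv i, hθv' i, sub_self]
    have hzi : ‖z i‖ < ‖v - v'‖/3 := by
      have h1 : (‖z i‖ : 𝕜) = θ i (z i - (v - v')) := by
        rw [map_sub, hzero, sub_zero, hθ2 i]
      have h2 : ‖θ i (z i - (v - v'))‖ ≤ ‖z i - (v - v')‖ := by
        calc ‖θ i (z i - (v - v'))‖ ≤ ‖θ i‖ * ‖z i - (v - v')‖ := (θ i).le_opNorm _
          _ = ‖z i - (v - v')‖ := by rw [hθ1 i, one_mul]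
      have h3 : ‖z i - (v - v')‖ < ‖v - v'‖/3 := by
        rw [← norm_neg, neg_sub]; exact hb
      have h4 : ‖((‖z i‖ : ℝ) : 𝕜)‖ = ‖z i‖ := by
        rw [RCLike.norm_ofReal, abs_of_nonneg (norm_nonneg _)]
      calc ‖z i‖ = ‖((‖z i‖ : ℝ) : 𝕜)‖ := h4.symm
        _ = ‖θ i (z i - (v - v'))‖ := by rw [h1]
        _ ≤ ‖z i - (v - v')‖ := h2
        _ < ‖v - v'‖/3 := h3
    have : ‖v - v'‖ ≤ ‖v - v' - z i‖ + ‖z i‖ := by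
      calc ‖v - v'‖ = ‖(v - v' - z i) + z i‖ := by congr 1; abel
        _ ≤ ‖v - v' - z i‖ + ‖z i‖ := norm_add_le _ _
    linarith
  -- final contradiction
  have hβ' : Tendsto (fun k => f (x (φ (ψ k)))) atTop (𝓝 β) := hβ
  have hfv : f v = β := by
    rw [hvv']
    exact funlim_of_mem_closure_convexHull f (x ∘ φ ∘ ψ) β hβ' v' (fun m => hv' m)
  have hged : γ ≤ dist β (f v) := by
    have htd : Tendsto (fun k => dist (f (x (φ (ψ k)))) (f v)) atTop (𝓝 (dist β (f v))) :=
      hβ'.dist tendsto_const_nhds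
    refine ge_of_tendsto htd (Eventually.of_forall (fun k => hψ₀ (ψ₁ k)))
  rw [hfv, dist_self] at hged
  linarith

/-- If `X` is a uniformly convex Banach space and `Y` is a Banach space with the
Schur property (every weakly convergent sequence converges in norm), then the pair `(X, Y)`
has the strong Bishop-Phelps-Bollobás property. -/
theorem uniformConvex_schur_sBPBp
    (𝕜 : Type*) [RCLike 𝕜]
    (X : Type*) [NormedAddCommGroup X] [NormedSpace 𝕜 X] [CompleteSpace X]
    [UniformConvexSpace X]
    (Y : Type*) [NormedAddCommGroup Y] [NormedSpace 𝕜 Y] [CompleteSpace Y]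
    (schur : ∀ (y : ℕ → Y) (y₀ : Y),
      (∀ f : Y →L[𝕜] 𝕜, Filter.Tendsto (fun n => f (y n)) Filter.atTop (nhds (f y₀))) →
      Filter.Tendsto y Filter.atTop (nhds y₀)) :
    ∀ ε : ℝ, 0 < ε → ∀ T : X →L[𝕜] Y, ‖T‖ = 1 →
      ∃ η : ℝ, 0 < η ∧ ∀ x₀ : X, ‖x₀‖ = 1 → 1 - η < ‖T x₀‖ →
        ∃ x₁ : X, ‖x₁‖ = 1 ∧ ‖T x₁‖ = 1 ∧ ‖x₁ - x₀‖ < ε := by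
  intro ε hε T hT
  by_contra hcon
  push_neg at hcon
  have hcon' : ∀ η : ℝ, 0 < η → ∃ x₀ : X, ‖x₀‖ = 1 ∧ 1 - η < ‖T x₀‖ ∧
      ∀ x₁ : X, ‖x₁‖ = 1 → ‖T x₁‖ = 1 → ε ≤ ‖x₁ - x₀‖ := by
    intro η hη
    obtain ⟨x₀, h1, h2, h3⟩ := hcon η hη
    exact ⟨x₀, h1, h2, fun x₁ ha hb => not_lt.1 (fun hc => by
      have := h3 x₁ ha hb; linarith)⟩
  letI : NormedSpace ℝ X := NormedSpace.restrictScalars ℝ 𝕜 X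
  haveI : IsScalarTower ℝ 𝕜 X := ⟨fun r c w => by
    rw [Algebra.smul_def]
    show (algebraMap ℝ 𝕜 r * c) • w = r • (c • w)
    rw [mul_smul]
    rfl⟩
  choose x hx1 hx2 hx3 using fun k : ℕ => hcon' (1/((k:ℝ)+1)) (by positivity)
  obtain ⟨v, φ, hφ, hv1, hweak⟩ := weak_cluster (𝕜 := 𝕜) x (fun k => le_of_eq (hx1 k))
  have hwT : ∀ f : Y →L[𝕜] 𝕜, Tendsto (fun n => f (T (x (φ n)))) atTop (𝓝 (f (T v))) :=
    fun f => hweak (f.comp T)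
  have hTconv : Tendsto (fun n => T (x (φ n))) atTop (𝓝 (T v)) := schur _ _ hwT
  have hTxn : Tendsto (fun n => ‖T (x (φ n))‖) atTop (𝓝 ‖T v‖) := hTconv.norm
  have hT1 : Tendsto (fun n => ‖T (x (φ n))‖) atTop (𝓝 1) := by
    have hlow0 : Tendsto (fun n => 1/((φ n : ℝ)+1)) atTop (𝓝 0) :=
      tendsto_one_div_add_atTop_nhds_zero_nat.comp hφ.tendsto_atTop
    have hlow : Tendsto (fun n => 1 - 1/((φ n : ℝ)+1)) atTop (𝓝 1) := by
      have h' : Tendsto (fun n : ℕ => (1:ℝ) - 1/((φ n : ℝ)+1)) atTop (𝓝 (1 - 0)) :=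
        Tendsto.sub tendsto_const_nhds hlow0
      simpa using h'
    have hupper : ∀ n, ‖T (x (φ n))‖ ≤ 1 := fun n => by
      calc ‖T (x (φ n))‖ ≤ ‖T‖ * ‖x (φ n)‖ := T.le_opNorm _
        _ = 1 := by rw [hT, hx1, one_mul]
    exact tendsto_of_tendsto_of_tendsto_of_le_of_le hlow tendsto_const_nhds
      (fun n => (hx2 (φ n)).le) hupper
  have hTv1 : ‖T v‖ = 1 := tendsto_nhds_unique hTxn hT1
  have hv1' : ‖v‖ = 1 := by
    refine le_antisymm hv1 ?_
    have h := T.le_opNorm v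
    rw [hT, one_mul, hTv1] at h
    exact h
  have hnormconv : Tendsto (fun n => x (φ n)) atTop (𝓝 v) := by
    rw [Metric.tendsto_atTop]
    intro ε' hε'
    obtain ⟨δ, hδpos, hδ⟩ := uc_pair' (X := X) (ε := ε'/2) (by positivity)
    obtain ⟨N, hN⟩ := (Metric.tendsto_atTop.1 hTconv) δ hδpos
    refine ⟨N, fun n hn => ?_⟩
    have h2sm : ‖T v + T v‖ = 2 * ‖T v‖ := by
      rw [← two_smul 𝕜 (T v), norm_smul]
      norm_num
    have h1 : 2 - δ ≤ ‖x (φ n) + v‖ := by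
      have h2 : ‖T (x (φ n)) + T v‖ ≤ ‖x (φ n) + v‖ := by
        calc ‖T (x (φ n)) + T v‖ = ‖T (x (φ n) + v)‖ := by rw [map_add]
          _ ≤ ‖T‖ * ‖x (φ n) + v‖ := T.le_opNorm _
          _ = ‖x (φ n) + v‖ := by rw [hT, one_mul]
      have h3 : ‖T v + T v‖ - ‖T (x (φ n)) + T v‖ ≤ ‖T v - T (x (φ n))‖ := by
        have := norm_sub_norm_le (T v + T v) (T (x (φ n)) + T v)
        have heq : (T v + T v) - (T (x (φ n)) + T v) = T v - T (x (φ n)) := by abel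
        rwa [heq] at this
      have h4 : ‖T v - T (x (φ n))‖ < δ := by
        rw [← dist_eq_norm, dist_comm]
        exact hN n hn
      rw [h2sm, hTv1] at h3
      linarith
    have hres := hδ (x (φ n)) v (le_of_eq (hx1 (φ n))) (le_of_eq hv1') h1
    rw [dist_eq_norm]
    linarith
  obtain ⟨N, hN⟩ := (Metric.tendsto_atTop.1 hnormconv) ε hε
  have hcontra := hx3 (φ N) v hv1' hTv1
  have hlt : dist (x (φ N)) v < ε := hN N (le_refl N)
  rw [dist_eq_norm] at hlt
  rw [norm_sub_rev] at hcontra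
  linarith
end

section
/- Let X be a uniformly convex Banach space and let Y be a finite-dimensional Banach space. Then the pair (X, Y) has the strong Bishop-Phelps-Bollobás property: for every ε > 0 and every bounded linear operator T : X → Y with ‖T‖ = 1 there exists η > 0 such that whenever x₀ ∈ X with ‖x₀‖ = 1 satisfies ‖T x₀‖ > 1 - η, there exists x₁ ∈ X with ‖x₁‖ = 1, ‖T x₁‖ = 1 and ‖x₁ - x₀‖ < ε. -/
/-- If `X` is a uniformly convex Banach space and `Y` is a finite-dimensional
Banach space, then the pair `(X, Y)` has the strong Bishop-Phelps-Bollobás property. -/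
theorem uniformConvex_finiteDimensional_sBPBp
    (𝕜 : Type*) [RCLike 𝕜]
    (X : Type*) [NormedAddCommGroup X] [NormedSpace 𝕜 X] [CompleteSpace X]
    [UniformConvexSpace X]
    (Y : Type*) [NormedAddCommGroup Y] [NormedSpace 𝕜 Y] [CompleteSpace Y]
    [FiniteDimensional 𝕜 Y] :
    ∀ ε : ℝ, 0 < ε → ∀ T : X →L[𝕜] Y, ‖T‖ = 1 →
      ∃ η : ℝ, 0 < η ∧ ∀ x₀ : X, ‖x₀‖ = 1 → 1 - η < ‖T x₀‖ →
        ∃ x₁ : X, ‖x₁‖ = 1 ∧ ‖T x₁‖ = 1 ∧ ‖x₁ - x₀‖ < ε := by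
  intro ε hε T hT
  by_contra hcon
  push_neg at hcon
  choose x hx1 hx2 hx3 using fun n : ℕ => hcon (1 / (n + 1)) (by positivity)
  have hTle : ∀ z : X, ‖T z‖ ≤ ‖z‖ := fun z => by
    simpa [hT] using T.le_opNorm z
  have hTxle : ∀ n : ℕ, ‖T (x n)‖ ≤ 1 := fun n => by
    simpa [hx1 n] using hTle (x n)
  haveI : ProperSpace Y := FiniteDimensional.proper 𝕜 Y
  haveI : NormedSpace ℝ Y := NormedSpace.restrictScalars ℝ 𝕜 Y
  -- the sequence `T (x n)` lies in a compact ball; extract a convergent subsequence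
  have hmem : ∀ n : ℕ, T (x n) ∈ Metric.closedBall (0 : Y) 1 := fun n => by
    simpa [Metric.mem_closedBall, dist_eq_norm] using hTxle n
  obtain ⟨y, -, φ, hφ, hy⟩ :=
    (isCompact_closedBall (0 : Y) 1).tendsto_subseq hmem
  -- ‖T (x n)‖ → 1
  have hnorm : Filter.Tendsto (fun n : ℕ => ‖T (x n)‖) Filter.atTop (nhds 1) := by
    have h1 : Filter.Tendsto (fun n : ℕ => 1 - 1 / (n + 1 : ℝ)) Filter.atTop (nhds 1) := by
      have : Filter.Tendsto (fun n : ℕ => 1 / ((n : ℝ) + 1)) Filter.atTop (nhds 0) :=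
        tendsto_one_div_add_atTop_nhds_zero_nat
      simpa using (tendsto_const_nhds (x := (1:ℝ)) (f := Filter.atTop)).sub this
    refine tendsto_of_tendsto_of_tendsto_of_le_of_le h1 tendsto_const_nhds
      (fun n => (hx2 n).le) (fun n => hTxle n)
  have hnormφ : Filter.Tendsto (fun n : ℕ => ‖T (x (φ n))‖) Filter.atTop (nhds 1) :=
    hnorm.comp hφ.tendsto_atTop
  have hynorm : ‖y‖ = 1 := by
    have : Filter.Tendsto (fun n : ℕ => ‖T (x (φ n))‖) Filter.atTop (nhds ‖y‖) :=
      (continuous_norm.tendsto y).comp hy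
    exact tendsto_nhds_unique this hnormφ
  -- the subsequence is Cauchy by uniform convexity
  have hcauchy : CauchySeq (fun n : ℕ => x (φ n)) := by
    rw [Metric.cauchySeq_iff]
    intro ε' hε'
    obtain ⟨δ, hδ, hconv⟩ := UniformConvexSpace.uniform_convex (E := X) hε'
    have hclose : ∀ᶠ n in Filter.atTop, ‖T (x (φ n)) - y‖ < δ / 2 := by
      have := hy
      rw [Metric.tendsto_atTop] at this
      obtain ⟨N, hN⟩ := this (δ / 2) (by positivity)
      exact Filter.eventually_atTop.2 ⟨N, fun n hn => by
        simpa [dist_eq_norm] using hN n hn⟩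
    obtain ⟨N, hN⟩ := Filter.eventually_atTop.1 hclose
    refine ⟨N, fun m hm n hn => ?_⟩
    rw [dist_eq_norm]
    by_contra hge
    push_neg at hge
    have hbig : ‖x (φ m) + x (φ n)‖ ≤ 2 - δ :=
      hconv (hx1 (φ m)) (hx1 (φ n)) hge
    have h1 : ‖T (x (φ m)) + T (x (φ n))‖ ≤ ‖x (φ m) + x (φ n)‖ := by
      simpa [map_add] using hTle (x (φ m) + x (φ n))
    have h2 : 2 - δ < ‖T (x (φ m)) + T (x (φ n))‖ := by
      have hm' := hN m hm
      have hn' := hN n hn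
      have : ‖(2 : ℝ) • y‖ - ‖(T (x (φ m)) - y) + (T (x (φ n)) - y)‖
          ≤ ‖T (x (φ m)) + T (x (φ n))‖ := by
        have := norm_sub_norm_le ((2 : ℝ) • y) ((y - T (x (φ m))) + (y - T (x (φ n))))
        have heq : (2 : ℝ) • y - ((y - T (x (φ m))) + (y - T (x (φ n))))
            = T (x (φ m)) + T (x (φ n)) := by
          rw [two_smul]; abel
        rw [heq] at this
        calc ‖(2 : ℝ) • y‖ - ‖(T (x (φ m)) - y) + (T (x (φ n)) - y)‖
            = ‖(2 : ℝ) • y‖ - ‖(y - T (x (φ m))) + (y - T (x (φ n)))‖ := by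
              rw [show (y - T (x (φ m))) + (y - T (x (φ n)))
                  = -((T (x (φ m)) - y) + (T (x (φ n)) - y)) by abel, norm_neg]
          _ ≤ ‖T (x (φ m)) + T (x (φ n))‖ := this
      have hsmall : ‖(T (x (φ m)) - y) + (T (x (φ n)) - y)‖ < δ := by
        calc ‖(T (x (φ m)) - y) + (T (x (φ n)) - y)‖
            ≤ ‖T (x (φ m)) - y‖ + ‖T (x (φ n)) - y‖ := norm_add_le _ _
          _ < δ / 2 + δ / 2 := add_lt_add hm' hn'
          _ = δ := by ring
      have h2y : ‖(2 : ℝ) • y‖ = 2 := by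
        rw [norm_smul, hynorm]; norm_num
      linarith
    linarith
  -- the subsequence converges to a norm-attaining point
  obtain ⟨x₁, hx₁lim⟩ := cauchySeq_tendsto_of_complete hcauchy
  have hx₁norm : ‖x₁‖ = 1 := by
    have : Filter.Tendsto (fun n : ℕ => ‖x (φ n)‖) Filter.atTop (nhds ‖x₁‖) :=
      (continuous_norm.tendsto x₁).comp hx₁lim
    have h2 : Filter.Tendsto (fun n : ℕ => ‖x (φ n)‖) Filter.atTop (nhds 1) := by
      simp only [hx1]; exact (tendsto_const_nhds : Filter.Tendsto (fun _ : ℕ => (1:ℝ))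
        Filter.atTop (nhds 1))
    exact tendsto_nhds_unique this h2
  have hTx₁ : T x₁ = y := by
    have : Filter.Tendsto (fun n : ℕ => T (x (φ n))) Filter.atTop (nhds (T x₁)) :=
      (T.continuous.tendsto x₁).comp hx₁lim
    exact tendsto_nhds_unique this hy
  have hTx₁norm : ‖T x₁‖ = 1 := by rw [hTx₁, hynorm]
  -- derive the contradiction
  have : ∀ᶠ n in Filter.atTop, ‖x (φ n) - x₁‖ < ε := by
    have := hx₁lim
    rw [Metric.tendsto_atTop] at this
    obtain ⟨N, hN⟩ := this ε hε
    exact Filter.eventually_atTop.2 ⟨N, fun n hn => by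
      simpa [dist_eq_norm] using hN n hn⟩
  obtain ⟨N, hN⟩ := Filter.eventually_atTop.1 this
  have hle := hx3 (φ N) x₁ hx₁norm hTx₁norm
  have hlt := hN N le_rfl
  rw [norm_sub_rev] at hlt
  linarith
end

section
/- Let X be a Banach space over 𝕜 (𝕜 = ℝ or ℂ). If there exists a nonzero Banach space Y over 𝕜 such that the pair (X, Y) has the uniform strong Bishop-Phelps-Bollobás property, then the pair (X, 𝕜) has the uniform strong Bishop-Phelps-Bollobás property (with the same function ε ↦ η(ε)). -/
/-- If for some nonzero Banach space `Y` the pair `(X, Y)` has the uniform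
strong Bishop-Phelps-Bollobás property with modulus `η` (for a given `ε`), then the pair
`(X, 𝕜)` satisfies it with the very same `η`. -/
theorem uniform_sBPBp_scalar_of_uniform_sBPBp
    (𝕜 : Type*) [RCLike 𝕜]
    (X : Type*) [NormedAddCommGroup X] [NormedSpace 𝕜 X] [CompleteSpace X]
    (Y : Type*) [NormedAddCommGroup Y] [NormedSpace 𝕜 Y] [CompleteSpace Y] [Nontrivial Y]
    (ε η : ℝ) (hε : 0 < ε) (hη : 0 < η)
    (h : ∀ T : X →L[𝕜] Y, ‖T‖ = 1 → ∀ x₀ : X, ‖x₀‖ = 1 → 1 - η < ‖T x₀‖ →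
      ∃ x₁ : X, ‖x₁‖ = 1 ∧ ‖T x₁‖ = 1 ∧ ‖x₁ - x₀‖ < ε) :
    ∀ f : X →L[𝕜] 𝕜, ‖f‖ = 1 → ∀ x₀ : X, ‖x₀‖ = 1 → 1 - η < ‖f x₀‖ →
      ∃ x₁ : X, ‖x₁‖ = 1 ∧ ‖f x₁‖ = 1 ∧ ‖x₁ - x₀‖ < ε := by
  intro f hf x₀ hx₀ hfx₀
  obtain ⟨y, hy⟩ := exists_ne (0 : Y)
  set u : Y := ((‖y‖ : 𝕜))⁻¹ • y with hu
  have hyn : ‖y‖ ≠ 0 := norm_ne_zero_iff.mpr hy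
  have hun : ‖u‖ = 1 := by
    rw [hu, norm_smul, norm_inv, RCLike.norm_ofReal, abs_norm, inv_mul_cancel₀ hyn]
  set T : X →L[𝕜] Y := f.smulRight u with hT
  have hTnorm : ‖T‖ = 1 := by
    rw [hT, ContinuousLinearMap.norm_smulRight_apply, hf, hun, one_mul]
  have hTapp : ∀ x : X, ‖T x‖ = ‖f x‖ := by
    intro x
    rw [hT, ContinuousLinearMap.smulRight_apply, norm_smul, hun, mul_one]
  obtain ⟨x₁, hx₁, hTx₁, hd⟩ := h T hTnorm x₀ hx₀ (by rwa [hTapp])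
  exact ⟨x₁, hx₁, by rwa [hTapp] at hTx₁, hd⟩
end

section
/- Let X be a Banach space over 𝕜 (𝕜 = ℝ or ℂ). If there exists a nonzero Banach space Y over 𝕜 such that the pair (X, Y) has the uniform strong Bishop-Phelps-Bollobás property, then X is uniformly convex. -/
/-- A pair of Banach spaces `(X, Y)` has the uniform strong Bishop-Phelps-Bollobás
property. -/
def UniformSBPBp (𝕜 : Type*) [RCLike 𝕜] (X Y : Type*) [NormedAddCommGroup X]
    [NormedSpace 𝕜 X] [NormedAddCommGroup Y] [NormedSpace 𝕜 Y] : Prop :=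
  ∀ ε : ℝ, 0 < ε → ∃ η : ℝ, 0 < η ∧ ∀ T : X →L[𝕜] Y, ‖T‖ = 1 →
    ∀ x₀ : X, ‖x₀‖ = 1 → 1 - η < ‖T x₀‖ →
      ∃ x₁ : X, ‖x₁‖ = 1 ∧ ‖T x₁‖ = 1 ∧ ‖x₁ - x₀‖ < ε

set_option maxHeartbeats 1000000 in
/-- If there exists a nonzero Banach space `Y` such that the pair `(X, Y)` has
the uniform strong Bishop-Phelps-Bollobás property, then `X` is uniformly convex. -/
theorem uniformConvex_of_uniform_sBPBp
    (𝕜 : Type*) [RCLike 𝕜]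
    (X : Type*) [NormedAddCommGroup X] [NormedSpace 𝕜 X] [CompleteSpace X]
    (Y : Type*) [NormedAddCommGroup Y] [NormedSpace 𝕜 Y] [CompleteSpace Y] [Nontrivial Y]
    (h : UniformSBPBp 𝕜 X Y) :
    UniformConvexSpace X := by
  refine ⟨fun ε hε => ?_⟩
  -- a unit vector in Y
  obtain ⟨y', hy'⟩ := exists_ne (0 : Y)
  have hy'n : (0:ℝ) < ‖y'‖ := norm_pos_iff.mpr hy'
  set y₀ : Y := ((‖y'‖⁻¹ : ℝ) : 𝕜) • y' with hy₀def
  have hy₀ : ‖y₀‖ = 1 := by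
    rw [hy₀def, norm_smul ((‖y'‖⁻¹ : ℝ) : 𝕜) y', RCLike.norm_ofReal,
      abs_of_pos (inv_pos.mpr hy'n), inv_mul_cancel₀ hy'n.ne']
  obtain ⟨η₀, hη₀pos, hP⟩ := h (ε/16) (by positivity)
  set η := min η₀ 1 with hηdef
  have hηpos : 0 < η := lt_min hη₀pos one_pos
  have hη1 : η ≤ 1 := min_le_right _ _
  have hηη₀ : η ≤ η₀ := min_le_left _ _
  set t := min (η/8) (ε^2/512) with htdef
  have htpos : 0 < t := lt_min (by positivity) (by positivity)
  have ht8 : t ≤ η/8 := min_le_left _ _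
  have htε : t ≤ ε^2/512 := min_le_right _ _
  have ht18 : t ≤ 1/8 := ht8.trans (by linarith)
  set δ := t * ε / 32 with hδdef
  refine ⟨δ, by positivity, fun x hx z hz hxz => ?_⟩
  by_contra hcon
  push_neg at hcon
  set s := ‖x + z‖ with hsdef
  have hs : 2 - δ < s := hcon
  have hs2 : s ≤ 2 := by
    calc s ≤ ‖x‖ + ‖z‖ := norm_add_le _ _
    _ = 2 := by rw [hx, hz]; norm_num
  have hε2 : ε ≤ 2 := by
    refine hxz.trans ?_
    calc ‖x - z‖ ≤ ‖x‖ + ‖z‖ := norm_sub_le _ _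
    _ = 2 := by rw [hx, hz]; norm_num
  have hδ1 : δ ≤ ε / 256 := by
    have f1 : t * ε ≤ (1/8) * ε := mul_le_mul_of_nonneg_right ht18 hε.le
    rw [hδdef]; linarith
  have hδε : δ ≤ 1/128 := by linarith
  have hδpos : 0 < δ := by positivity
  have hspos : (0:ℝ) < s := by linarith
  have hxzne : x + z ≠ 0 := norm_pos_iff.mp (hsdef ▸ hspos)
  have hxzne' : x - z ≠ 0 := norm_pos_iff.mp (lt_of_lt_of_le hε hxz)
  obtain ⟨f, hf1, hf2⟩ := exists_dual_vector 𝕜 (x + z) (norm_ne_zero_iff.mpr hxzne)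
  obtain ⟨g, hg1, hg2⟩ := exists_dual_vector 𝕜 (x - z) (norm_ne_zero_iff.mpr hxzne')
  set r := ‖x - z‖ with hrdef
  have hr : ε ≤ r := hxz
  set A := RCLike.re (g x) with hAdef
  set B := RCLike.re (g z) with hBdef
  have hAB : A - B = r := by
    have h1 : RCLike.re (g (x - z)) = r := by rw [hg2, RCLike.ofReal_re]
    rw [map_sub, map_sub] at h1
    linarith [h1]
  have hgx1 : ‖g x‖ ≤ 1 := by simpa [hg1, hx] using g.le_opNorm x
  have hgz1 : ‖g z‖ ≤ 1 := by simpa [hg1, hz] using g.le_opNorm z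
  have hA : |A| ≤ 1 := (RCLike.abs_re_le_norm _).trans hgx1
  have hB : |B| ≤ 1 := (RCLike.abs_re_le_norm _).trans hgz1
  have hA1 := abs_le.mp hA
  have hB1 := abs_le.mp hB
  -- components of f
  have hfs : RCLike.re (f x) + RCLike.re (f z) = s := by
    have h1 : RCLike.re (f (x + z)) = s := by rw [hf2, RCLike.ofReal_re]
    rw [map_add, map_add] at h1
    linarith [h1]
  have hfx1 : RCLike.re (f x) ≤ 1 :=
    (RCLike.re_le_norm _).trans (by simpa [hf1, hx] using f.le_opNorm x)
  have hfz1 : RCLike.re (f z) ≤ 1 :=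
    (RCLike.re_le_norm _).trans (by simpa [hf1, hz] using f.le_opNorm z)
  have hfx : 1 - δ < RCLike.re (f x) := by linarith
  -- the perturbed functional
  set F : X →L[𝕜] 𝕜 := f + ((t : ℝ) : 𝕜) • g with hFdef
  have hFapp : ∀ u : X, F u = f u + ((t : ℝ) : 𝕜) * g u := by
    intro u; simp [hFdef, smul_eq_mul]
  have hreF : ∀ u : X, RCLike.re (F u) = RCLike.re (f u) + t * RCLike.re (g u) := by
    intro u
    rw [hFapp, map_add, RCLike.mul_re, RCLike.ofReal_re, RCLike.ofReal_im]
    ring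
  set N := ‖F‖ with hNdef
  have hNub : N ≤ 1 + t := by
    have h1 : ‖((t : ℝ) : 𝕜) • g‖ = t := by
      rw [norm_smul ((t : ℝ) : 𝕜) g, RCLike.norm_ofReal, hg1, abs_of_pos htpos, mul_one]
    calc N ≤ ‖f‖ + ‖((t : ℝ) : 𝕜) • g‖ := norm_add_le _ _
    _ = 1 + t := by rw [hf1, h1]
  have hNlb : 1 - δ + t * A ≤ N := by
    have h1 : ‖F x‖ ≤ N := by simpa [hx] using F.le_opNorm x
    have h2 := (RCLike.re_le_norm (F x)).trans h1
    rw [hreF] at h2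
    linarith
  have htA : t * (-1) ≤ t * A := mul_le_mul_of_nonneg_left hA1.1 htpos.le
  have hNpos : (0:ℝ) < N := by linarith
  have hN0 : N ≠ 0 := hNpos.ne'
  -- the operator
  set T : X →L[𝕜] Y := ((N⁻¹ : ℝ) : 𝕜) • (F.smulRight y₀) with hTdef
  have hTnorm : ‖T‖ = 1 := by
    rw [hTdef, norm_smul ((N⁻¹ : ℝ) : 𝕜) (F.smulRight y₀), RCLike.norm_ofReal,
      ContinuousLinearMap.norm_smulRight_apply, hy₀, mul_one,
      abs_of_pos (inv_pos.mpr hNpos), ← hNdef, inv_mul_cancel₀ hN0]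
  have hTapp : ∀ u : X, ‖T u‖ = N⁻¹ * ‖F u‖ := by
    intro u
    rw [hTdef]
    simp only [ContinuousLinearMap.smul_apply, ContinuousLinearMap.smulRight_apply]
    rw [norm_smul (((N⁻¹ : ℝ) : 𝕜)) (F u • y₀), norm_smul (F u) y₀, RCLike.norm_ofReal,
      hy₀, mul_one, abs_of_pos (inv_pos.mpr hNpos)]
  -- the normalized midpoint
  set w₀ : X := ((s⁻¹ : ℝ) : 𝕜) • (x + z) with hw₀def
  have hw₀ : ‖w₀‖ = 1 := by
    rw [hw₀def, norm_smul ((s⁻¹ : ℝ) : 𝕜) (x + z), RCLike.norm_ofReal,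
      abs_of_pos (inv_pos.mpr hspos), ← hsdef, inv_mul_cancel₀ hspos.ne']
  have hfw₀ : f w₀ = 1 := by
    rw [hw₀def, map_smul, hf2, smul_eq_mul, ← hsdef, ← RCLike.ofReal_mul,
      inv_mul_cancel₀ hspos.ne', RCLike.ofReal_one]
  have hgw₀re : RCLike.re (g w₀) = s⁻¹ * RCLike.re (g (x + z)) := by
    rw [hw₀def, map_smul, smul_eq_mul, RCLike.mul_re, RCLike.ofReal_re, RCLike.ofReal_im]
    ring
  have hgw₀re' : s * RCLike.re (g w₀) = A + B := by
    rw [hgw₀re]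
    have h1 : RCLike.re (g (x + z)) = A + B := by rw [map_add, map_add]
    rw [h1, ← mul_assoc, mul_inv_cancel₀ hspos.ne', one_mul]
  -- T almost attains its norm at w₀
  have hgxz : |RCLike.re (g (x + z))| ≤ s :=
    (RCLike.abs_re_le_norm _).trans (by simpa [hg1, ← hsdef] using g.le_opNorm (x + z))
  have hFw₀lb : 1 - t ≤ ‖F w₀‖ := by
    refine le_trans ?_ (RCLike.re_le_norm _)
    rw [hreF]
    have h1 : RCLike.re (f w₀) = 1 := by rw [hfw₀]; simp
    rw [h1, hgw₀re]
    have hgg := abs_le.mp hgxz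
    have hsinv : (0:ℝ) < s⁻¹ := inv_pos.mpr hspos
    have h4 : s⁻¹ * (-s) ≤ s⁻¹ * RCLike.re (g (x + z)) := by
      apply mul_le_mul_of_nonneg_left _ hsinv.le
      linarith [hgg.1]
    have h5 : s⁻¹ * s = 1 := inv_mul_cancel₀ hspos.ne'
    have h6 : s⁻¹ * (-s) = -1 := by rw [mul_neg, h5]
    have h7 : t * (-1) ≤ t * (s⁻¹ * RCLike.re (g (x + z))) :=
      mul_le_mul_of_nonneg_left (by linarith) htpos.le
    linarith
  have hTw₀ : 1 - η₀ < ‖T w₀‖ := by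
    rw [hTapp]
    have h1 : (1 - η₀) * N < ‖F w₀‖ := by
      have h2 : (1 - η₀) * N ≤ (1 - η) * N :=
        mul_le_mul_of_nonneg_right (by linarith) hNpos.le
      have h3 : (1 - η) * N ≤ (1 - η) * (1 + t) :=
        mul_le_mul_of_nonneg_left hNub (by linarith)
      have h4 : (1 - η) * (1 + t) < 1 - t := by
        have hηt : 0 ≤ η * t := mul_nonneg hηpos.le htpos.le
        have hexp : (1 - η) * (1 + t) = 1 + t - η - η * t := by ring
        linarith
      linarith
    rw [inv_mul_eq_div, lt_div_iff₀ hNpos]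
    linarith
  -- apply the property
  obtain ⟨p, hp1, hp2, hp3⟩ := hP T hTnorm w₀ hw₀ hTw₀
  have hFp : ‖F p‖ = N := by
    have h' := hp2
    rw [hTapp] at h'
    field_simp at h'
    linarith
  -- rotate p so that F takes a real positive value
  set θ : 𝕜 := ((N⁻¹ : ℝ) : 𝕜) * (starRingEnd 𝕜) (F p) with hθdef
  have hθnorm : ‖θ‖ = 1 := by
    rw [hθdef, norm_mul, RCLike.norm_ofReal, RCLike.norm_conj, hFp,
      abs_of_pos (inv_pos.mpr hNpos), inv_mul_cancel₀ hN0]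
  set q : X := θ • p with hqdef
  have hq1 : ‖q‖ = 1 := by rw [hqdef, norm_smul θ p, hθnorm, hp1, mul_one]
  have hFq : F q = ((N : ℝ) : 𝕜) := by
    rw [hqdef, map_smul, smul_eq_mul, hθdef, mul_assoc, RCLike.conj_mul, hFp,
      ← RCLike.ofReal_pow, ← RCLike.ofReal_mul]
    congr 1
    field_simp
  have hreq : RCLike.re (f q) + t * RCLike.re (g q) = N := by
    have h' := hreF q
    rw [hFq, RCLike.ofReal_re] at h'
    linarith
  have hfq1 : ‖f q‖ ≤ 1 := by simpa [hf1, hq1] using f.le_opNorm q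
  have hgq1 : |RCLike.re (g q)| ≤ 1 :=
    (RCLike.abs_re_le_norm _).trans (by simpa [hg1, hq1] using g.le_opNorm q)
  have hgq1' := abs_le.mp hgq1
  have hrefq : RCLike.re (f q) ≤ 1 := (RCLike.re_le_norm _).trans hfq1
  have htgq : t * RCLike.re (g q) ≤ t * 1 := mul_le_mul_of_nonneg_left hgq1'.2 htpos.le
  have hrefq_lb : 1 - δ - 2*t ≤ RCLike.re (f q) := by linarith
  have hregq_lb : A - ε/32 ≤ RCLike.re (g q) := by
    have h1 : t * (A - ε/32) ≤ t * RCLike.re (g q) := by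
      have h0 : t * (A - ε/32) = t * A - δ := by rw [hδdef]; ring
      linarith
    exact le_of_mul_le_mul_left h1 htpos
  -- f q is close to 1
  have hu2 : ‖f q - 1‖^2 ≤ 2*δ + 4*t := by
    have h1 : ‖f q - 1‖^2 = ‖f q‖^2 - 2 * RCLike.re (f q) + 1 := by
      rw [RCLike.norm_sq_eq_def (z := f q - 1), RCLike.norm_sq_eq_def (z := f q),
        map_sub, map_sub]
      simp only [RCLike.one_re, RCLike.one_im]
      ring
    have h6 : ‖f q‖^2 ≤ 1 := pow_le_one₀ (norm_nonneg _) hfq1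
    linarith
  have hu : ‖f q - 1‖ ≤ ε/4 := by
    have h1 : 2*δ + 4*t ≤ ε^2/16 := by
      have f1 : t * ε ≤ ε^2/512 * ε := mul_le_mul_of_nonneg_right htε hε.le
      have f2 : ε^2 * ε ≤ ε^2 * 2 := mul_le_mul_of_nonneg_left hε2 (sq_nonneg ε)
      rw [hδdef]
      linarith [f1, f2, htε]
    have h2 : ‖f q - 1‖^2 ≤ (ε/4)^2 := by
      have : (ε/4)^2 = ε^2/16 := by ring
      linarith
    exact (pow_le_pow_iff_left₀ (norm_nonneg _) (by positivity) two_ne_zero).mp h2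
  -- f p is close to 1
  have hv : ‖f p - 1‖ < ε/16 := by
    have h1 : f p - 1 = f (p - w₀) := by rw [map_sub, hfw₀]
    rw [h1]
    calc ‖f (p - w₀)‖ ≤ ‖p - w₀‖ := by simpa [hf1] using f.le_opNorm (p - w₀)
    _ < ε/16 := hp3
  have hfp_lb : 1 - ε/16 ≤ ‖f p‖ := by
    have h1 := abs_norm_sub_norm_le (f p) 1
    rw [norm_one] at h1
    have h2 := abs_le.mp h1
    linarith
  -- θ is close to 1
  have hΘ : ‖θ - 1‖ ≤ 5*ε/14 := by
    have h1 : f q = θ * f p := by rw [hqdef, map_smul, smul_eq_mul]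
    have h2 : ‖θ - 1‖ * ‖f p‖ = ‖f q - f p‖ := by
      rw [← norm_mul, sub_mul, one_mul, ← h1]
    have h3 : ‖f q - f p‖ ≤ ‖f q - 1‖ + ‖f p - 1‖ := by
      have h5 : f q - f p = (f q - 1) - (f p - 1) := by ring
      rw [h5]
      exact norm_sub_le _ _
    have h4 : ‖θ - 1‖ * ‖f p‖ ≤ ε/4 + ε/16 := by
      rw [h2]; linarith
    have h6 : ‖θ - 1‖ * (7/8) ≤ ‖θ - 1‖ * ‖f p‖ :=
      mul_le_mul_of_nonneg_left (by linarith) (norm_nonneg _)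
    linarith
  -- re (g p) is big
  have hqp : ‖q - p‖ = ‖θ - 1‖ := by
    have h1 : q - p = (θ - 1) • p := by rw [hqdef, sub_smul, one_smul]
    rw [h1, norm_smul (θ - 1) p, hp1, mul_one]
  have hgp_lb : A - ε/32 - 5*ε/14 ≤ RCLike.re (g p) := by
    have h1 : |RCLike.re (g q) - RCLike.re (g p)| ≤ ‖θ - 1‖ := by
      have h2 : RCLike.re (g q) - RCLike.re (g p) = RCLike.re (g q - g p) := by
        rw [map_sub]
      rw [h2]
      refine (RCLike.abs_re_le_norm _).trans ?_
      rw [← map_sub]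
      calc ‖g (q - p)‖ ≤ ‖q - p‖ := by simpa [hg1] using g.le_opNorm (q - p)
      _ = ‖θ - 1‖ := hqp
    have h3 := abs_le.mp h1
    linarith
  -- but re (g w₀) is small
  have hAW : (ε - δ)/2 ≤ A - RCLike.re (g w₀) := by
    set W := RCLike.re (g w₀) with hWdef
    have h1 : s * W = 2*A - r := by rw [hgw₀re']; linarith
    have hW1 : |W| ≤ 1 :=
      (RCLike.abs_re_le_norm _).trans (by simpa [hg1, hw₀] using g.le_opNorm w₀)
    have hW1' := abs_le.mp hW1
    have h2 : (A - W) * s = A * (s - 2) + r := by linear_combination (-1 : ℝ) * h1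
    have h3 : -δ ≤ A * (s - 2) := by
      have h2s : |s - 2| ≤ δ := by rw [abs_le]; constructor <;> linarith
      have habs : |A * (s - 2)| ≤ δ := by
        rw [abs_mul]
        calc |A| * |s - 2| ≤ 1 * δ := mul_le_mul hA h2s (abs_nonneg _) zero_le_one
        _ = δ := one_mul δ
      linarith [neg_abs_le (A * (s - 2))]
    have hAW0 : 0 ≤ A - W := by
      by_contra hneg
      push_neg at hneg
      have := mul_neg_of_neg_of_pos hneg hspos
      linarith
    have h5 : (A - W) * s ≤ (A - W) * 2 := mul_le_mul_of_nonneg_left hs2 hAW0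
    linarith
  -- final contradiction
  have hfinal : RCLike.re (g (p - w₀)) < ε/16 := by
    refine lt_of_le_of_lt (RCLike.re_le_norm _) ?_
    calc ‖g (p - w₀)‖ ≤ ‖p - w₀‖ := by simpa [hg1] using g.le_opNorm (p - w₀)
    _ < ε/16 := hp3
  rw [map_sub, map_sub] at hfinal
  linarith
end

section
/- For 𝕜 = ℝ or ℂ, the pair (ℓ₂², ℓ_∞²) fails the uniform strong Bishop-Phelps-Bollobás property. Concretely, for every η with 0 < η < 1 there exists a bounded linear operator T : ℓ₂² → ℓ_∞² with ‖T‖ = 1 and a vector x₀ ∈ ℓ₂² with ‖x₀‖₂ = 1 and ‖T x₀‖_∞ > 1 - η, such that every z ∈ ℓ₂² with ‖z‖₂ = 1 and ‖T z‖_∞ = 1 satisfies ‖z - x₀‖₂ = √2. -/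
open scoped ENNReal

lemma fin2_ciSup (f : Fin 2 → ℝ) : (⨆ i, f i) = max (f 0) (f 1) := by
  apply le_antisymm
  · exact ciSup_le fun i => by fin_cases i <;> simp [le_max_left, le_max_right]
  · exact max_le (le_ciSup (Set.Finite.bddAbove (Set.finite_range f)) 0)
      (le_ciSup (Set.Finite.bddAbove (Set.finite_range f)) 1)

lemma norm2_eq (𝕜 : Type*) [RCLike 𝕜] (x : PiLp 2 (fun _ : Fin 2 => 𝕜)) :
    ‖x‖ = Real.sqrt (‖x 0‖ ^ 2 + ‖x 1‖ ^ 2) := by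
  rw [EuclideanSpace.norm_eq, Fin.sum_univ_two]

/-- The pair `(ℓ₂², ℓ_∞²)` fails the uniform strong Bishop-Phelps-Bollobás
property: for every `0 < η < 1` there are a norm-one operator `T : ℓ₂² → ℓ_∞²` and a unit
vector `x₀` with `‖T x₀‖ > 1 - η` such that every unit vector `z` at which `T` attains its
norm satisfies `‖z - x₀‖ = √2`. -/
theorem l2_linf_fails_uniform_sBPBp
    (𝕜 : Type*) [RCLike 𝕜] :
    ∀ η : ℝ, 0 < η → η < 1 →
      ∃ (T : PiLp 2 (fun _ : Fin 2 => 𝕜) →L[𝕜] PiLp ∞ (fun _ : Fin 2 => 𝕜))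
        (x₀ : PiLp 2 (fun _ : Fin 2 => 𝕜)),
        ‖T‖ = 1 ∧ ‖x₀‖ = 1 ∧ 1 - η < ‖T x₀‖ ∧
          ∀ z : PiLp 2 (fun _ : Fin 2 => 𝕜), ‖z‖ = 1 → ‖T z‖ = 1 →
            ‖z - x₀‖ = Real.sqrt 2 := by
  intro η hη hη1
  set c : ℝ := 1 - η / 2 with hcdef
  have hc0 : 0 < c := by simp only [hcdef]; linarith
  have hc1 : c < 1 := by simp only [hcdef]; linarith
  let L : PiLp 2 (fun _ : Fin 2 => 𝕜) →ₗ[𝕜] PiLp ∞ (fun _ : Fin 2 => 𝕜) :=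
    { toFun := fun x => (WithLp.equiv ∞ _).symm ![x 0, (c : 𝕜) * x 1]
      map_add' := by
        intro x y
        refine PiLp.ext fun i => ?_
        fin_cases i <;>
          simp [PiLp.add_apply, WithLp.equiv_symm_apply, mul_add]
      map_smul' := by
        intro a x
        refine PiLp.ext fun i => ?_
        fin_cases i <;>
          simp [PiLp.smul_apply, WithLp.equiv_symm_apply, smul_eq_mul] <;> ring }
  have hLnorm : ∀ x : PiLp 2 (fun _ : Fin 2 => 𝕜),
      ‖L x‖ = max ‖x 0‖ (c * ‖x 1‖) := by
    intro x
    rw [PiLp.norm_eq_ciSup]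
    rw [fin2_ciSup (fun i => ‖(L x) i‖)]
    have h0 : (L x) 0 = x 0 := rfl
    have h1 : (L x) 1 = (c : 𝕜) * x 1 := rfl
    rw [h0, h1, norm_mul, RCLike.norm_ofReal, abs_of_pos hc0]
  have hbound : ∀ x : PiLp 2 (fun _ : Fin 2 => 𝕜), ‖L x‖ ≤ ‖x‖ := by
    intro x
    rw [hLnorm, norm2_eq]
    have hs : 0 ≤ ‖x 0‖ ^ 2 + ‖x 1‖ ^ 2 := by positivity
    apply max_le
    · exact Real.le_sqrt_of_sq_le (by nlinarith [sq_nonneg ‖x 1‖])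
    · refine Real.le_sqrt_of_sq_le ?_
      nlinarith [sq_nonneg ‖x 0‖,
        mul_nonneg (mul_nonneg (sub_nonneg.2 hc1.le) (by linarith : (0:ℝ) ≤ 1 + c))
          (sq_nonneg ‖x 1‖)]
  let T : PiLp 2 (fun _ : Fin 2 => 𝕜) →L[𝕜] PiLp ∞ (fun _ : Fin 2 => 𝕜) :=
    LinearMap.toContinuousLinearMap L
  have hT : ∀ x, T x = L x := fun x => rfl
  let e : PiLp 2 (fun _ : Fin 2 => 𝕜) := (WithLp.equiv 2 _).symm ![1, 0]
  have he0 : e 0 = 1 := rfl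
  have he1 : e 1 = 0 := rfl
  have hne : ‖e‖ = 1 := by
    rw [norm2_eq, he0, he1]
    simp
  have hnT : ‖T‖ = 1 := by
    apply le_antisymm
    · exact ContinuousLinearMap.opNorm_le_bound T zero_le_one
        (fun x => by rw [one_mul, hT]; exact hbound x)
    · have h1 : ‖T e‖ ≤ ‖T‖ * ‖e‖ := T.le_opNorm e
      have h2 : ‖T e‖ = 1 := by
        rw [hT, hLnorm, he0, he1]
        simp [hc0.le]
      rw [h2, hne, mul_one] at h1
      exact h1
  let x₀ : PiLp 2 (fun _ : Fin 2 => 𝕜) := (WithLp.equiv 2 _).symm ![0, 1]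
  have hx0 : x₀ 0 = 0 := rfl
  have hx1 : x₀ 1 = 1 := rfl
  have hnx : ‖x₀‖ = 1 := by
    rw [norm2_eq, hx0, hx1]
    simp
  refine ⟨T, x₀, hnT, hnx, ?_, ?_⟩
  · rw [hT, hLnorm, hx0, hx1]
    simp only [norm_zero, norm_one, mul_one]
    rw [max_eq_right hc0.le]
    simp only [hcdef]
    linarith
  · intro z hz hTz
    rw [hT, hLnorm] at hTz
    have hsum : ‖z 0‖ ^ 2 + ‖z 1‖ ^ 2 = 1 := by
      have := hz
      rw [norm2_eq] at this
      have h := congrArg (fun t => t ^ 2) this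
      simpa [Real.sq_sqrt (by positivity : (0:ℝ) ≤ ‖z 0‖ ^ 2 + ‖z 1‖ ^ 2)] using h
    have hz1le : ‖z 1‖ ≤ 1 := by nlinarith [sq_nonneg ‖z 0‖, norm_nonneg (z 1)]
    have hlt : c * ‖z 1‖ < 1 := by nlinarith [norm_nonneg (z 1)]
    have hz0 : ‖z 0‖ = 1 := by
      rcases max_cases ‖z 0‖ (c * ‖z 1‖) with ⟨h, _⟩ | ⟨h, _⟩
      · rw [h] at hTz; exact hTz
      · rw [h] at hTz; linarith
    have hz1 : ‖z 1‖ = 0 := by nlinarith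
    rw [norm2_eq, PiLp.sub_apply, PiLp.sub_apply, hx0, hx1, sub_zero, hz0]
    have : z 1 = 0 := norm_eq_zero.mp hz1
    rw [this]
    norm_num
end

section
/- For 𝕜 = ℝ or ℂ, the pair (ℓ₂², ℓ₂²) fails the uniform strong Bishop-Phelps-Bollobás property. Concretely, for every η with 0 < η < 1 there exists a bounded linear operator T : ℓ₂² → ℓ₂² with ‖T‖ = 1 and a vector x₀ ∈ ℓ₂² with ‖x₀‖₂ = 1 and ‖T x₀‖₂ > 1 - η, such that every z ∈ ℓ₂² with ‖z‖₂ = 1 and ‖T z‖₂ = 1 satisfies ‖z - x₀‖₂ = √2. -/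
set_option linter.unnecessarySeqFocus false
set_option maxHeartbeats 1000000


/-- The pair `(ℓ₂², ℓ₂²)` fails the uniform strong Bishop-Phelps-Bollobás
property: for every `0 < η < 1` there are a norm-one operator `T : ℓ₂² → ℓ₂²` and a unit
vector `x₀` with `‖T x₀‖ > 1 - η` such that every unit vector `z` at which `T` attains its
norm satisfies `‖z - x₀‖ = √2`. -/
theorem l2_l2_fails_uniform_sBPBp
    (𝕜 : Type*) [RCLike 𝕜] :
    ∀ η : ℝ, 0 < η → η < 1 →
      ∃ (T : PiLp 2 (fun _ : Fin 2 => 𝕜) →L[𝕜] PiLp 2 (fun _ : Fin 2 => 𝕜))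
        (x₀ : PiLp 2 (fun _ : Fin 2 => 𝕜)),
        ‖T‖ = 1 ∧ ‖x₀‖ = 1 ∧ 1 - η < ‖T x₀‖ ∧
          ∀ z : PiLp 2 (fun _ : Fin 2 => 𝕜), ‖z‖ = 1 → ‖T z‖ = 1 →
            ‖z - x₀‖ = Real.sqrt 2 := by
  intro η hη hη1
  set c : ℝ := 1 - η / 2 with hc
  have hc0 : 0 < c := by simp only [hc]; linarith
  have hc1 : c < 1 := by simp only [hc]; linarith
  have hn : ∀ x : PiLp 2 (fun _ : Fin 2 => 𝕜),
      ‖x‖ = Real.sqrt (‖x 0‖ ^ 2 + ‖x 1‖ ^ 2) := by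
    intro x
    rw [EuclideanSpace.norm_eq, Fin.sum_univ_two]
  have hnc : ‖((c : ℝ) : 𝕜)‖ = c := by
    rw [RCLike.norm_ofReal, abs_of_pos hc0]
  let L : PiLp 2 (fun _ : Fin 2 => 𝕜) →ₗ[𝕜] PiLp 2 (fun _ : Fin 2 => 𝕜) :=
    { toFun := fun x => WithLp.toLp 2 ![x 0, (c : 𝕜) * x 1]
      map_add' := by
        intro x y
        ext i
        fin_cases i <;>
          simp [PiLp.add_apply, mul_add]
      map_smul' := by
        intro m x
        ext i
        fin_cases i <;>
          simp [PiLp.smul_apply, smul_eq_mul] <;> ring }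
  have hLapp : ∀ x : PiLp 2 (fun _ : Fin 2 => 𝕜),
      (LinearMap.toContinuousLinearMap L) x = WithLp.toLp 2 ![x 0, (c : 𝕜) * x 1] := fun x => rfl
  have hTnorm : ∀ x : PiLp 2 (fun _ : Fin 2 => 𝕜),
      ‖(LinearMap.toContinuousLinearMap L) x‖
        = Real.sqrt (‖x 0‖ ^ 2 + c ^ 2 * ‖x 1‖ ^ 2) := by
    intro x
    rw [hLapp, hn]
    simp only [PiLp.toLp_apply, Matrix.cons_val_zero, Matrix.cons_val_one, Matrix.head_cons]
    rw [norm_mul, hnc, mul_pow]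
  -- x₀ = (0,1)
  set x₀ : PiLp 2 (fun _ : Fin 2 => 𝕜) := WithLp.toLp 2 ![0, 1] with hx₀
  have hx₀0 : x₀ 0 = 0 := rfl
  have hx₀1 : x₀ 1 = 1 := rfl
  have hx₀norm : ‖x₀‖ = 1 := by
    rw [hn, hx₀0, hx₀1]
    simp
  -- e₀ = (1,0)
  set e₀ : PiLp 2 (fun _ : Fin 2 => 𝕜) := WithLp.toLp 2 ![1, 0] with he₀
  have he₀norm : ‖e₀‖ = 1 := by
    rw [hn]
    show Real.sqrt (‖(1:𝕜)‖ ^ 2 + ‖(0:𝕜)‖ ^ 2) = 1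
    simp
  refine ⟨LinearMap.toContinuousLinearMap L, x₀, ?_, hx₀norm, ?_, ?_⟩
  · -- operator norm = 1
    apply le_antisymm
    · apply ContinuousLinearMap.opNorm_le_bound _ zero_le_one
      intro x
      rw [hTnorm, hn, one_mul]
      apply Real.sqrt_le_sqrt
      have hcsq : c ^ 2 ≤ 1 := by nlinarith
      nlinarith [norm_nonneg (x 1), sq_nonneg (‖x 1‖), norm_nonneg (x 0)]
    · calc (1 : ℝ) = ‖(LinearMap.toContinuousLinearMap L) e₀‖ := by
            rw [hTnorm]
            show (1:ℝ) = Real.sqrt (‖(1:𝕜)‖ ^ 2 + c ^ 2 * ‖(0:𝕜)‖ ^ 2)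
            simp
        _ ≤ ‖LinearMap.toContinuousLinearMap L‖ * ‖e₀‖ :=
            (LinearMap.toContinuousLinearMap L).le_opNorm e₀
        _ = ‖LinearMap.toContinuousLinearMap L‖ := by rw [he₀norm, mul_one]
  · -- ‖T x₀‖ = c > 1 - η
    rw [hTnorm, hx₀0, hx₀1]
    have : Real.sqrt (‖(0:𝕜)‖ ^ 2 + c ^ 2 * ‖(1:𝕜)‖ ^ 2) = c := by
      simp [Real.sqrt_sq hc0.le]
    rw [this]
    simp only [hc]
    linarith
  · -- norm attainment forces z 1 = 0
    intro z hz hTz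
    have hz' : ‖z 0‖ ^ 2 + ‖z 1‖ ^ 2 = 1 := by
      have := hn z
      rw [hz] at this
      have h := Real.sqrt_eq_one.mp this.symm
      linarith [h]
    have hTz' : ‖z 0‖ ^ 2 + c ^ 2 * ‖z 1‖ ^ 2 = 1 := by
      have := hTnorm z
      rw [hTz] at this
      have h := Real.sqrt_eq_one.mp this.symm
      linarith [h]
    have hcsq : c ^ 2 < 1 := by nlinarith
    have hz1' : z 1 = 0 := by
      by_contra h
      have h1 : 0 < ‖z 1‖ := norm_pos_iff.mpr h
      nlinarith [mul_pos (sub_pos.mpr hcsq) (mul_pos h1 h1)]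
    have hz1 : ‖z 1‖ = 0 := by rw [hz1', norm_zero]
    have hz1sq : ‖z 1‖ ^ 2 = 0 := by rw [hz1]; ring
    have hz0 : ‖z 0‖ ^ 2 = 1 := by linarith
    rw [hn (z - x₀)]
    have h0 : (z - x₀) 0 = z 0 := by
      show z 0 - x₀ 0 = z 0
      rw [hx₀0, sub_zero]
    have h1 : (z - x₀) 1 = -1 := by
      show z 1 - x₀ 1 = -1
      rw [hx₀1, hz1', zero_sub]
    rw [h0, h1, hz0]
    norm_num
end

section
/- Let 𝕜 = ℝ or ℂ, let 1 < p ≤ q < ∞, and let β ∈ (0, 1). Then there exists a bounded linear operator T_β : ℓ_p² → ℓ_q² with ‖T_β‖ = 1 such that (i) ‖T_β e₁‖_q = β, where e₁ = (1, 0), and (ii) every z ∈ ℓ_p² with ‖z‖_p = 1 and ‖T_β z‖_q = 1 satisfies ‖z - e₁‖_p = 2^(1/p). -/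
open scoped ENNReal

set_option maxHeartbeats 1000000

/-- For `1 < p ≤ q < ∞` and `β ∈ (0, 1)` there is a norm-one operator
`T_β : ℓ_p² → ℓ_q²` with `‖T_β e₁‖ = β` such that every unit vector `z` at which `T_β`
attains its norm satisfies `‖z - e₁‖ = 2^(1/p)`. -/
theorem lp_lq_two_dim_operator
    (𝕜 : Type*) [RCLike 𝕜] (p q : ℝ≥0∞) [Fact (1 ≤ p)] [Fact (1 ≤ q)]
    (hp : 1 < p) (hpq : p ≤ q) (hq : q < ∞) (β : ℝ) (hβ0 : 0 < β) (hβ1 : β < 1) :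
    ∃ T : PiLp p (fun _ : Fin 2 => 𝕜) →L[𝕜] PiLp q (fun _ : Fin 2 => 𝕜),
      ‖T‖ = 1 ∧
      ‖T ((WithLp.equiv p (Fin 2 → 𝕜)).symm ![1, 0])‖ = β ∧
      ∀ z : PiLp p (fun _ : Fin 2 => 𝕜), ‖z‖ = 1 → ‖T z‖ = 1 →
        ‖z - (WithLp.equiv p (Fin 2 → 𝕜)).symm ![1, 0]‖ = (2 : ℝ) ^ (1 / p.toReal) := by
  have hpt : p ≠ ∞ := (hpq.trans_lt hq).ne
  have hqt : q ≠ ∞ := hq.ne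
  have hpr : 0 < p.toReal := ENNReal.toReal_pos (zero_lt_one.trans hp).ne' hpt
  have hqr : 0 < q.toReal := ENNReal.toReal_pos (zero_lt_one.trans_le (hp.le.trans hpq)).ne' hqt
  have hpqr : p.toReal ≤ q.toReal := (ENNReal.toReal_le_toReal hpt hqt).2 hpq
  set pr := p.toReal with hprdef
  set qr := q.toReal with hqrdef
  set L : PiLp p (fun _ : Fin 2 => 𝕜) →ₗ[𝕜] PiLp q (fun _ : Fin 2 => 𝕜) :=
    { toFun := fun z => (WithLp.equiv q (Fin 2 → 𝕜)).symm
        (fun i => (if i = 0 then (β : 𝕜) else 1) * z i)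
      map_add' := by intro x y; ext i; simp [mul_add]
      map_smul' := by intro c x; ext i; simp [PiLp.smul_apply]; ring } with hL
  set T : PiLp p (fun _ : Fin 2 => 𝕜) →L[𝕜] PiLp q (fun _ : Fin 2 => 𝕜) :=
    LinearMap.toContinuousLinearMap L with hT
  have hTapp : ∀ (z : PiLp p (fun _ : Fin 2 => 𝕜)) (i : Fin 2),
      T z i = (if i = 0 then (β : 𝕜) else 1) * z i := fun z i => rfl
  -- generic: recover the sum from the norm
  have hrec : ∀ r : ℝ, 0 < r → ∀ s : ℝ, 0 ≤ s → ∀ c : ℝ, 0 ≤ c →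
      s ^ (1 / r) = c → s = c ^ r := by
    intro r hr s hs c hc h
    have := congrArg (fun t : ℝ => t ^ r) h
    simpa [← Real.rpow_mul hs, one_div, inv_mul_cancel₀ hr.ne'] using this
  have hnormp : ∀ z : PiLp p (fun _ : Fin 2 => 𝕜),
      ‖z‖ = (‖z 0‖ ^ pr + ‖z 1‖ ^ pr) ^ (1 / pr) := by
    intro z
    rw [PiLp.norm_eq_sum hpr, Fin.sum_univ_two]
  have hnormTz : ∀ z : PiLp p (fun _ : Fin 2 => 𝕜),
      ‖T z‖ = ((β * ‖z 0‖) ^ qr + ‖z 1‖ ^ qr) ^ (1 / qr) := by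
    intro z
    rw [PiLp.norm_eq_sum hqr, Fin.sum_univ_two, hTapp, hTapp]
    simp [norm_mul, RCLike.norm_ofReal, abs_of_pos hβ0]
    rfl
  -- rpow exponent monotonicity for bases in [0,1]
  have hle : ∀ a : ℝ, 0 ≤ a → a ^ pr ≤ 1 → a ^ qr ≤ a ^ pr := by
    intro a ha hale
    have ha1 : a ≤ 1 := by
      by_contra h
      push_neg at h
      have : (1:ℝ) < a ^ pr := Real.one_lt_rpow_iff_of_pos (by linarith) |>.2 (Or.inl ⟨h, hpr⟩)
      linarith
    exact Real.rpow_le_rpow_of_exponent_ge' ha ha1 hpr.le hpqr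
  -- key: on the unit sphere, the image sum is ≤ 1
  have key : ∀ z : PiLp p (fun _ : Fin 2 => 𝕜), ‖z‖ = 1 →
      (β * ‖z 0‖) ^ qr ≤ ‖z 0‖ ^ qr ∧ ‖z 0‖ ^ qr ≤ ‖z 0‖ ^ pr ∧
      ‖z 1‖ ^ qr ≤ ‖z 1‖ ^ pr ∧ ‖z 0‖ ^ pr + ‖z 1‖ ^ pr = 1 := by
    intro z hz
    have hsum : ‖z 0‖ ^ pr + ‖z 1‖ ^ pr = 1 := by
      refine hrec pr hpr _ (by positivity) 1 zero_le_one ?_ |>.trans (Real.one_rpow pr)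
      rw [← hnormp]; exact hz
    have h0 : (0:ℝ) ≤ ‖z 1‖ ^ pr := by positivity
    have h0' : (0:ℝ) ≤ ‖z 0‖ ^ pr := by positivity
    refine ⟨?_, hle _ (norm_nonneg _) (by linarith), hle _ (norm_nonneg _) (by linarith), hsum⟩
    exact Real.rpow_le_rpow (by positivity) (by nlinarith [norm_nonneg (z 0)]) hqr.le
  have hTle : ∀ z : PiLp p (fun _ : Fin 2 => 𝕜), ‖z‖ = 1 → ‖T z‖ ≤ 1 := by
    intro z hz
    obtain ⟨h1, h2, h3, h4⟩ := key z hz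
    rw [hnormTz]
    calc ((β * ‖z 0‖) ^ qr + ‖z 1‖ ^ qr) ^ (1 / qr)
        ≤ (1:ℝ) ^ (1 / qr) := Real.rpow_le_rpow (by positivity) (by linarith) (by positivity)
      _ = 1 := Real.one_rpow _
  -- e₂ is a unit vector mapped to a unit vector
  set e2 : PiLp p (fun _ : Fin 2 => 𝕜) := (WithLp.equiv p (Fin 2 → 𝕜)).symm ![0, 1] with he2
  have he2n : ‖e2‖ = 1 := by
    rw [hnormp]
    simp [he2, Real.zero_rpow hpr.ne', Real.one_rpow, Real.one_rpow]
  have hTe2 : ‖T e2‖ = 1 := by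
    rw [hnormTz]
    simp [he2, Real.zero_rpow hqr.ne', Real.one_rpow]
  have hTnorm : ‖T‖ = 1 := by
    refine le_antisymm ?_ ?_
    · refine T.opNorm_le_bound zero_le_one ?_
      intro z
      rcases eq_or_ne z 0 with rfl | hz
      · simp
      · have hzn : ‖z‖ ≠ 0 := norm_ne_zero_iff.2 hz
        set w : PiLp p (fun _ : Fin 2 => 𝕜) := ((‖z‖ : 𝕜))⁻¹ • z with hw
        have hwn : ‖w‖ = 1 := by
          rw [hw, norm_smul, norm_inv, RCLike.norm_ofReal, abs_of_nonneg (norm_nonneg z),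
            inv_mul_cancel₀ hzn]
        have hzw : z = (‖z‖ : 𝕜) • w := by
          rw [hw, smul_smul, mul_inv_cancel₀ (by simpa using hzn), one_smul]
        calc ‖T z‖ = ‖(‖z‖ : 𝕜) • T w‖ := by rw [← map_smul, ← hzw]
          _ = ‖z‖ * ‖T w‖ := by
              rw [norm_smul, RCLike.norm_ofReal, abs_of_nonneg (norm_nonneg z)]
          _ ≤ ‖z‖ * 1 := by
              exact mul_le_mul_of_nonneg_left (hTle w hwn) (norm_nonneg z)
          _ = 1 * ‖z‖ := by ring
    · calc (1:ℝ) = ‖T e2‖ := hTe2.symm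
        _ ≤ ‖T‖ * ‖e2‖ := T.le_opNorm e2
        _ = ‖T‖ := by rw [he2n, mul_one]
  refine ⟨T, hTnorm, ?_, ?_⟩
  · rw [hnormTz]
    simp only [WithLp.equiv_symm_apply, PiLp.toLp_apply, Matrix.cons_val_zero, Matrix.cons_val_one,
      Matrix.head_cons, norm_one, norm_zero, mul_one]
    rw [Real.zero_rpow hqr.ne', add_zero, ← Real.rpow_mul hβ0.le,
      mul_one_div_cancel hqr.ne', Real.rpow_one]
  · intro z hz hTz
    obtain ⟨h1, h2, h3, h4⟩ := key z hz
    have hsumq : (β * ‖z 0‖) ^ qr + ‖z 1‖ ^ qr = 1 := by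
      refine hrec qr hqr _ (by positivity) 1 zero_le_one ?_ |>.trans (Real.one_rpow qr)
      rw [← hnormTz]; exact hTz
    -- deduce z 0 = 0
    have hz00 : z 0 = 0 := by
      by_contra h
      have ha : 0 < ‖z 0‖ := norm_pos_iff.2 h
      have : (β * ‖z 0‖) ^ qr < ‖z 0‖ ^ qr :=
        Real.rpow_lt_rpow (by positivity) (by nlinarith) hqr
      linarith
    have hb : ‖z 1‖ = 1 := by
      have hbp : ‖z 1‖ ^ pr = 1 := by
        rw [hz00] at h4
        simpa [Real.zero_rpow hpr.ne'] using h4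
      have := congrArg (fun t : ℝ => t ^ (1 / pr)) hbp
      simpa [← Real.rpow_mul (norm_nonneg (z 1)), one_div, mul_inv_cancel₀ hpr.ne'] using this
    rw [hnormp]
    have h01 : (z - (WithLp.equiv p (Fin 2 → 𝕜)).symm ![1, 0]) 0 = -1 := by
      simp [PiLp.sub_apply, hz00]
    have h11 : (z - (WithLp.equiv p (Fin 2 → 𝕜)).symm ![1, 0]) 1 = z 1 := by
      simp [PiLp.sub_apply]
    rw [h01, h11, hb, norm_neg, norm_one, Real.one_rpow]
    norm_num
end

section
/- Let 𝕜 = ℝ or ℂ and let 1 < p ≤ q < ∞. Then the pair (ℓ_p, ℓ_q) of sequence spaces fails the uniform strong Bishop-Phelps-Bollobás property. -/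
open scoped ENNReal

/-- For `1 < p ≤ q < ∞` the pair `(ℓ_p, ℓ_q)` of scalar sequence spaces fails
the uniform strong Bishop-Phelps-Bollobás property. -/
theorem lp_lq_fails_uniform_sBPBp
    (𝕜 : Type*) [RCLike 𝕜] (p q : ℝ≥0∞) [Fact (1 ≤ p)] [Fact (1 ≤ q)]
    (hp : 1 < p) (hpq : p ≤ q) (hq : q < ∞) :
    ¬ UniformSBPBp 𝕜 (lp (fun _ : ℕ => 𝕜) p) (lp (fun _ : ℕ => 𝕜) q) := by
  intro H
  have hpt : p ≠ ∞ := (lt_of_le_of_lt hpq hq).ne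
  have hqt : q ≠ ∞ := hq.ne
  have hp0 : p ≠ 0 := fun h => by simp [h] at hp
  have hq0 : q ≠ 0 := fun h => by simp [h, le_zero_iff] at hpq; exact hp0 hpq
  have hp' : 0 < p.toReal := ENNReal.toReal_pos hp0 hpt
  have hq' : 0 < q.toReal := ENNReal.toReal_pos hq0 hqt
  have hp1 : 1 ≤ p.toReal := by
    have := ENNReal.toReal_mono hpt hp.le
    simpa using this
  have hpq' : p.toReal ≤ q.toReal := ENNReal.toReal_mono hqt hpq
  -- the diagonal coefficients
  set c : ℕ → ℝ := fun n => 1 - 1 / (n + 1) with hc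
  have hc0 : ∀ n, 0 ≤ c n := by
    intro n
    have h1 : (1 : ℝ) / (n + 1) ≤ 1 := by
      rw [div_le_one (by positivity)]
      simp
    simp only [hc]
    linarith
  have hc1 : ∀ n, c n < 1 := by
    intro n
    have : (0 : ℝ) < 1 / (n + 1) := by positivity
    simp only [hc]
    linarith
  -- the diagonal sequence is in ℓ_q
  have hmem : ∀ x : lp (fun _ : ℕ => 𝕜) p,
      Memℓp (fun n => ((c n : ℝ) : 𝕜) * x n) q := by
    intro x
    refine Memℓp.of_exponent_ge (memℓp_gen ?_) hpq
    refine Summable.of_nonneg_of_le (fun n => by positivity) (fun n => ?_)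
      ((lp.memℓp x).summable hp')
    refine Real.rpow_le_rpow (norm_nonneg _) ?_ hp'.le
    rw [norm_mul]
    calc ‖((c n : ℝ) : 𝕜)‖ * ‖x n‖ = c n * ‖x n‖ := by
          rw [RCLike.norm_of_nonneg (hc0 n)]
      _ ≤ 1 * ‖x n‖ := by
          exact mul_le_mul_of_nonneg_right (hc1 n).le (norm_nonneg _)
      _ = ‖x n‖ := one_mul _
  -- the diagonal linear map
  let L : lp (fun _ : ℕ => 𝕜) p →ₗ[𝕜] lp (fun _ : ℕ => 𝕜) q :=
    { toFun := fun x => ⟨fun n => ((c n : ℝ) : 𝕜) * x n, hmem x⟩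
      map_add' := by
        intro x y
        refine lp.ext (funext fun n => ?_)
        have : (↑(x + y) : ∀ _ : ℕ, 𝕜) n = x n + y n := by
          rw [lp.coeFn_add]; rfl
        simp only [this, mul_add]
        rfl
      map_smul' := by
        intro k x
        refine lp.ext (funext fun n => ?_)
        have : (↑(k • x) : ∀ _ : ℕ, 𝕜) n = k * x n := by
          rw [lp.coeFn_smul]; rfl
        simp only [this, RingHom.id_apply]
        show ((c n : ℝ) : 𝕜) * (k * x n) = (↑(k • (⟨fun n => ((c n : ℝ) : 𝕜) * x n, hmem x⟩ :
          lp (fun _ : ℕ => 𝕜) q)) : ∀ _ : ℕ, 𝕜) n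
        rw [lp.coeFn_smul]
        show ((c n : ℝ) : 𝕜) * (k * x n) = k * (((c n : ℝ) : 𝕜) * x n)
        ring }
  have hLapply : ∀ (x : lp (fun _ : ℕ => 𝕜) p) (n : ℕ),
      (L x : ∀ _ : ℕ, 𝕜) n = ((c n : ℝ) : 𝕜) * x n := fun x n => rfl
  -- norm bound
  have hLnorm : ∀ x : lp (fun _ : ℕ => 𝕜) p, ‖L x‖ ≤ 1 * ‖x‖ := by
    intro x
    rw [one_mul]
    refine lp.norm_le_of_forall_sum_le hq' (norm_nonneg x) (fun s => ?_)
    have key : ∀ i : ℕ, ‖(L x : ∀ _ : ℕ, 𝕜) i‖ ^ q.toReal ≤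
        ‖x‖ ^ (q.toReal - p.toReal) * ‖x i‖ ^ p.toReal := by
      intro i
      rw [hLapply]
      have h1 : ‖((c i : ℝ) : 𝕜) * x i‖ ≤ ‖x i‖ := by
        rw [norm_mul, RCLike.norm_of_nonneg (hc0 i)]
        calc c i * ‖x i‖ ≤ 1 * ‖x i‖ :=
              mul_le_mul_of_nonneg_right (hc1 i).le (norm_nonneg _)
          _ = ‖x i‖ := one_mul _
      calc ‖((c i : ℝ) : 𝕜) * x i‖ ^ q.toReal ≤ ‖x i‖ ^ q.toReal :=
            Real.rpow_le_rpow (norm_nonneg _) h1 hq'.le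
        _ = ‖x i‖ ^ (q.toReal - p.toReal) * ‖x i‖ ^ p.toReal := by
            rw [← Real.rpow_add_of_nonneg (norm_nonneg _) (by linarith) hp'.le]
            ring_nf
        _ ≤ ‖x‖ ^ (q.toReal - p.toReal) * ‖x i‖ ^ p.toReal := by
            refine mul_le_mul_of_nonneg_right ?_ (by positivity)
            exact Real.rpow_le_rpow (norm_nonneg _) (lp.norm_apply_le_norm hp0 x i)
              (by linarith)
    calc ∑ i ∈ s, ‖(L x : ∀ _ : ℕ, 𝕜) i‖ ^ q.toReal
        ≤ ∑ i ∈ s, ‖x‖ ^ (q.toReal - p.toReal) * ‖x i‖ ^ p.toReal :=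
          Finset.sum_le_sum fun i _ => key i
      _ = ‖x‖ ^ (q.toReal - p.toReal) * ∑ i ∈ s, ‖x i‖ ^ p.toReal := by
          rw [Finset.mul_sum]
      _ ≤ ‖x‖ ^ (q.toReal - p.toReal) * ‖x‖ ^ p.toReal := by
          refine mul_le_mul_of_nonneg_left ?_ (by positivity)
          exact lp.sum_rpow_le_norm_rpow hp' x s
      _ = ‖x‖ ^ q.toReal := by
          rw [← Real.rpow_add_of_nonneg (norm_nonneg _) (by linarith) hp'.le]
          ring_nf
  -- the continuous linear map
  let T : lp (fun _ : ℕ => 𝕜) p →L[𝕜] lp (fun _ : ℕ => 𝕜) q :=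
    LinearMap.mkContinuous L 1 hLnorm
  have hTapply : ∀ x, T x = L x := fun x => rfl
  -- T never attains norm 1 on the sphere
  have hTlt : ∀ x : lp (fun _ : ℕ => 𝕜) p, ‖x‖ = 1 → ‖T x‖ < 1 := by
    intro x hx
    -- find a nonzero coordinate
    have hxne : x ≠ 0 := by
      intro h; rw [h, norm_zero] at hx; norm_num at hx
    obtain ⟨i, hi⟩ : ∃ i, x i ≠ 0 := by
      by_contra h
      push_neg at h
      exact hxne (lp.ext (funext fun n => h n))
    have hxi : 0 < ‖x i‖ := norm_pos_iff.mpr hi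
    have hxile : ‖x i‖ ≤ 1 := hx ▸ lp.norm_apply_le_norm hp0 x i
    -- pointwise comparison
    have hle : ∀ n : ℕ, ‖(T x : ∀ _ : ℕ, 𝕜) n‖ ^ q.toReal ≤ ‖x n‖ ^ p.toReal := by
      intro n
      rw [hTapply, hLapply]
      rcases eq_or_ne (x n) 0 with h | h
      · simp [h, Real.zero_rpow hq'.ne', Real.zero_rpow hp'.ne',
          Real.rpow_nonneg]
      · have hb : 0 < ‖x n‖ := norm_pos_iff.mpr h
        have hble : ‖x n‖ ≤ 1 := hx ▸ lp.norm_apply_le_norm hp0 x n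
        have ha : ‖((c n : ℝ) : 𝕜) * x n‖ ≤ ‖x n‖ := by
          rw [norm_mul, RCLike.norm_of_nonneg (hc0 n)]
          calc c n * ‖x n‖ ≤ 1 * ‖x n‖ :=
                mul_le_mul_of_nonneg_right (hc1 n).le (norm_nonneg _)
            _ = ‖x n‖ := one_mul _
        calc ‖((c n : ℝ) : 𝕜) * x n‖ ^ q.toReal ≤ ‖x n‖ ^ q.toReal :=
              Real.rpow_le_rpow (norm_nonneg _) ha hq'.le
          _ ≤ ‖x n‖ ^ p.toReal :=
              Real.rpow_le_rpow_of_exponent_ge hb hble hpq'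
    -- strict at i
    have hstrict : ‖(T x : ∀ _ : ℕ, 𝕜) i‖ ^ q.toReal < ‖x i‖ ^ p.toReal := by
      rw [hTapply, hLapply]
      have ha : ‖((c i : ℝ) : 𝕜) * x i‖ < ‖x i‖ := by
        rw [norm_mul, RCLike.norm_of_nonneg (hc0 i)]
        calc c i * ‖x i‖ < 1 * ‖x i‖ :=
              mul_lt_mul_of_pos_right (hc1 i) hxi
          _ = ‖x i‖ := one_mul _
      rcases eq_or_lt_of_le (norm_nonneg (((c i : ℝ) : 𝕜) * x i)) with h0 | h0
      · rw [← h0, Real.zero_rpow hq'.ne']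
        positivity
      · calc ‖((c i : ℝ) : 𝕜) * x i‖ ^ q.toReal
            ≤ ‖((c i : ℝ) : 𝕜) * x i‖ ^ p.toReal :=
              Real.rpow_le_rpow_of_exponent_ge h0 (le_trans ha.le hxile) hpq'
          _ < ‖x i‖ ^ p.toReal := Real.rpow_lt_rpow (norm_nonneg _) ha hp'
    have hsum : (∑' n, ‖(T x : ∀ _ : ℕ, 𝕜) n‖ ^ q.toReal) < ∑' n, ‖x n‖ ^ p.toReal :=
      Summable.tsum_lt_tsum_of_nonneg (fun n => Real.rpow_nonneg (norm_nonneg _) _) hle hstrict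
        ((lp.memℓp x).summable hp')
    have h1 : ‖T x‖ ^ q.toReal = ∑' n, ‖(T x : ∀ _ : ℕ, 𝕜) n‖ ^ q.toReal :=
      lp.norm_rpow_eq_tsum hq' (T x)
    have h2 : (∑' n, ‖x n‖ ^ p.toReal) = 1 := by
      rw [← lp.norm_rpow_eq_tsum hp' x, hx, Real.one_rpow]
    by_contra hcon
    push_neg at hcon
    have : (1 : ℝ) ≤ ‖T x‖ ^ q.toReal := Real.one_le_rpow hcon hq'.le
    rw [h1] at this
    rw [h2] at hsum
    linarith
  -- the unit vectors
  classical
  have hnorm_single : ∀ n : ℕ, ‖(lp.single p n (1 : 𝕜) : lp (fun _ : ℕ => 𝕜) p)‖ = 1 := by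
    intro n
    have := lp.norm_single (E := fun _ : ℕ => 𝕜) (zero_lt_one.trans hp) n (1 : 𝕜)
    simpa using this
  have hTsingle : ∀ n : ℕ, T (lp.single p n (1 : 𝕜)) =
      lp.single q n ((c n : ℝ) : 𝕜) := by
    intro n
    refine lp.ext (funext fun j => ?_)
    rw [hTapply, hLapply]
    rcases eq_or_ne j n with h | h
    · subst h
      rw [lp.single_apply_self, lp.single_apply_self, mul_one]
    · rw [lp.single_apply_ne p n _ h, lp.single_apply_ne q n _ h, mul_zero]
  have hTsinglenorm : ∀ n : ℕ, ‖T (lp.single p n (1 : 𝕜))‖ = c n := by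
    intro n
    rw [hTsingle n]
    have h := lp.norm_single (E := fun _ : ℕ => 𝕜) (zero_lt_one.trans (hp.trans_le hpq)) n ((c n : ℝ) : 𝕜)
    exact h.trans (RCLike.norm_of_nonneg (hc0 n))
  -- ‖T‖ = 1
  have hTnorm : ‖T‖ = 1 := by
    refine le_antisymm (LinearMap.mkContinuous_norm_le L zero_le_one hLnorm) ?_
    have hle : ∀ n : ℕ, c n ≤ ‖T‖ := by
      intro n
      have := T.le_opNorm (lp.single p n (1 : 𝕜))
      rwa [hTsinglenorm n, hnorm_single n, mul_one] at this
    have htend : Filter.Tendsto c Filter.atTop (nhds 1) := by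
      have h0 : Filter.Tendsto (fun n : ℕ => 1 / ((n : ℝ) + 1)) Filter.atTop (nhds 0) :=
        tendsto_one_div_add_atTop_nhds_zero_nat
      have := Filter.Tendsto.sub (tendsto_const_nhds (x := (1 : ℝ))) h0
      simpa [hc] using this
    exact le_of_tendsto' htend hle
  -- derive the contradiction
  obtain ⟨η, hη, hmain⟩ := H 1 one_pos
  obtain ⟨n, hn⟩ := exists_nat_one_div_lt (K := ℝ) hη
  have hcn : 1 - η < c n := by
    simp only [hc]
    linarith
  obtain ⟨x₁, hx₁, hTx₁, -⟩ := hmain T hTnorm (lp.single p n (1 : 𝕜)) (hnorm_single n)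
    (by rw [hTsinglenorm n]; exact hcn)
  exact absurd hTx₁ (ne_of_lt (hTlt x₁ hx₁))
end

section
/- Let ℓ₂² and ℓ₁² denote ℝ² with the euclidean norm and the sum norm, respectively, and let β ∈ (0, 1). Then there exists a bounded linear operator T_β : ℓ₂² → ℓ₁² with ‖T_β‖ = 1 such that (i) ‖T_β e₁‖₁ = β, where e₁ = (1, 0), and (ii) every z ∈ ℓ₂² with ‖z‖₂ = 1 and ‖T_β z‖₁ = 1 satisfies ‖z - e₁‖₂ = √2. -/
theorem abs_aux (a b : ℝ) : |a + b| + |a - b| = 2 * max |a| |b| := by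
  rcases le_total 0 a with ha | ha <;> rcases le_total 0 b with hb | hb <;>
    rcases le_total a b with h | h <;>
    rcases le_total (a+b) 0 with h2 | h2 <;>
    rcases le_total (a-b) 0 with h3 | h3 <;>
    simp [abs_of_nonneg, abs_of_nonpos, *, max_def] <;> (try split_ifs) <;> linarith

noncomputable def Tlin (β : ℝ) : PiLp 2 (fun _ : Fin 2 => ℝ) →ₗ[ℝ] PiLp 1 (fun _ : Fin 2 => ℝ) where
  toFun z := (WithLp.equiv 1 (Fin 2 → ℝ)).symm ![(z 1 + β * z 0)/2, (z 1 - β * z 0)/2]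
  map_add' x y := by
    ext i
    fin_cases i <;>
      simp [WithLp.equiv_symm_apply, PiLp.toLp_apply, PiLp.add_apply] <;> ring
  map_smul' c x := by
    ext i
    fin_cases i <;>
      simp [WithLp.equiv_symm_apply, PiLp.toLp_apply, PiLp.smul_apply, smul_eq_mul] <;> ring

theorem Tnorm (β : ℝ) (hβ : 0 ≤ β) (z : PiLp 2 (fun _ : Fin 2 => ℝ)) :
    ‖(Tlin β).toContinuousLinearMap z‖ = max |z 1| (β * |z 0|) := by
  have h0 : ((Tlin β).toContinuousLinearMap z : PiLp 1 (fun _ : Fin 2 => ℝ)) =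
      (WithLp.equiv 1 (Fin 2 → ℝ)).symm ![(z 1 + β * z 0)/2, (z 1 - β * z 0)/2] := rfl
  rw [h0, PiLp.norm_eq_sum (p := 1) (by norm_num)]
  simp only [Fin.sum_univ_two, WithLp.equiv_symm_apply, PiLp.toLp_apply, Real.norm_eq_abs,
    ENNReal.toReal_one, Real.rpow_one, pow_one, one_div_one, Matrix.cons_val_zero,
    Matrix.cons_val_one, Matrix.head_cons]
  have h := abs_aux (z 1) (β * z 0)
  rw [abs_mul, abs_of_nonneg hβ] at h
  rw [abs_div, abs_div, abs_two]
  linarith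

theorem l2norm (z : PiLp 2 (fun _ : Fin 2 => ℝ)) :
    ‖z‖ = Real.sqrt ((z 0)^2 + (z 1)^2) := by
  rw [EuclideanSpace.norm_eq]
  simp [Fin.sum_univ_two, sq_abs]

theorem coord_le (z : PiLp 2 (fun _ : Fin 2 => ℝ)) (i : Fin 2) : |z i| ≤ ‖z‖ := by
  rw [l2norm, ← Real.sqrt_sq_eq_abs]
  apply Real.sqrt_le_sqrt
  fin_cases i <;> simp <;> nlinarith [sq_nonneg (z 0), sq_nonneg (z 1)]


/-- For `β ∈ (0, 1)` there is a norm-one operator `T_β : ℓ₂²(ℝ) → ℓ₁²(ℝ)`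
with `‖T_β e₁‖ = β` such that every unit vector `z` at which `T_β` attains its norm
satisfies `‖z - e₁‖ = √2`. -/
theorem l2_l1_two_dim_operator
    (β : ℝ) (hβ0 : 0 < β) (hβ1 : β < 1) :
    ∃ T : PiLp 2 (fun _ : Fin 2 => ℝ) →L[ℝ] PiLp 1 (fun _ : Fin 2 => ℝ),
      ‖T‖ = 1 ∧
      ‖T ((WithLp.equiv 2 (Fin 2 → ℝ)).symm ![1, 0])‖ = β ∧
      ∀ z : PiLp 2 (fun _ : Fin 2 => ℝ), ‖z‖ = 1 → ‖T z‖ = 1 →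
        ‖z - (WithLp.equiv 2 (Fin 2 → ℝ)).symm ![1, 0]‖ = Real.sqrt 2 := by
  have hβ : 0 ≤ β := hβ0.le
  refine ⟨(Tlin β).toContinuousLinearMap, ?_, ?_, ?_⟩
  · apply le_antisymm
    · apply ContinuousLinearMap.opNorm_le_bound _ zero_le_one
      intro z
      rw [Tnorm β hβ z, one_mul, max_le_iff]
      refine ⟨coord_le z 1, ?_⟩
      calc β * |z 0| ≤ 1 * |z 0| := by
            apply mul_le_mul_of_nonneg_right hβ1.le (abs_nonneg _)
        _ ≤ ‖z‖ := by rw [one_mul]; exact coord_le z 0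
    · set u : PiLp 2 (fun _ : Fin 2 => ℝ) := (WithLp.equiv 2 (Fin 2 → ℝ)).symm ![0, 1]
      have hu0 : u 0 = 0 := rfl
      have hu1 : u 1 = 1 := rfl
      have hnu : ‖u‖ = 1 := by
        rw [l2norm, hu0, hu1]; norm_num
      have hTu : ‖(Tlin β).toContinuousLinearMap u‖ = 1 := by
        rw [Tnorm β hβ u, hu0, hu1]
        simp [abs_of_nonneg, hβ]
      calc (1:ℝ) = ‖(Tlin β).toContinuousLinearMap u‖ := hTu.symm
        _ ≤ ‖(Tlin β).toContinuousLinearMap‖ * ‖u‖ := ContinuousLinearMap.le_opNorm _ _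
        _ = ‖(Tlin β).toContinuousLinearMap‖ := by rw [hnu, mul_one]
  · set e : PiLp 2 (fun _ : Fin 2 => ℝ) := (WithLp.equiv 2 (Fin 2 → ℝ)).symm ![1, 0]
    have he0 : e 0 = 1 := rfl
    have he1 : e 1 = 0 := rfl
    rw [Tnorm β hβ e, he0, he1]
    simp [abs_of_nonneg, hβ]
  · intro z hz hTz
    set e : PiLp 2 (fun _ : Fin 2 => ℝ) := (WithLp.equiv 2 (Fin 2 → ℝ)).symm ![1, 0]
    have he0 : e 0 = 1 := rfl
    have he1 : e 1 = 0 := rfl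
    rw [Tnorm β hβ z] at hTz
    have hsum : (z 0)^2 + (z 1)^2 = 1 := by
      have := hz
      rw [l2norm] at this
      nlinarith [Real.sq_sqrt (by positivity : (0:ℝ) ≤ (z 0)^2 + (z 1)^2), sq_nonneg (z 0), sq_nonneg (z 1)]
    have hz0le : |z 0| ≤ 1 := by
      rw [← Real.sqrt_one, ← Real.sqrt_sq_eq_abs]
      apply Real.sqrt_le_sqrt
      nlinarith [sq_nonneg (z 1)]
    have hlt : β * |z 0| < 1 := lt_of_le_of_lt
      (by nlinarith : β * |z 0| ≤ β) hβ1
    have hz1 : |z 1| = 1 := by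
      rcases max_cases (|z 1|) (β * |z 0|) with ⟨h1, _⟩ | ⟨h1, _⟩
      · rw [h1] at hTz; exact hTz
      · rw [h1] at hTz; linarith
    have hz0 : z 0 = 0 := by
      have : (z 1)^2 = 1 := by rw [← sq_abs, hz1]; norm_num
      nlinarith [sq_nonneg (z 0)]
    have hs0 : (z - e) 0 = -1 := by
      simp [PiLp.sub_apply, hz0, he0]
    have hs1 : (z - e) 1 = z 1 := by
      simp [PiLp.sub_apply, he1]
    rw [l2norm, hs0, hs1]
    have : (z 1)^2 = 1 := by rw [← sq_abs, hz1]; norm_num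
    rw [this]
    norm_num
end

section
/- Let ℓ₂² and ℓ_q² denote ℝ² with the euclidean norm and the q-norm, respectively, where 1 ≤ q < 2, and let β ∈ (0, 1). Then there exists a bounded linear operator T_β : ℓ₂² → ℓ_q² with ‖T_β‖ = 1 such that (i) ‖T_β e₁‖_q = β, where e₁ = (1, 0), and (ii) every z ∈ ℓ₂² with ‖z‖₂ = 1 and ‖T_β z‖_q = 1 satisfies ‖z - e₁‖₂ = √2. -/
open scoped ENNReal NNReal

lemma key_nn {p : ℝ} (hp1 : 1 ≤ p) (hp2 : p ≤ 2) (a b : ℝ≥0) :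
    a ^ p + b ^ p ≤ 2 ^ (1 - p/2) * (a ^ (2:ℝ) + b ^ (2:ℝ)) ^ (p/2) := by
  have hp0 : (0:ℝ) < p := lt_of_lt_of_le one_pos hp1
  have hP : (1:ℝ) ≤ 2/p := (le_div_iff₀ hp0).mpr (by linarith)
  have h := NNReal.rpow_add_le_mul_rpow_add_rpow (a ^ p) (b ^ p) hP
  have h2 := NNReal.rpow_le_rpow h (by positivity : (0:ℝ) ≤ p/2)
  have e1 : (2/p) * (p/2) = 1 := by field_simp
  have e2 : p * (2/p) = 2 := by field_simp
  have e3 : (2/p - 1) * (p/2) = 1 - p/2 := by field_simp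
  rw [NNReal.mul_rpow, ← NNReal.rpow_mul, ← NNReal.rpow_mul, ← NNReal.rpow_mul,
    ← NNReal.rpow_mul, e1, e2, e3, NNReal.rpow_one] at h2
  exact h2

lemma key_real {p : ℝ} (hp1 : 1 ≤ p) (hp2 : p ≤ 2) (s u : ℝ) :
    |s + u| ^ p + |s - u| ^ p ≤ 2 * (s ^ 2 + u ^ 2) ^ (p / 2) := by
  have h := key_nn hp1 hp2 ‖s + u‖₊ ‖s - u‖₊
  have h' : ((‖s + u‖₊ ^ p + ‖s - u‖₊ ^ p : ℝ≥0) : ℝ)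
      ≤ ((2 ^ (1 - p/2) * (‖s + u‖₊ ^ (2:ℝ) + ‖s - u‖₊ ^ (2:ℝ)) ^ (p/2) : ℝ≥0) : ℝ) := by
    exact_mod_cast h
  push_cast [NNReal.coe_rpow, coe_nnnorm, Real.norm_eq_abs] at h'
  have habs : |s + u| ^ (2:ℝ) + |s - u| ^ (2:ℝ) = 2 * (s ^ 2 + u ^ 2) := by
    rw [Real.rpow_two, Real.rpow_two, sq_abs, sq_abs]; ring
  rw [habs] at h'
  have hs : (0:ℝ) ≤ s ^ 2 + u ^ 2 := by positivity
  calc |s + u| ^ p + |s - u| ^ p ≤ 2 ^ (1 - p/2) * (2 * (s ^ 2 + u ^ 2)) ^ (p/2) := h'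
    _ = 2 * (s ^ 2 + u ^ 2) ^ (p/2) := by
        rw [Real.mul_rpow (by norm_num) hs, ← mul_assoc, ← Real.rpow_add (by norm_num : (0:ℝ) < 2)]
        norm_num

lemma lq_norm_pair (q : ℝ≥0∞) [Fact (1 ≤ q)] (hq : q ≠ ⊤) (a b : ℝ) :
    ‖(WithLp.equiv q (Fin 2 → ℝ)).symm ![a, b]‖
      = (|a| ^ q.toReal + |b| ^ q.toReal) ^ (1 / q.toReal) := by
  have hq0 : q ≠ 0 := by
    intro h; exact absurd (h ▸ Fact.out : (1:ℝ≥0∞) ≤ 0) (by simp)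
  rw [PiLp.norm_eq_sum (ENNReal.toReal_pos hq0 hq)]
  simp [Fin.sum_univ_two, PiLp.toLp_apply, Real.norm_eq_abs]

lemma l2_norm_pair (z : PiLp 2 (fun _ : Fin 2 => ℝ)) :
    ‖z‖ = Real.sqrt ((z 0) ^ 2 + (z 1) ^ 2) := by
  rw [EuclideanSpace.norm_eq]
  simp [Fin.sum_univ_two, Real.norm_eq_abs, sq_abs]

noncomputable def Tmap (q : ℝ≥0∞) [Fact (1 ≤ q)] (t β : ℝ) :
    PiLp 2 (fun _ : Fin 2 => ℝ) →L[ℝ] PiLp q (fun _ : Fin 2 => ℝ) :=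
  LinearMap.toContinuousLinearMap
  { toFun := fun z => (WithLp.equiv q (Fin 2 → ℝ)).symm ![t * (β * z 0 + z 1), t * (z 1 - β * z 0)]
    map_add' := by
      intro x y; ext i
      fin_cases i <;>
        simp [PiLp.toLp_apply, PiLp.add_apply] <;> ring
    map_smul' := by
      intro c x; ext i
      fin_cases i <;>
        simp [PiLp.toLp_apply, PiLp.smul_apply, smul_eq_mul] <;> ring }

set_option maxHeartbeats 1000000 in
theorem l2_lq_two_dim_operator
    (q : ℝ≥0∞) [Fact (1 ≤ q)] (hq1 : 1 ≤ q) (hq2 : q < 2)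
    (β : ℝ) (hβ0 : 0 < β) (hβ1 : β < 1) :
    ∃ T : PiLp 2 (fun _ : Fin 2 => ℝ) →L[ℝ] PiLp q (fun _ : Fin 2 => ℝ),
      ‖T‖ = 1 ∧
      ‖T ((WithLp.equiv 2 (Fin 2 → ℝ)).symm ![1, 0])‖ = β ∧
      ∀ z : PiLp 2 (fun _ : Fin 2 => ℝ), ‖z‖ = 1 → ‖T z‖ = 1 →
        ‖z - (WithLp.equiv 2 (Fin 2 → ℝ)).symm ![1, 0]‖ = Real.sqrt 2 := by
  have hqt : q ≠ ⊤ := ne_top_of_lt hq2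
  set p : ℝ := q.toReal with hpdef
  have hp1 : 1 ≤ p := by
    rw [← ENNReal.toReal_one]; exact ENNReal.toReal_mono hqt hq1
  have hp2 : p ≤ 2 := by
    have := ENNReal.toReal_mono (by norm_num : (2:ℝ≥0∞) ≠ ⊤) hq2.le
    simpa using this
  have hp0 : 0 < p := lt_of_lt_of_le one_pos hp1
  set t : ℝ := (2:ℝ) ^ (-(1/p)) with htdef
  have ht : 0 < t := Real.rpow_pos_of_pos two_pos _
  have hid1 : (2:ℝ) ^ (1/p) * t = 1 := by
    rw [htdef, ← Real.rpow_add two_pos]; simp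
  have htp : t ^ p = 1/2 := by
    rw [htdef, ← Real.rpow_mul (by norm_num : (0:ℝ) ≤ 2)]
    rw [show -(1/p) * p = -1 by field_simp]
    simp [Real.rpow_neg_one]
  -- coordinates of e₁
  have he1c0 : ((WithLp.equiv 2 (Fin 2 → ℝ)).symm ![(1:ℝ), 0]) 0 = 1 := rfl
  have he1c1 : ((WithLp.equiv 2 (Fin 2 → ℝ)).symm ![(1:ℝ), 0]) 1 = 0 := rfl
  -- norm formula for T z
  have hTz : ∀ z : PiLp 2 (fun _ : Fin 2 => ℝ),
      ‖Tmap q t β z‖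
        = (|t * (β * z 0 + z 1)| ^ p + |t * (z 1 - β * z 0)| ^ p) ^ (1/p) := by
    intro z
    exact lq_norm_pair q hqt _ _
  -- key upper bound
  have hbound : ∀ z : PiLp 2 (fun _ : Fin 2 => ℝ),
      ‖Tmap q t β z‖ ≤ Real.sqrt ((z 1) ^ 2 + (β * z 0) ^ 2) := by
    intro z
    rw [hTz z]
    set s : ℝ := z 1
    set u : ℝ := β * z 0
    have h1 : |t * (β * z 0 + z 1)| ^ p = t ^ p * |s + u| ^ p := by
      rw [abs_mul, Real.mul_rpow (abs_nonneg _) (abs_nonneg _), abs_of_pos ht]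
      show t ^ p * |β * z 0 + z 1| ^ p = t ^ p * |z 1 + β * z 0| ^ p; ring
    have h2 : |t * (z 1 - β * z 0)| ^ p = t ^ p * |s - u| ^ p := by
      rw [abs_mul, Real.mul_rpow (abs_nonneg _) (abs_nonneg _), abs_of_pos ht]
    rw [h1, h2, ← mul_add, htp]
    have hk := key_real hp1 hp2 s u
    have hS : (0:ℝ) ≤ s ^ 2 + u ^ 2 := by positivity
    have : (1/2 : ℝ) * (|s + u| ^ p + |s - u| ^ p) ≤ (s ^ 2 + u ^ 2) ^ (p/2) := by
      linarith
    calc ((1/2 : ℝ) * (|s + u| ^ p + |s - u| ^ p)) ^ (1/p)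
        ≤ ((s ^ 2 + u ^ 2) ^ (p/2)) ^ (1/p) := by
          apply Real.rpow_le_rpow (by positivity) this (by positivity)
      _ = (s ^ 2 + u ^ 2) ^ ((p/2) * (1/p)) := by
          rw [← Real.rpow_mul hS]
      _ = Real.sqrt (s ^ 2 + u ^ 2) := by
          rw [show (p/2) * (1/p) = 1/2 by (field_simp), Real.sqrt_eq_rpow]
  -- operator norm at most 1
  have hle : ‖Tmap q t β‖ ≤ 1 := by
    apply ContinuousLinearMap.opNorm_le_bound _ zero_le_one
    intro z
    rw [one_mul, l2_norm_pair z]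
    refine (hbound z).trans (Real.sqrt_le_sqrt ?_)
    have hβsq : β ^ 2 ≤ 1 := by nlinarith
    have e : (β * z 0) ^ 2 = β ^ 2 * (z 0) ^ 2 := by ring
    nlinarith [sq_nonneg (z 0)]
  -- value at e₂
  set e₂ : PiLp 2 (fun _ : Fin 2 => ℝ) := (WithLp.equiv 2 (Fin 2 → ℝ)).symm ![0, 1] with he2def
  have he2c0 : e₂ 0 = 0 := rfl
  have he2c1 : e₂ 1 = 1 := rfl
  have he2norm : ‖e₂‖ = 1 := by
    rw [l2_norm_pair, he2c0, he2c1]; norm_num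
  have hTe2 : ‖Tmap q t β e₂‖ = 1 := by
    rw [hTz, he2c0, he2c1]
    rw [show t * (β * 0 + 1) = t by ring, show t * (1 - β * 0) = t by ring,
      abs_of_pos ht, ← two_mul]
    rw [show (2:ℝ) * t ^ p = 1 by rw [htp]; norm_num]
    simp
  have hnorm : ‖Tmap q t β‖ = 1 := by
    refine le_antisymm hle ?_
    have h := (Tmap q t β).le_opNorm e₂
    rw [hTe2, he2norm, mul_one] at h
    exact h
  refine ⟨Tmap q t β, hnorm, ?_, ?_⟩
  · -- value at e₁
    rw [hTz, he1c0, he1c1]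
    rw [show t * (β * 1 + 0) = t * β by ring, show t * (0 - β * 1) = -(t * β) by ring,
      abs_neg, abs_mul, abs_of_pos ht, abs_of_pos hβ0, ← two_mul]
    rw [Real.mul_rpow ht.le hβ0.le, ← mul_assoc]
    rw [show (2:ℝ) * t ^ p = 1 by rw [htp]; norm_num, one_mul]
    rw [one_div, Real.rpow_rpow_inv hβ0.le hp0.ne']
  · -- equality case
    intro z hz hz1
    have h1 : (z 0) ^ 2 + (z 1) ^ 2 = 1 := by
      have := hz
      rw [l2_norm_pair] at this
      nlinarith [Real.sq_sqrt (show (0:ℝ) ≤ (z 0) ^ 2 + (z 1) ^ 2 by positivity)]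
    have h2 : 1 ≤ (z 1) ^ 2 + (β * z 0) ^ 2 := by
      have hb := hbound z
      rw [hz1] at hb
      nlinarith [Real.sq_sqrt (show (0:ℝ) ≤ (z 1) ^ 2 + (β * z 0) ^ 2 by positivity),
        Real.sqrt_nonneg ((z 1) ^ 2 + (β * z 0) ^ 2)]
    have e : (β * z 0) ^ 2 = β ^ 2 * (z 0) ^ 2 := by ring
    rw [e] at h2
    have hβsq : β ^ 2 < 1 := by nlinarith
    have hle0 : (z 0) ^ 2 ≤ 0 := by nlinarith [sq_nonneg (z 0)]
    have hz0sq : (z 0) ^ 2 = 0 := le_antisymm hle0 (sq_nonneg _)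
    have hz0 : z 0 = 0 := pow_eq_zero_iff (by norm_num) |>.mp hz0sq
    have hz1sq : (z 1) ^ 2 = 1 := by rw [hz0] at h1; linarith
    rw [l2_norm_pair, PiLp.sub_apply, PiLp.sub_apply, he1c0, he1c1, hz0]
    rw [show (0 - 1 : ℝ) ^ 2 + (z 1 - 0) ^ 2 = 1 + (z 1) ^ 2 by ring, hz1sq]
    norm_num
end

section
/- For every q with 1 ≤ q ≤ ∞, the pair (ℓ₂²(ℝ), ℓ_q²(ℝ)) fails the uniform strong Bishop-Phelps-Bollobás property. -/
open scoped ENNReal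
open scoped NNReal

noncomputable section

namespace SBPBAux

def myVec (p : ℝ≥0∞) (a b : ℝ) : PiLp p (fun _ : Fin 2 => ℝ) :=
  (WithLp.equiv p _).symm ![a, b]

@[simp] lemma myVec_zero (p : ℝ≥0∞) (a b : ℝ) : myVec p a b 0 = a := rfl
@[simp] lemma myVec_one (p : ℝ≥0∞) (a b : ℝ) : myVec p a b 1 = b := rfl

lemma norm2_eq (z : PiLp 2 (fun _ : Fin 2 => ℝ)) :
    ‖z‖ = Real.sqrt ((z 0)^2 + (z 1)^2) := by
  rw [PiLp.norm_eq_of_L2]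
  simp [Fin.sum_univ_two, Real.norm_eq_abs, sq_abs]

lemma coord_le_norm2 (z : PiLp 2 (fun _ : Fin 2 => ℝ)) (i : Fin 2) : |z i| ≤ ‖z‖ := by
  rw [norm2_eq, ← Real.sqrt_sq_eq_abs]
  apply Real.sqrt_le_sqrt
  fin_cases i
  · exact le_add_of_nonneg_right (sq_nonneg _)
  · exact le_add_of_nonneg_left (sq_nonneg _)

lemma normq_eq {q : ℝ≥0∞} [Fact (1 ≤ q)] (hq' : q ≠ ∞) (w : PiLp q (fun _ : Fin 2 => ℝ)) :
    ‖w‖ = (|w 0| ^ q.toReal + |w 1| ^ q.toReal) ^ (1 / q.toReal) := by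
  have h1 : (1:ℝ≥0∞) ≤ q := Fact.out
  have h0 : 0 < q.toReal := ENNReal.toReal_pos (by intro h; simp [h] at h1) hq'
  rw [PiLp.norm_eq_sum h0]
  simp [Fin.sum_univ_two, Real.norm_eq_abs]

lemma normq_single0 (q : ℝ≥0∞) [Fact (1 ≤ q)] (a : ℝ) : ‖myVec q a 0‖ = |a| := by
  have h : myVec q a 0 = (WithLp.equiv q _).symm (Pi.single 0 a) := by
    unfold myVec
    congr 1
    funext i
    fin_cases i <;> simp
  rw [h, WithLp.equiv_symm_apply, PiLp.norm_toLp_single, Real.norm_eq_abs]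

lemma normq_single1 (q : ℝ≥0∞) [Fact (1 ≤ q)] (b : ℝ) : ‖myVec q 0 b‖ = |b| := by
  have h : myVec q 0 b = (WithLp.equiv q _).symm (Pi.single 1 b) := by
    unfold myVec
    congr 1
    funext i
    fin_cases i <;> simp
  rw [h, WithLp.equiv_symm_apply, PiLp.norm_toLp_single, Real.norm_eq_abs]

lemma normq_diag {q : ℝ≥0∞} [Fact (1 ≤ q)] (hq' : q ≠ ∞) (a : ℝ) :
    ‖myVec q a a‖ = 2 ^ (1/q.toReal) * |a| := by
  have h1 : (1:ℝ≥0∞) ≤ q := Fact.out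
  have h0 : 0 < q.toReal := ENNReal.toReal_pos (by intro h; simp [h] at h1) hq'
  rw [normq_eq hq']
  simp only [myVec_zero, myVec_one]
  rw [← two_mul, Real.mul_rpow (by norm_num) (Real.rpow_nonneg (abs_nonneg a) _),
    one_div, Real.rpow_rpow_inv (abs_nonneg a) (ne_of_gt h0)]


lemma aux2 {s x y : ℝ} (hs : 0 ≤ s) :
    x^2 + (s*x + y)^2 ≤ (1+s)^2 * (x^2 + y^2) := by
  nlinarith [mul_nonneg hs (sq_nonneg (x - y)), mul_nonneg hs (sq_nonneg x),
    mul_nonneg hs (sq_nonneg y), mul_nonneg (mul_nonneg hs hs) (sq_nonneg y),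
    mul_nonneg (mul_nonneg hs hs) (sq_nonneg x)]

lemma aux3 {s : ℝ} (hs0 : 0 < s) (hs4 : s ≤ 1/4) :
    (1+s/8)^2 * (1 + (1-s)^2) ≤ 2 := by
  nlinarith [mul_nonneg hs0.le hs0.le,
    mul_le_mul_of_nonneg_left hs4 hs0.le,
    mul_le_mul_of_nonneg_left hs4 (mul_nonneg hs0.le hs0.le),
    mul_le_mul_of_nonneg_left hs4 (mul_nonneg (mul_nonneg hs0.le hs0.le) hs0.le)]

lemma aux4 {η s : ℝ} (hη : 0 < η) (hs0 : 0 < s) (hsη : s ≤ η/3) :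
    (1-η) * (1+s) < 1-s := by
  nlinarith [mul_le_mul_of_nonneg_right hsη (by linarith : (0:ℝ) ≤ 1+s),
    mul_nonneg hs0.le hs0.le, mul_pos hη hs0]

lemma aux5 {a b : ℝ} (ha1 : 0.6 ≤ a) (hb2 : b ≤ -(0.6:ℝ)) :
    a * b ≤ -(0.36:ℝ) := by
  nlinarith

lemma aux6 {a b s : ℝ} (hab : a^2 + b^2 = 1) (hprod : a * b ≤ -(0.36:ℝ))
    (hs0 : 0 < s) (hs4 : s ≤ 1/4) (ha : a ≤ 0.81) (ha0 : 0.6 ≤ a) :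
    a^2 + (s*a + b)^2 ≤ 1 := by
  nlinarith [mul_le_mul_of_nonneg_left hprod hs0.le, sq_nonneg a,
    mul_le_mul_of_nonneg_left hs4 hs0.le, sq_nonneg (s*a)]

lemma ineqA {p : ℝ} (hp : 2 ≤ p) {x y : ℝ} (hx : 0 ≤ x) (hy : 0 ≤ y) :
    (x ^ p + y ^ p) ^ (1/p) ≤ Real.sqrt (x^2 + y^2) := by
  lift x to ℝ≥0 using hx
  lift y to ℝ≥0 using hy
  have h := NNReal.rpow_add_rpow_le x y (by norm_num : (0:ℝ) < 2) hp
  have hc : ((x ^ p + y ^ p) ^ (1/p) : ℝ≥0) ≤ ((x ^ (2:ℝ) + y ^ (2:ℝ)) ^ (1/(2:ℝ)) : ℝ≥0) := h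
  have := NNReal.coe_le_coe.2 hc
  push_cast at this
  calc ((x:ℝ) ^ p + (y:ℝ) ^ p) ^ (1/p) ≤ (((x:ℝ)) ^ (2:ℝ) + ((y:ℝ)) ^ (2:ℝ)) ^ (1/(2:ℝ)) := this
    _ = Real.sqrt ((x:ℝ)^2 + (y:ℝ)^2) := by
        rw [Real.sqrt_eq_rpow]
        norm_num [Real.rpow_natCast]

lemma ineqB {p : ℝ} (hp1 : 1 ≤ p) (hp2 : p ≤ 2) {x y : ℝ} (hx : 0 ≤ x) (hy : 0 ≤ y) :
    (x ^ p + y ^ p) ^ (1/p) ≤ 2 ^ (1/p - 1/2) * Real.sqrt (x^2 + y^2) := by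
  have hp0 : 0 < p := lt_of_lt_of_le one_pos hp1
  lift x to ℝ≥0 using hx
  lift y to ℝ≥0 using hy
  have hr : 1 ≤ 2/p := (one_le_div hp0).2 hp2
  have h := NNReal.rpow_add_le_mul_rpow_add_rpow (x ^ p) (y ^ p) hr
  have hxx : (x ^ p) ^ (2/p : ℝ) = x ^ (2:ℝ) := by
    rw [← NNReal.rpow_mul]; congr 1; field_simp
  have hyy : (y ^ p) ^ (2/p : ℝ) = y ^ (2:ℝ) := by
    rw [← NNReal.rpow_mul]; congr 1; field_simp
  rw [hxx, hyy] at h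
  have h2 := NNReal.rpow_le_rpow h (by norm_num : (0:ℝ) ≤ 1/2)
  rw [← NNReal.rpow_mul, NNReal.mul_rpow, ← NNReal.rpow_mul] at h2
  have e1 : (2/p) * (1/2) = 1/p := by field_simp
  have e2 : (2/p - 1) * (1/2) = 1/p - 1/2 := by ring
  rw [e1, e2] at h2
  have := NNReal.coe_le_coe.2 h2
  push_cast at this
  calc ((x:ℝ) ^ p + (y:ℝ) ^ p) ^ (1/p) ≤ (2:ℝ) ^ (1/p - 1/2) * (((x:ℝ)) ^ (2:ℝ) + ((y:ℝ)) ^ (2:ℝ)) ^ (1/(2:ℝ)) := this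
    _ = 2 ^ (1/p - 1/2) * Real.sqrt ((x:ℝ)^2 + (y:ℝ)^2) := by
        rw [Real.sqrt_eq_rpow]
        norm_num [Real.rpow_natCast]

lemma normA {q : ℝ≥0∞} [Fact (1 ≤ q)] (h2q : 2 ≤ q) (w : PiLp q (fun _ : Fin 2 => ℝ)) :
    ‖w‖ ≤ Real.sqrt ((w 0)^2 + (w 1)^2) := by
  by_cases hq' : q = ∞
  · subst hq'
    rw [PiLp.norm_eq_ciSup]
    apply ciSup_le
    intro i
    fin_cases i
    · show ‖w 0‖ ≤ _
      rw [Real.norm_eq_abs, ← Real.sqrt_sq_eq_abs]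
      exact Real.sqrt_le_sqrt (le_add_of_nonneg_right (sq_nonneg _))
    · show ‖w 1‖ ≤ _
      rw [Real.norm_eq_abs, ← Real.sqrt_sq_eq_abs]
      exact Real.sqrt_le_sqrt (le_add_of_nonneg_left (sq_nonneg _))
  · have h2 : (2:ℝ) ≤ q.toReal := by
      have := ENNReal.toReal_mono hq' h2q
      simpa using this
    rw [normq_eq hq']
    calc (|w 0| ^ q.toReal + |w 1| ^ q.toReal) ^ (1 / q.toReal)
        ≤ Real.sqrt (|w 0|^2 + |w 1|^2) := ineqA h2 (abs_nonneg _) (abs_nonneg _)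
      _ = Real.sqrt ((w 0)^2 + (w 1)^2) := by rw [sq_abs, sq_abs]

lemma normB {q : ℝ≥0∞} [Fact (1 ≤ q)] (hq' : q ≠ ∞) (hq2 : q.toReal ≤ 2)
    (w : PiLp q (fun _ : Fin 2 => ℝ)) :
    ‖w‖ ≤ 2 ^ (1/q.toReal - 1/2) * Real.sqrt ((w 0)^2 + (w 1)^2) := by
  have h1 : (1:ℝ≥0∞) ≤ q := Fact.out
  have hp1 : (1:ℝ) ≤ q.toReal := by
    have := ENNReal.toReal_mono hq' h1
    simpa using this
  rw [normq_eq hq']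
  calc (|w 0| ^ q.toReal + |w 1| ^ q.toReal) ^ (1 / q.toReal)
      ≤ 2 ^ (1/q.toReal - 1/2) * Real.sqrt (|w 0|^2 + |w 1|^2) :=
        ineqB hp1 hq2 (abs_nonneg _) (abs_nonneg _)
    _ = 2 ^ (1/q.toReal - 1/2) * Real.sqrt ((w 0)^2 + (w 1)^2) := by rw [sq_abs, sq_abs]

def opAux (q : ℝ≥0∞) [Fact (1 ≤ q)] (a b c d : ℝ) :
    PiLp 2 (fun _ : Fin 2 => ℝ) →L[ℝ] PiLp q (fun _ : Fin 2 => ℝ) :=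
  LinearMap.toContinuousLinearMap
  { toFun := fun z => myVec q (a * z 0 + b * z 1) (c * z 0 + d * z 1)
    map_add' := by
      intro u v
      unfold myVec
      ext i
      fin_cases i <;>
        simp [Matrix.cons_val_zero, Matrix.cons_val_one] <;> ring
    map_smul' := by
      intro r u
      unfold myVec
      ext i
      fin_cases i <;>
        simp [Matrix.cons_val_zero, Matrix.cons_val_one, smul_eq_mul] <;> ring }

lemma opAux_apply (q : ℝ≥0∞) [Fact (1 ≤ q)] (a b c d : ℝ) (z : PiLp 2 (fun _ : Fin 2 => ℝ)) :
    opAux q a b c d z = myVec q (a * z 0 + b * z 1) (c * z 0 + d * z 1) := rfl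

set_option maxHeartbeats 1000000 in
lemma caseA (q : ℝ≥0∞) [Fact (1 ≤ q)] (h2q : 2 ≤ q)
    (h : UniformSBPBp ℝ (PiLp 2 (fun _ : Fin 2 => ℝ)) (PiLp q (fun _ : Fin 2 => ℝ))) :
    False := by
  obtain ⟨η, hη, hmain⟩ := h 1 one_pos
  set δ : ℝ := min (η/2) (1/2) with hδdef
  have hδpos : 0 < δ := lt_min (by linarith) (by norm_num)
  have hδle : δ ≤ 1/2 := min_le_right _ _
  have hδη : δ < η := lt_of_le_of_lt (min_le_left _ _) (by linarith)
  clear_value δ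
  set T := opAux q 1 0 0 (1-δ) with hTdef
  have hTz : ∀ z : PiLp 2 (fun _ : Fin 2 => ℝ),
      T z = myVec q (z 0) ((1-δ) * z 1) := by
    intro z
    rw [hTdef, opAux_apply]
    congr 1 <;> ring
  clear_value T
  have hbound : ∀ z : PiLp 2 (fun _ : Fin 2 => ℝ), ‖T z‖ ≤ ‖z‖ := by
    intro z
    rw [hTz z, norm2_eq]
    calc ‖myVec q (z 0) ((1-δ) * z 1)‖
        ≤ Real.sqrt ((z 0)^2 + ((1-δ) * z 1)^2) := by
          have := normA h2q (myVec q (z 0) ((1-δ) * z 1))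
          simpa using this
      _ ≤ Real.sqrt ((z 0)^2 + (z 1)^2) := by
          apply Real.sqrt_le_sqrt
          have h01 : (1-δ)^2 ≤ 1 := by nlinarith [mul_nonneg hδpos.le hδpos.le]
          have h02 : ((1-δ) * z 1)^2 ≤ (z 1)^2 := by
            rw [mul_pow]
            exact mul_le_of_le_one_left (sq_nonneg _) h01
          linarith
  have he₁ : ‖(myVec 2 1 0 : PiLp 2 (fun _ : Fin 2 => ℝ))‖ = 1 := by
    rw [norm2_eq]; simp
  have hT1 : ‖T‖ = 1 := by
    apply le_antisymm
    · exact T.opNorm_le_bound zero_le_one (fun z => by simpa using hbound z)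
    · have h1 : T (myVec 2 1 0) = myVec q 1 0 := by
        rw [hTz]
        simp only [myVec_zero, myVec_one]
        congr 1; ring
      have h2 : ‖T (myVec 2 1 0)‖ = 1 := by
        rw [h1, normq_single0]; norm_num
      calc (1:ℝ) = ‖T (myVec 2 1 0)‖ := h2.symm
        _ ≤ ‖T‖ * ‖(myVec 2 1 0 : PiLp 2 (fun _ : Fin 2 => ℝ))‖ := T.le_opNorm _
        _ = ‖T‖ := by rw [he₁, mul_one]
  have hx₀ : ‖(myVec 2 0 1 : PiLp 2 (fun _ : Fin 2 => ℝ))‖ = 1 := by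
    rw [norm2_eq]; simp
  have hTx₀ : ‖T (myVec 2 0 1)‖ = 1 - δ := by
    have h1 : T (myVec 2 0 1) = myVec q 0 (1-δ) := by
      rw [hTz]
      simp only [myVec_zero, myVec_one]
      congr 1 <;> ring
    rw [h1, normq_single1, abs_of_pos (by linarith)]
  obtain ⟨x₁, hx₁n, hx₁T, hx₁d⟩ := hmain T hT1 (myVec 2 0 1) hx₀ (by rw [hTx₀]; linarith)
  rw [norm2_eq] at hx₁n
  have hab : (x₁ 0)^2 + (x₁ 1)^2 = 1 := Real.sqrt_eq_one.mp hx₁n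
  have hge : (1:ℝ) ≤ (x₁ 0)^2 + ((1-δ) * x₁ 1)^2 := by
    have h1 : (1:ℝ) ≤ Real.sqrt ((x₁ 0)^2 + ((1-δ) * x₁ 1)^2) := by
      calc (1:ℝ) = ‖T x₁‖ := hx₁T.symm
        _ ≤ Real.sqrt ((x₁ 0)^2 + ((1-δ) * x₁ 1)^2) := by
            rw [hTz x₁]
            simpa using normA h2q (myVec q (x₁ 0) ((1-δ) * x₁ 1))
    have hnn : (0:ℝ) ≤ (x₁ 0)^2 + ((1-δ) * x₁ 1)^2 := by positivity
    have h2 : (1:ℝ)*(1:ℝ) ≤ Real.sqrt ((x₁ 0)^2 + ((1-δ) * x₁ 1)^2) *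
        Real.sqrt ((x₁ 0)^2 + ((1-δ) * x₁ 1)^2) :=
      mul_le_mul h1 h1 one_pos.le (Real.sqrt_nonneg _)
    rw [Real.mul_self_sqrt hnn] at h2
    linarith
  have hb : x₁ 1 = 0 := by
    have expand : (x₁ 0)^2 + ((1-δ) * x₁ 1)^2
        = ((x₁ 0)^2 + (x₁ 1)^2) - δ*(2-δ)*(x₁ 1)^2 := by ring
    rw [expand, hab] at hge
    have key : δ * (2-δ) * (x₁ 1)^2 ≤ 0 := by linarith
    have hbsq : (x₁ 1)^2 ≤ 0 := by
      by_contra hpos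
      push_neg at hpos
      have := mul_pos (mul_pos hδpos (show (0:ℝ) < 2-δ by linarith)) hpos
      linarith
    have h2 := sq_nonneg (x₁ 1)
    have h3 : (x₁ 1)^2 = 0 := le_antisymm hbsq h2
    exact pow_eq_zero_iff (by norm_num) |>.mp h3
  have hfar : ‖x₁ - myVec 2 0 1‖ ≥ 1 := by
    rw [norm2_eq]
    have h0 : (x₁ - myVec 2 0 1) 0 = x₁ 0 := by
      show x₁ 0 - (0:ℝ) = x₁ 0; ring
    have h1 : (x₁ - myVec 2 0 1) 1 = x₁ 1 - 1 := by
      show x₁ 1 - (1:ℝ) = x₁ 1 - 1; ring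
    rw [h0, h1, hb]
    calc (1:ℝ) = Real.sqrt 1 := by norm_num
      _ ≤ Real.sqrt ((x₁ 0)^2 + (0-1)^2) := by
          apply Real.sqrt_le_sqrt
          have := sq_nonneg (x₁ 0)
          norm_num
          linarith
  linarith

set_option maxHeartbeats 1000000 in
lemma caseB (q : ℝ≥0∞) [Fact (1 ≤ q)] (hq : 1 ≤ q) (hq2 : q < 2)
    (h : UniformSBPBp ℝ (PiLp 2 (fun _ : Fin 2 => ℝ)) (PiLp q (fun _ : Fin 2 => ℝ))) :
    False := by
  have hq' : q ≠ ∞ := hq2.ne_top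
  set p : ℝ := q.toReal with hpdef
  have hp1 : (1:ℝ) ≤ p := by
    have := ENNReal.toReal_mono hq' hq
    simpa using this
  have hp2 : p ≤ 2 := by
    have h22 : ((2:ℝ≥0∞)).toReal = 2 := by simp
    have := (ENNReal.toReal_lt_toReal hq' (by norm_num : (2:ℝ≥0∞) ≠ ∞)).2 hq2
    rw [h22] at this
    linarith
  have hp0 : 0 < p := lt_of_lt_of_le one_pos hp1
  set c : ℝ := (2:ℝ) ^ (1/p - 1/2) with hcdef
  have hc0 : 0 < c := Real.rpow_pos_of_pos (by norm_num) _
  clear_value c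
  obtain ⟨η, hη, hmain⟩ := h (1/10) (by norm_num)
  set s : ℝ := min (η/3) (1/4) with hsdef
  have hs0 : 0 < s := lt_min (by linarith) (by norm_num)
  have hs4 : s ≤ 1/4 := min_le_right _ _
  have hsη : s ≤ η/3 := min_le_left _ _
  clear_value s
  set T := opAux q 1 0 s 1 with hTdef
  have hTz : ∀ z : PiLp 2 (fun _ : Fin 2 => ℝ),
      T z = myVec q (z 0) (s * z 0 + z 1) := by
    intro z
    rw [hTdef, opAux_apply]
    congr 1 <;> ring
  clear_value T
  -- upper bound for the operator norm
  have hub : ∀ z : PiLp 2 (fun _ : Fin 2 => ℝ), ‖T z‖ ≤ c * (1+s) * ‖z‖ := by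
    intro z
    rw [hTz z, norm2_eq]
    have h1 : ‖myVec q (z 0) (s * z 0 + z 1)‖
        ≤ c * Real.sqrt ((z 0)^2 + (s * z 0 + z 1)^2) := by
      have h1' := normB hq' hp2 (myVec q (z 0) (s * z 0 + z 1))
      simp only [myVec_zero, myVec_one] at h1'
      rw [hcdef, hpdef]
      exact h1'
    have h2 : Real.sqrt ((z 0)^2 + (s * z 0 + z 1)^2)
        ≤ (1+s) * Real.sqrt ((z 0)^2 + (z 1)^2) := by
      have h3 : (z 0)^2 + (s * z 0 + z 1)^2 ≤ (1+s)^2 * ((z 0)^2 + (z 1)^2) :=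
        aux2 hs0.le
      have h4 := Real.sqrt_le_sqrt h3
      rwa [Real.sqrt_mul (sq_nonneg _), Real.sqrt_sq (by linarith)] at h4
    calc ‖myVec q (z 0) (s * z 0 + z 1)‖
        ≤ c * Real.sqrt ((z 0)^2 + (s * z 0 + z 1)^2) := h1
      _ ≤ c * ((1+s) * Real.sqrt ((z 0)^2 + (z 1)^2)) :=
          mul_le_mul_of_nonneg_left h2 hc0.le
      _ = c * (1+s) * Real.sqrt ((z 0)^2 + (z 1)^2) := by ring
  have hTub : ‖T‖ ≤ c * (1+s) :=
    T.opNorm_le_bound (by positivity) hub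
  -- lower bound for the operator norm via the diagonal witness
  set D : ℝ := 1 + (1-s)^2 with hDdef
  have hD0 : 0 < D := by rw [hDdef]; positivity
  have hsD : 0 < Real.sqrt D := Real.sqrt_pos.2 hD0
  set xw : ℝ := (Real.sqrt D)⁻¹ with hxwdef
  have hxw0 : 0 < xw := inv_pos.2 hsD
  have hxwsq : xw^2 * D = 1 := by
    rw [hxwdef, inv_pow, Real.sq_sqrt hD0.le, inv_mul_cancel₀ (ne_of_gt hD0)]
  clear_value xw
  have hwnorm : ‖(myVec 2 xw ((1-s)*xw) : PiLp 2 (fun _ : Fin 2 => ℝ))‖ = 1 := by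
    rw [norm2_eq]
    simp only [myVec_zero, myVec_one]
    have : xw^2 + ((1-s)*xw)^2 = xw^2 * D := by rw [hDdef]; ring
    rw [this, hxwsq, Real.sqrt_one]
  have hTw : T (myVec 2 xw ((1-s)*xw)) = myVec q xw xw := by
    rw [hTz]
    simp only [myVec_zero, myVec_one]
    congr 1
    ring
  have hTwnorm : ‖T (myVec 2 xw ((1-s)*xw))‖ = 2 ^ (1/p) * xw := by
    rw [hTw, normq_diag hq', abs_of_pos hxw0, hpdef]
  have hlow : 2 ^ (1/p : ℝ) * xw ≤ ‖T‖ := by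
    calc (2:ℝ) ^ (1/p : ℝ) * xw = ‖T (myVec 2 xw ((1-s)*xw))‖ := hTwnorm.symm
      _ ≤ ‖T‖ * ‖(myVec 2 xw ((1-s)*xw) : PiLp 2 (fun _ : Fin 2 => ℝ))‖ := T.le_opNorm _
      _ = ‖T‖ := by rw [hwnorm, mul_one]
  -- 2^(1/p) = c * sqrt 2
  have hcs : (2:ℝ) ^ (1/p : ℝ) = c * Real.sqrt 2 := by
    have hexp : (1/p - 1/2) + (1/2:ℝ) = 1/p := by ring
    rw [hcdef, Real.sqrt_eq_rpow, ← Real.rpow_add (by norm_num : (0:ℝ) < 2), hexp]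
  have hwit : c * (1 + s/8) ≤ 2 ^ (1/p : ℝ) * xw := by
    rw [hcs]
    have hstep : (1+s/8) * Real.sqrt D ≤ Real.sqrt 2 := by
      have hsq : (1+s/8)^2 * D ≤ 2 := by
        rw [hDdef]; exact aux3 hs0 hs4
      have h5 := Real.sqrt_le_sqrt hsq
      rwa [Real.sqrt_mul (sq_nonneg _), Real.sqrt_sq (by linarith)] at h5
    have h6 : ((1+s/8) * Real.sqrt D) * xw ≤ Real.sqrt 2 * xw :=
      mul_le_mul_of_nonneg_right hstep hxw0.le
    have h7 : ((1+s/8) * Real.sqrt D) * xw = 1 + s/8 := by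
      rw [hxwdef]
      field_simp
    calc c * (1 + s/8) ≤ c * (Real.sqrt 2 * xw) := by
          apply mul_le_mul_of_nonneg_left _ hc0.le
          rw [← h7]; exact h6
      _ = c * Real.sqrt 2 * xw := by ring
  have hTlb : c * (1 + s/8) ≤ ‖T‖ := le_trans hwit hlow
  have hT0 : 0 < ‖T‖ := lt_of_lt_of_le (by positivity) hTlb
  -- the normalized operator
  set S := (‖T‖⁻¹) • T with hSdef
  have hSz : ∀ z : PiLp 2 (fun _ : Fin 2 => ℝ), ‖S z‖ = ‖T‖⁻¹ * ‖T z‖ := by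
    intro z
    rw [hSdef, ContinuousLinearMap.smul_apply, norm_smul, norm_inv, norm_norm]
  have hSnorm : ‖S‖ = 1 := by
    apply le_antisymm
    · have hle := ContinuousLinearMap.opNorm_smul_le (‖T‖⁻¹) T
      rw [← hSdef, norm_inv, norm_norm, inv_mul_cancel₀ (ne_of_gt hT0)] at hle
      exact hle
    · have hTS : T = ‖T‖ • S := by
        rw [hSdef, smul_smul, mul_inv_cancel₀ (ne_of_gt hT0), one_smul]
      have h2 := ContinuousLinearMap.opNorm_smul_le (‖T‖ : ℝ) S
      rw [← hTS, norm_norm] at h2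
      have h3 : ‖T‖ * 1 ≤ ‖T‖ * ‖S‖ := by rw [mul_one]; exact h2
      exact le_of_mul_le_mul_left h3 hT0
  clear_value S
  -- the point x₀
  set r : ℝ := (Real.sqrt 2)⁻¹ with hrdef
  have hsqrt2 : (1.41:ℝ) ≤ Real.sqrt 2 ∧ Real.sqrt 2 ≤ 1.42 := by
    constructor
    · rw [show (1.41:ℝ) = Real.sqrt (1.41^2) by rw [Real.sqrt_sq]; norm_num]
      exact Real.sqrt_le_sqrt (by norm_num)
    · rw [show (1.42:ℝ) = Real.sqrt (1.42^2) by rw [Real.sqrt_sq]; norm_num]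
      exact Real.sqrt_le_sqrt (by norm_num)
  have hr0 : 0 < r := inv_pos.2 (by linarith [hsqrt2.1])
  have hrl : (0.7:ℝ) ≤ r := by
    rw [hrdef, show (0.7:ℝ) = ((10/7:ℝ))⁻¹ by norm_num]
    exact inv_anti₀ (by linarith [hsqrt2.1]) (by linarith [hsqrt2.2])
  have hru : r ≤ 0.71 := by
    rw [hrdef, show (0.71:ℝ) = ((100/71:ℝ))⁻¹ by norm_num]
    exact inv_anti₀ (by norm_num) (by linarith [hsqrt2.1])
  have hrsq : r^2 = 1/2 := by
    rw [hrdef, inv_pow, Real.sq_sqrt (by norm_num : (0:ℝ) ≤ 2)]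
    norm_num
  clear_value r
  have hx₀ : ‖(myVec 2 r (-r) : PiLp 2 (fun _ : Fin 2 => ℝ))‖ = 1 := by
    rw [norm2_eq]
    simp only [myVec_zero, myVec_one]
    rw [show r^2 + (-r)^2 = r^2 + r^2 by ring, hrsq]
    norm_num
  -- lower bound on ‖T x₀‖
  have hTx₀ : c * (1-s) ≤ ‖T (myVec 2 r (-r))‖ := by
    have hTx : T (myVec 2 r (-r)) = myVec q r (-((1-s)*r)) := by
      rw [hTz]
      simp only [myVec_zero, myVec_one]
      congr 1
      ring
    rw [hTx, normq_eq hq', ← hpdef]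
    simp only [myVec_zero, myVec_one]
    have hA0 : 0 ≤ (1-s)*r := by
      apply mul_nonneg _ hr0.le
      linarith
    have habs1 : |r| = r := abs_of_pos hr0
    have habs2 : |(-((1-s)*r))| = (1-s)*r := by
      rw [abs_neg, abs_of_nonneg hA0]
    rw [habs1, habs2]
    have hmono : ((1-s)*r) ^ p ≤ r ^ p := by
      apply Real.rpow_le_rpow hA0 _ hp0.le
      have := mul_le_mul_of_nonneg_right (show (1-s) ≤ 1 by linarith) hr0.le
      simpa using this
    have hsum : (2:ℝ) * ((1-s)*r) ^ p ≤ r ^ p + ((1-s)*r) ^ p := by linarith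
    have hdiag : ((2:ℝ) * ((1-s)*r) ^ p) ^ (1/p : ℝ) = 2 ^ (1/p : ℝ) * ((1-s)*r) := by
      rw [Real.mul_rpow (by norm_num) (Real.rpow_nonneg hA0 _), one_div,
        Real.rpow_rpow_inv hA0 (ne_of_gt hp0)]
    calc c * (1-s) = 2 ^ (1/p : ℝ) * ((1-s)*r) := by
          rw [hcs]
          have hthis : Real.sqrt 2 * r = 1 := by
            rw [hrdef]
            exact mul_inv_cancel₀ (ne_of_gt (Real.sqrt_pos.2 (by norm_num)))
          linear_combination (-(c*(1-s))) * hthis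
      _ = ((2:ℝ) * ((1-s)*r) ^ p) ^ (1/p : ℝ) := hdiag.symm
      _ ≤ (r ^ p + ((1-s)*r) ^ p) ^ (1/p : ℝ) := by
          apply Real.rpow_le_rpow _ hsum (by positivity)
          positivity
  have hSx₀ : 1 - η < ‖S (myVec 2 r (-r))‖ := by
    rw [hSz (myVec 2 r (-r))]
    have h8 : ‖T‖⁻¹ ≥ (c*(1+s))⁻¹ := by
      apply inv_anti₀ hT0 hTub
    have h9 : ‖T‖⁻¹ * ‖T (myVec 2 r (-r))‖ ≥ (c*(1+s))⁻¹ * (c*(1-s)) := by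
      apply mul_le_mul h8 hTx₀ (mul_nonneg hc0.le (by linarith)) (by positivity)
    have h10 : (c*(1+s))⁻¹ * (c*(1-s)) = (1-s)/(1+s) := by
      field_simp
    rw [h10] at h9
    have h11 : 1 - η < (1-s)/(1+s) := by
      rw [lt_div_iff₀ (by linarith : (0:ℝ) < 1+s)]
      exact aux4 hη hs0 hsη
    linarith
  obtain ⟨x₁, hx₁n, hx₁T, hx₁d⟩ := hmain S hSnorm (myVec 2 r (-r)) hx₀ hSx₀
  -- ‖T x₁‖ = ‖T‖
  have hTx₁ : ‖T x₁‖ = ‖T‖ := by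
    rw [hSz x₁] at hx₁T
    field_simp at hx₁T
    linarith [hx₁T]
  -- coordinates of x₁ are close to those of x₀
  have hc0' : |x₁ 0 - r| < 1/10 := by
    have h12 : (x₁ - myVec 2 r (-r)) 0 = x₁ 0 - r := rfl
    calc |x₁ 0 - r| = |(x₁ - myVec 2 r (-r)) 0| := by rw [h12]
      _ ≤ ‖x₁ - myVec 2 r (-r)‖ := coord_le_norm2 _ 0
      _ < 1/10 := hx₁d
  have hc1' : |x₁ 1 + r| < 1/10 := by
    have h12 : (x₁ - myVec 2 r (-r)) 1 = x₁ 1 + r := by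
      show x₁ 1 - (-r) = x₁ 1 + r; ring
    calc |x₁ 1 + r| = |(x₁ - myVec 2 r (-r)) 1| := by rw [h12]
      _ ≤ ‖x₁ - myVec 2 r (-r)‖ := coord_le_norm2 _ 1
      _ < 1/10 := hx₁d
  rw [norm2_eq] at hx₁n
  have hab : (x₁ 0)^2 + (x₁ 1)^2 = 1 := Real.sqrt_eq_one.mp hx₁n
  have hz0l : (0.6:ℝ) ≤ x₁ 0 := by
    have := abs_lt.mp hc0'
    linarith [this.1]
  have hz0u : x₁ 0 ≤ 0.81 := by
    have := abs_lt.mp hc0'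
    linarith [this.2]
  have hz1u : x₁ 1 ≤ -(0.6:ℝ) := by
    have := abs_lt.mp hc1'
    linarith [this.2]
  have hz1l : -(0.81:ℝ) ≤ x₁ 1 := by
    have := abs_lt.mp hc1'
    linarith [this.1]
  -- ‖T x₁‖ < ‖T‖ : contradiction
  have hupp : ‖T x₁‖ ≤ c := by
    rw [hTz x₁]
    have h13 : ‖myVec q (x₁ 0) (s * x₁ 0 + x₁ 1)‖
        ≤ c * Real.sqrt ((x₁ 0)^2 + (s * x₁ 0 + x₁ 1)^2) := by
      have h13' := normB hq' hp2 (myVec q (x₁ 0) (s * x₁ 0 + x₁ 1))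
      simp only [myVec_zero, myVec_one] at h13'
      rw [hcdef, hpdef]
      exact h13'
    have h14 : (x₁ 0)^2 + (s * x₁ 0 + x₁ 1)^2 ≤ 1 :=
      aux6 hab (aux5 hz0l hz1u) hs0 hs4 hz0u hz0l
    have h15 : Real.sqrt ((x₁ 0)^2 + (s * x₁ 0 + x₁ 1)^2) ≤ 1 := by
      rw [show (1:ℝ) = Real.sqrt 1 by rw [Real.sqrt_one]]
      exact Real.sqrt_le_sqrt h14
    calc ‖myVec q (x₁ 0) (s * x₁ 0 + x₁ 1)‖
        ≤ c * Real.sqrt ((x₁ 0)^2 + (s * x₁ 0 + x₁ 1)^2) := h13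
      _ ≤ c * 1 := mul_le_mul_of_nonneg_left h15 hc0.le
      _ = c := mul_one c
  have h16 : c * (1 + s/8) ≤ c := (hTlb.trans (le_of_eq hTx₁.symm)).trans hupp
  have h17 : 0 < c * (s/8) := mul_pos hc0 (by linarith)
  have h18 : c * (1 + s/8) = c + c * (s/8) := by ring
  linarith

end SBPBAux

end

open SBPBAux

/-- For every `1 ≤ q ≤ ∞` the pair `(ℓ₂²(ℝ), ℓ_q²(ℝ))` fails the uniform
strong Bishop-Phelps-Bollobás property. -/
theorem l2_lq_real_fails_uniform_sBPBp
    (q : ℝ≥0∞) [Fact (1 ≤ q)] (hq : 1 ≤ q) :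
    ¬ UniformSBPBp ℝ (PiLp 2 (fun _ : Fin 2 => ℝ)) (PiLp q (fun _ : Fin 2 => ℝ)) := by
  intro h
  rcases le_or_gt 2 q with h2q | hq2
  · exact caseA q h2q h
  · exact caseB q hq hq2 h
end

section
/- For every p with 1 < p ≤ 2 and every q with 1 ≤ q ≤ 2, the pair (ℓ_p²(ℝ), ℓ_q²(ℝ)) fails the uniform strong Bishop-Phelps-Bollobás property. -/
open scoped ENNReal NNReal

lemma kl1 {s : ℝ} (hs0 : 0 < s) (hs2 : s ≤ 2) {a b : ℝ} (ha : 0 ≤ a) (hb : 0 ≤ b) :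
    a ^ s + b ^ s ≤ 2 * ((a ^ (2:ℝ) + b ^ (2:ℝ)) / 2) ^ (s / 2) := by
  lift a to ℝ≥0 using ha
  lift b to ℝ≥0 using hb
  have key : a ^ s + b ^ s ≤ 2 * ((a ^ (2:ℝ) + b ^ (2:ℝ)) / 2) ^ (s / 2) := by
    have hp : (1:ℝ) ≤ 2 / s := (one_le_div hs0).2 hs2
    have h := NNReal.rpow_arith_mean_le_arith_mean2_rpow (1/2) (1/2) (a ^ s) (b ^ s)
      (by apply NNReal.coe_injective; push_cast; norm_num) hp
    have h2 : ∀ x : ℝ≥0, (x ^ s) ^ (2/s) = x ^ (2:ℝ) := fun x => by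
      rw [← NNReal.rpow_mul]; congr 1; field_simp
    rw [h2, h2] at h
    have h3 := NNReal.rpow_le_rpow h (le_of_lt (by positivity : (0:ℝ) < s / 2))
    rw [← NNReal.rpow_mul] at h3
    have : (2 / s) * (s / 2) = 1 := by field_simp
    rw [this, NNReal.rpow_one] at h3
    calc a ^ s + b ^ s = 2 * ((1:ℝ≥0)/2 * a ^ s + 1/2 * b ^ s) := by
          apply NNReal.coe_injective; push_cast; ring
    _ ≤ 2 * ((1/2 * a ^ (2:ℝ) + 1/2 * b ^ (2:ℝ))) ^ (s/2) := by
        exact mul_le_mul_right h3 2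
    _ = 2 * ((a ^ (2:ℝ) + b ^ (2:ℝ)) / 2) ^ (s / 2) := by
        congr 1; congr 1; apply NNReal.coe_injective; push_cast; ring
  exact_mod_cast key

lemma kl2 {r : ℝ} (hr0 : 0 < r) (hr2 : r ≤ 2) {a b : ℝ} (ha : 0 ≤ a) (hb : 0 ≤ b) :
    (a ^ (2:ℝ) + b ^ (2:ℝ)) ^ ((1:ℝ)/2) ≤ (a ^ r + b ^ r) ^ (1/r) := by
  lift a to ℝ≥0 using ha
  lift b to ℝ≥0 using hb
  exact_mod_cast NNReal.rpow_add_rpow_le a b hr0 hr2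

lemma zerolem {b a0 a1 : ℝ} (hb0 : 0 ≤ b) (hb1 : b < 1)
    (hW : 1 ≤ ((a0 + b*a1)^2 + (a0 - b*a1)^2)/2) (hle : a0^2 + a1^2 ≤ 1) : a1 = 0 := by
  have hkey : (1 - b^2) * a1^2 ≤ 0 := by nlinarith
  have h1b : 0 < 1 - b^2 := by nlinarith
  have h2 : a1^2 ≤ 0 := by nlinarith [sq_nonneg a1]
  have h3 : a1^2 = 0 := le_antisymm h2 (sq_nonneg a1)
  exact pow_eq_zero_iff (by norm_num) |>.mp h3

noncomputable def bpbOp (p q : ℝ≥0∞) (b c : ℝ) :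
    PiLp p (fun _ : Fin 2 => ℝ) →ₗ[ℝ] PiLp q (fun _ : Fin 2 => ℝ) where
  toFun x := (WithLp.equiv q (∀ _ : Fin 2, ℝ)).symm
      ![c * (x 0 + b * x 1), c * (x 0 - b * x 1)]
  map_add' x y := by
    apply (WithLp.equiv q _).injective
    simp only [WithLp.equiv_apply, WithLp.equiv_symm_apply, WithLp.ofLp_toLp, WithLp.ofLp_add, Equiv.apply_symm_apply]
    funext i
    fin_cases i <;>
      simp [PiLp.add_apply, Pi.add_apply, Matrix.cons_val_zero, Matrix.cons_val_one] <;> ring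
  map_smul' m x := by
    apply (WithLp.equiv q _).injective
    simp only [WithLp.equiv_apply, WithLp.equiv_symm_apply, WithLp.ofLp_toLp, WithLp.ofLp_smul, Equiv.apply_symm_apply, RingHom.id_apply]
    funext i
    fin_cases i <;>
      simp [PiLp.smul_apply, Pi.smul_apply, smul_eq_mul] <;> ring


/-- For every `1 < p ≤ 2` and `1 ≤ q ≤ 2` the pair `(ℓ_p²(ℝ), ℓ_q²(ℝ))` fails
the uniform strong Bishop-Phelps-Bollobás property. -/
theorem lp_lq_real_fails_uniform_sBPBp
    (p q : ℝ≥0∞) [Fact (1 ≤ p)] [Fact (1 ≤ q)]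
    (hp1 : 1 < p) (hp2 : p ≤ 2) (hq1 : 1 ≤ q) (hq2 : q ≤ 2) :
    ¬ UniformSBPBp ℝ (PiLp p (fun _ : Fin 2 => ℝ)) (PiLp q (fun _ : Fin 2 => ℝ)) := by
  intro h
  have hpt : p ≠ ⊤ := (hp2.trans_lt (by norm_num)).ne
  have hqt : q ≠ ⊤ := (hq2.trans_lt (by norm_num)).ne
  set r := p.toReal with hrdef
  set s := q.toReal with hsdef
  have hr1 : 1 < r := by
    rw [hrdef, ← ENNReal.toReal_one]
    exact (ENNReal.toReal_lt_toReal (by norm_num) hpt).mpr hp1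
  have hr2 : r ≤ 2 := by
    have h2 : ((2:ℝ≥0∞)).toReal = 2 := by norm_num
    rw [hrdef, ← h2]
    exact (ENNReal.toReal_le_toReal hpt (by norm_num)).mpr hp2
  have hs1 : 1 ≤ s := by
    rw [hsdef, ← ENNReal.toReal_one]
    exact (ENNReal.toReal_le_toReal (by norm_num) hqt).mpr hq1
  have hs2 : s ≤ 2 := by
    have h2 : ((2:ℝ≥0∞)).toReal = 2 := by norm_num
    rw [hsdef, ← h2]
    exact (ENNReal.toReal_le_toReal hqt (by norm_num)).mpr hq2
  have hr0 : 0 < r := by linarith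
  have hs0 : 0 < s := by linarith
  have hsne : s ≠ 0 := ne_of_gt hs0
  have hrne : r ≠ 0 := ne_of_gt hr0
  have hids : ∀ X : ℝ, 0 ≤ X → (X ^ s) ^ (1/s) = X := fun X hX => by
    rw [← Real.rpow_mul hX, mul_one_div, div_self hsne, Real.rpow_one]
  have hids' : ∀ X : ℝ, 0 ≤ X → (X ^ (1/s)) ^ s = X := fun X hX => by
    rw [← Real.rpow_mul hX, one_div, inv_mul_cancel₀ hsne, Real.rpow_one]
  have hidr : ∀ X : ℝ, 0 ≤ X → (X ^ r) ^ (1/r) = X := fun X hX => by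
    rw [← Real.rpow_mul hX, mul_one_div, div_self hrne, Real.rpow_one]
  have sqe : ∀ u : ℝ, |u| ^ (2:ℝ) = u ^ 2 := fun u => by
    rw [show (2:ℝ) = ((2:ℕ):ℝ) by norm_num, Real.rpow_natCast, sq_abs]
  obtain ⟨η, hη, H⟩ := h 1 one_pos
  set b := max (1 - η/2) (1/2) with hbdef
  have hb0 : 0 < b := lt_of_lt_of_le (by norm_num) (le_max_right _ _)
  have hb1 : b < 1 := max_lt (by linarith) (by norm_num)
  set c := (2:ℝ) ^ (-(1/s) : ℝ) with hcdef
  have hc0 : 0 < c := Real.rpow_pos_of_pos two_pos _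
  have hcs : c ^ s = 1/2 := by
    rw [hcdef, ← Real.rpow_mul (by norm_num : (0:ℝ) ≤ 2)]
    rw [show (-(1/s)) * s = -1 by field_simp, Real.rpow_neg_one]
    norm_num
  -- norm formulas
  have hnormp : ∀ x : PiLp p (fun _ : Fin 2 => ℝ),
      ‖x‖ = (|x 0| ^ r + |x 1| ^ r) ^ (1/r) := fun x => by
    rw [PiLp.norm_eq_sum hr0 x, Fin.sum_univ_two]
    simp [Real.norm_eq_abs]
    rfl
  have hnormq : ∀ y : PiLp q (fun _ : Fin 2 => ℝ),
      ‖y‖ = (|y 0| ^ s + |y 1| ^ s) ^ (1/s) := fun y => by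
    rw [PiLp.norm_eq_sum hs0 y, Fin.sum_univ_two]
    simp [Real.norm_eq_abs]
    rfl
  set T := LinearMap.toContinuousLinearMap (bpbOp p q b c) with hTdef
  have hT0 : ∀ x : PiLp p (fun _ : Fin 2 => ℝ), T x 0 = c * (x 0 + b * x 1) := fun _ => rfl
  have hT1 : ∀ x : PiLp p (fun _ : Fin 2 => ℝ), T x 1 = c * (x 0 - b * x 1) := fun _ => rfl
  have hTnorm : ∀ x : PiLp p (fun _ : Fin 2 => ℝ),
      ‖T x‖ = (|c * (x 0 + b * x 1)| ^ s + |c * (x 0 - b * x 1)| ^ s) ^ (1/s) := fun x => by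
    rw [hnormq, hT0, hT1]
  have habs : ∀ u : ℝ, |c * u| ^ s = 1/2 * |u| ^ s := fun u => by
    rw [abs_mul, abs_of_pos hc0, Real.mul_rpow hc0.le (abs_nonneg u), hcs]
  -- master inequality
  have hmain : ∀ x0 x1 : ℝ,
      |x0 + b*x1| ^ s + |x0 - b*x1| ^ s ≤ 2 * ((|x0| ^ r + |x1| ^ r) ^ (1/r)) ^ s := by
    intro x0 x1
    have h1 := kl1 hs0 hs2 (abs_nonneg (x0 + b*x1)) (abs_nonneg (x0 - b*x1))
    rw [sqe, sqe] at h1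
    have h2 : ((x0 + b*x1)^2 + (x0 - b*x1)^2)/2 ≤ x0^2 + x1^2 := by
      nlinarith [mul_nonneg (mul_nonneg (sq_nonneg x1) (by linarith : (0:ℝ) ≤ 1 - b))
        (by linarith : (0:ℝ) ≤ 1 + b)]
    have h3 : (((x0 + b*x1)^2 + (x0 - b*x1)^2)/2) ^ (s/2) ≤ (x0^2 + x1^2) ^ (s/2) :=
      Real.rpow_le_rpow (by positivity) h2 (by positivity)
    have h4 : (x0^2 + x1^2) ^ (s/2) = ((x0^2 + x1^2) ^ ((1:ℝ)/2)) ^ s := by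
      rw [← Real.rpow_mul (by positivity)]
      congr 1
      ring
    have h5 : (x0^2 + x1^2) ^ ((1:ℝ)/2) ≤ (|x0| ^ r + |x1| ^ r) ^ (1/r) := by
      have hk := kl2 hr0 hr2 (abs_nonneg x0) (abs_nonneg x1)
      rwa [sqe, sqe] at hk
    have h6 : ((x0^2 + x1^2) ^ ((1:ℝ)/2)) ^ s ≤ ((|x0| ^ r + |x1| ^ r) ^ (1/r)) ^ s :=
      Real.rpow_le_rpow (by positivity) h5 hs0.le
    calc |x0 + b*x1| ^ s + |x0 - b*x1| ^ s
        ≤ 2 * (((x0 + b*x1)^2 + (x0 - b*x1)^2)/2) ^ (s/2) := h1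
      _ ≤ 2 * (x0^2 + x1^2) ^ (s/2) := by linarith
      _ = 2 * ((x0^2 + x1^2) ^ ((1:ℝ)/2)) ^ s := by rw [h4]
      _ ≤ 2 * ((|x0| ^ r + |x1| ^ r) ^ (1/r)) ^ s := by linarith
  have hbound : ∀ x : PiLp p (fun _ : Fin 2 => ℝ), ‖T x‖ ≤ ‖x‖ := by
    intro x
    rw [hTnorm, hnormp]
    have key : |c * (x 0 + b * x 1)| ^ s + |c * (x 0 - b * x 1)| ^ s
        ≤ ((|x 0| ^ r + |x 1| ^ r) ^ (1/r)) ^ s := by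
      rw [habs, habs]
      have := hmain (x 0) (x 1)
      linarith
    calc (|c * (x 0 + b * x 1)| ^ s + |c * (x 0 - b * x 1)| ^ s) ^ (1/s)
        ≤ (((|x 0| ^ r + |x 1| ^ r) ^ (1/r)) ^ s) ^ (1/s) :=
          Real.rpow_le_rpow (by positivity) key (by positivity)
      _ = (|x 0| ^ r + |x 1| ^ r) ^ (1/r) := hids _ (by positivity)
  -- e₁ and x₀
  set e₁ : PiLp p (fun _ : Fin 2 => ℝ) := (WithLp.equiv p (∀ _ : Fin 2, ℝ)).symm ![1, 0]
    with he₁def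
  have he₁0 : e₁ 0 = 1 := rfl
  have he₁1 : e₁ 1 = 0 := rfl
  have he₁ : ‖e₁‖ = 1 := by
    rw [hnormp, he₁0, he₁1]
    rw [abs_one, abs_zero, Real.one_rpow, Real.zero_rpow hrne]
    norm_num
  have hTe₁ : ‖T e₁‖ = 1 := by
    rw [hTnorm, he₁0, he₁1]
    rw [mul_zero, add_zero, sub_zero, habs, abs_one, Real.one_rpow]
    norm_num
  have hTopnorm : ‖T‖ = 1 := by
    refine le_antisymm (T.opNorm_le_bound zero_le_one fun x => by
      rw [one_mul]; exact hbound x) ?_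
    calc (1:ℝ) = ‖T e₁‖ := hTe₁.symm
      _ ≤ ‖T‖ * ‖e₁‖ := T.le_opNorm e₁
      _ = ‖T‖ := by rw [he₁, mul_one]
  set x₀ : PiLp p (fun _ : Fin 2 => ℝ) := (WithLp.equiv p (∀ _ : Fin 2, ℝ)).symm ![0, 1]
    with hx₀def
  have hx₀0 : x₀ 0 = 0 := rfl
  have hx₀1 : x₀ 1 = 1 := rfl
  have hx₀ : ‖x₀‖ = 1 := by
    rw [hnormp, hx₀0, hx₀1]
    rw [abs_one, abs_zero, Real.one_rpow, Real.zero_rpow hrne]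
    norm_num
  have hTx₀ : ‖T x₀‖ = b := by
    rw [hTnorm, hx₀0, hx₀1]
    rw [mul_one, zero_add, zero_sub, habs, habs, abs_neg, abs_of_pos hb0]
    rw [show 1/2 * b ^ s + 1/2 * b ^ s = b ^ s by ring]
    exact hids b hb0.le
  have hgt : 1 - η < ‖T x₀‖ := by
    rw [hTx₀]
    have := le_max_left (1 - η/2) (1/2 : ℝ)
    calc 1 - η < 1 - η/2 := by linarith
      _ ≤ b := this
  obtain ⟨x₁, hx₁n, hTx₁n, hlt⟩ := H T hTopnorm x₀ hx₀ hgt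
  -- equality analysis: x₁ 1 = 0
  have hx11 : x₁ 1 = 0 := by
    have hsum : |x₁ 0 + b * x₁ 1| ^ s + |x₁ 0 - b * x₁ 1| ^ s = 2 := by
      have hX : 0 ≤ |c * (x₁ 0 + b * x₁ 1)| ^ s + |c * (x₁ 0 - b * x₁ 1)| ^ s := by positivity
      have hthis := hTx₁n
      rw [hTnorm] at hthis
      have hXeq : |c * (x₁ 0 + b * x₁ 1)| ^ s + |c * (x₁ 0 - b * x₁ 1)| ^ s = 1 := by
        calc |c * (x₁ 0 + b * x₁ 1)| ^ s + |c * (x₁ 0 - b * x₁ 1)| ^ s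
            = ((|c * (x₁ 0 + b * x₁ 1)| ^ s + |c * (x₁ 0 - b * x₁ 1)| ^ s) ^ ((1:ℝ)/s)) ^ s :=
              (hids' _ hX).symm
          _ = (1:ℝ) ^ s := by rw [hthis]
          _ = 1 := Real.one_rpow s
      rw [habs, habs] at hXeq
      linarith
    -- from kl1: W ≥ 1 where W = ((u)^2+(v)^2)/2
    have h1 := kl1 hs0 hs2 (abs_nonneg (x₁ 0 + b * x₁ 1)) (abs_nonneg (x₁ 0 - b * x₁ 1))
    rw [sqe, sqe, hsum] at h1
    have hW : 1 ≤ ((x₁ 0 + b * x₁ 1)^2 + (x₁ 0 - b * x₁ 1)^2)/2 := by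
      by_contra hWc
      push_neg at hWc
      have := Real.rpow_lt_one (by positivity) hWc (by positivity : (0:ℝ) < s/2)
      linarith
    -- from kl2 and ‖x₁‖ = 1: x₁0² + x₁1² ≤ 1
    have h5 : ((x₁ 0)^2 + (x₁ 1)^2) ^ ((1:ℝ)/2) ≤ 1 := by
      have hk := kl2 hr0 hr2 (abs_nonneg (x₁ 0)) (abs_nonneg (x₁ 1))
      rw [sqe, sqe] at hk
      rw [hnormp] at hx₁n
      rw [hx₁n] at hk
      exact hk
    have hle1 : (x₁ 0)^2 + (x₁ 1)^2 ≤ 1 := by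
      by_contra hc1
      push_neg at hc1
      have := Real.one_lt_rpow_iff_of_pos (by linarith : (0:ℝ) < (x₁ 0)^2 + (x₁ 1)^2)
        (y := (1:ℝ)/2)
      have h7 : (1:ℝ) < ((x₁ 0)^2 + (x₁ 1)^2) ^ ((1:ℝ)/2) := this.mpr (Or.inl ⟨hc1, by norm_num⟩)
      linarith
    exact zerolem hb0.le hb1 hW hle1
  -- distance lower bound
  have hdist : (1:ℝ) ≤ ‖x₁ - x₀‖ := by
    have hc1 : (x₁ - x₀) 1 = x₁ 1 - x₀ 1 := rfl
    have habs1 : |(x₁ - x₀) 1| = 1 := by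
      rw [hc1, hx11, hx₀1]
      norm_num
    rw [hnormp]
    calc (1:ℝ) = (|(x₁ - x₀) 1| ^ r) ^ (1/r) := by
          rw [habs1, Real.one_rpow, Real.one_rpow]
      _ ≤ (|(x₁ - x₀) 0| ^ r + |(x₁ - x₀) 1| ^ r) ^ (1/r) := by
          apply Real.rpow_le_rpow (by positivity) _ (by positivity)
          have : 0 ≤ |(x₁ - x₀) 0| ^ r := by positivity
          linarith
  linarith
end

section
/- Let X be a Banach space over 𝕜 (𝕜 = ℝ or ℂ) admitting a biorthogonal system of length two: there exist x₁, x₂ ∈ X with ‖x₁‖ = ‖x₂‖ = 1 and continuous linear functionals x₁*, x₂* on X with ‖x₁*‖ ≤ 1, ‖x₂*‖ ≤ 1 and x_i*(x_j) = δ_{ij} for i, j ∈ {1, 2}. Then the pair (X, ℓ_∞²) fails the uniform strong Bishop-Phelps-Bollobás property. -/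
open scoped ENNReal

lemma pi_norm_pair_eq_max (a b : ℝ) (v : Fin 2 → ℝ) (hv : v = ![a, b]) :
    ‖v‖ = max ‖a‖ ‖b‖ := by
  subst hv
  rw [Pi.norm_def, show (Finset.univ : Finset (Fin 2)) = {0, 1} from rfl]
  simp [Finset.sup_insert]

set_option maxHeartbeats 1000000 in
/-- If `X` admits a biorthogonal system of length two, then the pair
`(X, ℓ_∞²)` fails the uniform strong Bishop-Phelps-Bollobás property. -/
theorem biorthogonal_fails_uniform_sBPBp_linf
    (𝕜 : Type*) [RCLike 𝕜]
    (X : Type*) [NormedAddCommGroup X] [NormedSpace 𝕜 X] [CompleteSpace X]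
    (x₁ x₂ : X) (f₁ f₂ : X →L[𝕜] 𝕜)
    (hx₁ : ‖x₁‖ = 1) (hx₂ : ‖x₂‖ = 1) (hf₁ : ‖f₁‖ ≤ 1) (hf₂ : ‖f₂‖ ≤ 1)
    (h11 : f₁ x₁ = 1) (h12 : f₁ x₂ = 0) (h21 : f₂ x₁ = 0) (h22 : f₂ x₂ = 1) :
    ¬ UniformSBPBp 𝕜 X (PiLp ∞ (fun _ : Fin 2 => 𝕜)) := by
  intro h
  obtain ⟨η, hη, hmain⟩ := h 1 one_pos
  -- choose δ
  set δ : ℝ := min η 1 / 2 with hδdef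
  have hδpos : 0 < δ := by positivity
  have hδltη : δ < η := by
    have : min η 1 ≤ η := min_le_left _ _
    nlinarith
  have hδle : δ ≤ 1 / 2 := by
    have : min η 1 ≤ 1 := min_le_right _ _
    nlinarith
  have hδlt1 : 1 - δ < 1 := by linarith
  have h1δpos : 0 < 1 - δ := by linarith
  -- the operator
  set T : X →L[𝕜] PiLp ∞ (fun _ : Fin 2 => 𝕜) :=
    ((PiLp.continuousLinearEquiv ∞ 𝕜 (fun _ : Fin 2 => 𝕜)).symm :
        (Fin 2 → 𝕜) →L[𝕜] PiLp ∞ (fun _ : Fin 2 => 𝕜)).comp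
      (ContinuousLinearMap.pi ![f₁, (1 - δ) • f₂]) with hT
  have hTx : ∀ x : X, ‖T x‖ = max ‖f₁ x‖ ((1 - δ) * ‖f₂ x‖) := by
    intro x
    have h1 : T x = (WithLp.equiv ⊤ (Fin 2 → 𝕜)).symm
        (fun i => (![f₁, (1 - δ) • f₂] i) x) := rfl
    rw [h1, WithLp.equiv_symm_apply, PiLp.norm_toLp]
    have h2 : (fun i => (![f₁, (1 - δ) • f₂] i) x) = ![f₁ x, (1 - δ) • f₂ x] := by
      funext i
      fin_cases i <;> simp
    rw [h2]
    have h3 : (fun i => ‖(![f₁ x, (1 - δ) • f₂ x] : Fin 2 → 𝕜) i‖)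
        = ![‖f₁ x‖, ‖(1 - δ) • f₂ x‖] := by
      funext i; fin_cases i <;> simp
    have h4 : ‖(![f₁ x, (1 - δ) • f₂ x] : Fin 2 → 𝕜)‖
        = ‖(![‖f₁ x‖, ‖(1 - δ) • f₂ x‖] : Fin 2 → ℝ)‖ := by
      rw [Pi.norm_def, Pi.norm_def]
      congr 1
      apply Finset.sup_congr rfl
      intro i _
      fin_cases i <;> simp [nnnorm_smul]
    rw [h4, pi_norm_pair_eq_max _ _ _ rfl]
    simp only [Real.norm_eq_abs]
    rw [abs_of_nonneg (norm_nonneg _), abs_of_nonneg (norm_nonneg _), norm_smul,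
      Real.norm_eq_abs, abs_of_pos h1δpos]
  -- ‖T‖ = 1
  have hTnorm : ‖T‖ = 1 := by
    apply le_antisymm
    · apply ContinuousLinearMap.opNorm_le_bound _ zero_le_one
      intro x
      rw [hTx x, one_mul]
      apply max_le
      · calc ‖f₁ x‖ ≤ ‖f₁‖ * ‖x‖ := f₁.le_opNorm x
          _ ≤ 1 * ‖x‖ := mul_le_mul_of_nonneg_right hf₁ (norm_nonneg x)
          _ = ‖x‖ := one_mul _
      · have ha : ‖f₂ x‖ ≤ ‖x‖ := by
          calc ‖f₂ x‖ ≤ ‖f₂‖ * ‖x‖ := f₂.le_opNorm x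
            _ ≤ 1 * ‖x‖ := mul_le_mul_of_nonneg_right hf₂ (norm_nonneg x)
            _ = ‖x‖ := one_mul _
        have hb : (1 - δ) * ‖f₂ x‖ ≤ 1 * ‖f₂ x‖ :=
          mul_le_mul_of_nonneg_right (by linarith) (norm_nonneg _)
        rw [one_mul] at hb
        exact le_trans hb ha
    · have h5 := T.le_opNorm x₁
      rw [hTx x₁, hx₁, mul_one, h11, h21] at h5
      have h6 : (1 : ℝ) ≤ max ‖(1 : 𝕜)‖ ((1 - δ) * ‖(0 : 𝕜)‖) := by simp
      linarith [le_trans h6 h5]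
  -- ‖T x₂‖ = 1 - δ
  have hTx₂ : ‖T x₂‖ = 1 - δ := by
    rw [hTx x₂, h12, h22]
    simp [le_of_lt h1δpos]
  obtain ⟨y, hy1, hy2, hy3⟩ := hmain T hTnorm x₂ hx₂ (by rw [hTx₂]; linarith)
  -- from ‖T y‖ = 1, deduce ‖f₁ y‖ = 1
  rw [hTx y] at hy2
  have hf₂y : (1 - δ) * ‖f₂ y‖ < 1 := by
    have : ‖f₂ y‖ ≤ 1 := by
      calc ‖f₂ y‖ ≤ ‖f₂‖ * ‖y‖ := f₂.le_opNorm y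
        _ ≤ 1 := by rw [hy1]; simpa using hf₂
    calc (1 - δ) * ‖f₂ y‖ ≤ (1 - δ) * 1 :=
          mul_le_mul_of_nonneg_left this (le_of_lt h1δpos)
      _ = 1 - δ := mul_one _
      _ < 1 := hδlt1
  have hf₁y : ‖f₁ y‖ = 1 := by
    rcases max_cases ‖f₁ y‖ ((1 - δ) * ‖f₂ y‖) with ⟨he, _⟩ | ⟨he, _⟩ <;>
      rw [he] at hy2
    · exact hy2
    · linarith
  -- but ‖f₁ y‖ = ‖f₁ (y - x₂)‖ ≤ ‖y - x₂‖ < 1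
  have : (1 : ℝ) ≤ ‖y - x₂‖ := by
    have h5 : f₁ (y - x₂) = f₁ y := by rw [map_sub, h12, sub_zero]
    calc (1 : ℝ) = ‖f₁ (y - x₂)‖ := by rw [h5, hf₁y]
      _ ≤ ‖f₁‖ * ‖y - x₂‖ := f₁.le_opNorm _
      _ ≤ 1 * ‖y - x₂‖ := mul_le_mul_of_nonneg_right hf₁ (norm_nonneg _)
      _ = ‖y - x₂‖ := one_mul _
  linarith
end

section
/- Let Y be a 2-dimensional Banach space over 𝕜 (𝕜 = ℝ or ℂ), i.e., a complete normed 𝕜-vector space with finrank 𝕜 Y = 2. Then the pair (Y, Y) fails the uniform strong Bishop-Phelps-Bollobás property. -/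
/-- If `Y` is a `2`-dimensional Banach space, then the pair `(Y, Y)` fails
the uniform strong Bishop-Phelps-Bollobás property. -/
theorem two_dimensional_fails_uniform_sBPBp
    (𝕜 : Type*) [RCLike 𝕜]
    (Y : Type*) [NormedAddCommGroup Y] [NormedSpace 𝕜 Y] [CompleteSpace Y]
    (hY : Module.finrank 𝕜 Y = 2) :
    ¬ UniformSBPBp 𝕜 Y Y := by
  intro h
  obtain ⟨η, hη, hmain⟩ := h 1 one_pos
  have hfd : FiniteDimensional 𝕜 Y := FiniteDimensional.of_finrank_eq_succ hY
  have hnt : Nontrivial Y := Module.nontrivial_of_finrank_eq_succ (n := 1) hY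
  obtain ⟨z, hz⟩ := exists_ne (0 : Y)
  have hze : ‖z‖ ≠ 0 := norm_ne_zero_iff.2 hz
  set e : Y := ((‖z‖⁻¹ : ℝ) : 𝕜) • z with he
  have hne : ‖e‖ = 1 := by
    rw [he, norm_smul, RCLike.norm_ofReal, abs_of_nonneg (inv_nonneg.2 (norm_nonneg z)),
      inv_mul_cancel₀ hze]
  have he0 : e ≠ 0 := by
    intro h0
    rw [h0, norm_zero] at hne
    norm_num at hne
  obtain ⟨f, hf1, hfe⟩ := exists_dual_vector 𝕜 e (norm_ne_zero_iff.2 he0)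
  rw [hne, RCLike.ofReal_one] at hfe
  -- find a unit vector in the kernel of f
  have hker : ∃ w : Y, w ≠ 0 ∧ f w = 0 := by
    by_contra hcon
    push_neg at hcon
    have hinj : Function.Injective (f : Y →ₗ[𝕜] 𝕜) := by
      rw [← LinearMap.ker_eq_bot]
      rw [LinearMap.ker_eq_bot']
      intro m hm
      by_contra hm0
      exact (hcon m hm0) hm
    have := LinearMap.finrank_le_finrank_of_injective hinj
    rw [hY, Module.finrank_self] at this
    omega
  obtain ⟨w, hw0, hfw⟩ := hker
  have hwe : ‖w‖ ≠ 0 := norm_ne_zero_iff.2 hw0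
  set x₀ : Y := ((‖w‖⁻¹ : ℝ) : 𝕜) • w with hx₀def
  have hx0 : ‖x₀‖ = 1 := by
    rw [hx₀def, norm_smul, RCLike.norm_ofReal, abs_of_nonneg (inv_nonneg.2 (norm_nonneg w)),
      inv_mul_cancel₀ hwe]
  have hfx0 : f x₀ = 0 := by
    rw [hx₀def, map_smul, hfw, smul_zero]
  set δ : ℝ := min (η / 2) (1 / 2) with hδdef
  have hδ0 : 0 < δ := lt_min (by linarith) (by norm_num)
  have hδ1 : δ < 1 := lt_of_le_of_lt (min_le_right _ _) (by norm_num)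
  have hδη : δ < η := lt_of_le_of_lt (min_le_left _ _) (by linarith)
  set T : Y →L[𝕜] Y :=
    ((1 - δ : ℝ) : 𝕜) • ContinuousLinearMap.id 𝕜 Y + ((δ : ℝ) : 𝕜) • f.smulRight e
    with hTdef
  have hTx : ∀ x : Y, T x = ((1 - δ : ℝ) : 𝕜) • x + ((δ : ℝ) : 𝕜) • (f x) • e := by
    intro x
    simp [hTdef]
  have hbound : ∀ x : Y, ‖T x‖ ≤ ‖x‖ := by
    intro x
    rw [hTx]
    have hfx : ‖f x‖ ≤ ‖x‖ := by
      have := f.le_opNorm x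
      rwa [hf1, one_mul] at this
    calc ‖((1 - δ : ℝ) : 𝕜) • x + ((δ : ℝ) : 𝕜) • (f x) • e‖
        ≤ ‖((1 - δ : ℝ) : 𝕜) • x‖ + ‖((δ : ℝ) : 𝕜) • (f x) • e‖ := norm_add_le _ _
      _ = (1 - δ) * ‖x‖ + δ * (‖f x‖ * 1) := by
          rw [norm_smul, norm_smul, norm_smul, hne, RCLike.norm_ofReal,
            RCLike.norm_ofReal, abs_of_nonneg (by linarith : (0:ℝ) ≤ 1 - δ),
            abs_of_nonneg hδ0.le]
      _ ≤ (1 - δ) * ‖x‖ + δ * ‖x‖ := by nlinarith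
      _ = ‖x‖ := by ring
  have hTe : T e = e := by
    rw [hTx, hfe, one_smul, ← add_smul]
    norm_num
  have hTnorm : ‖T‖ = 1 := by
    apply le_antisymm
    · exact ContinuousLinearMap.opNorm_le_bound T zero_le_one
        (fun x => by rw [one_mul]; exact hbound x)
    · have := T.le_opNorm e
      rw [hTe, hne, mul_one] at this
      exact this
  have hTx0 : ‖T x₀‖ = 1 - δ := by
    rw [hTx, hfx0, zero_smul, smul_zero, add_zero, norm_smul, RCLike.norm_ofReal,
      abs_of_nonneg (by linarith : (0:ℝ) ≤ 1 - δ), hx0, mul_one]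
  obtain ⟨x₁, hx₁, hTx₁, hclose⟩ := hmain T hTnorm x₀ hx0 (by rw [hTx0]; linarith)
  -- norm attainment forces ‖f x₁‖ ≥ 1
  have hle : (1 : ℝ) ≤ (1 - δ) * 1 + δ * ‖f x₁‖ := by
    have : ‖T x₁‖ ≤ (1 - δ) * ‖x₁‖ + δ * ‖f x₁‖ := by
      rw [hTx]
      calc ‖((1 - δ : ℝ) : 𝕜) • x₁ + ((δ : ℝ) : 𝕜) • (f x₁) • e‖
          ≤ ‖((1 - δ : ℝ) : 𝕜) • x₁‖ + ‖((δ : ℝ) : 𝕜) • (f x₁) • e‖ := norm_add_le _ _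
        _ = (1 - δ) * ‖x₁‖ + δ * (‖f x₁‖ * 1) := by
            rw [norm_smul, norm_smul, norm_smul, hne, RCLike.norm_ofReal,
              RCLike.norm_ofReal, abs_of_nonneg (by linarith : (0:ℝ) ≤ 1 - δ),
              abs_of_nonneg hδ0.le]
        _ = (1 - δ) * ‖x₁‖ + δ * ‖f x₁‖ := by ring
    rw [hTx₁, hx₁] at this
    linarith
  have hfx1 : (1 : ℝ) ≤ ‖f x₁‖ := by nlinarith
  have hfar : (1 : ℝ) ≤ ‖x₁ - x₀‖ := by
    have h2 := f.le_opNorm (x₁ - x₀)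
    rw [hf1, one_mul, map_sub, hfx0, sub_zero] at h2
    linarith
  linarith
end

section
/- For 𝕜 = ℝ or ℂ, the pair (ℓ₂, ℓ₂²) fails the uniform strong Bishop-Phelps-Bollobás property, where ℓ₂ is the Hilbert space of square-summable scalar sequences and ℓ₂² is 𝕜² with the euclidean norm. -/
open scoped ENNReal

section Aux

variable (𝕜 : Type*) [RCLike 𝕜]

/-- The linear map `x ↦ (x 0, s • x 1)` from `ℓ₂` to `ℓ₂²`. -/
noncomputable def auxL (s : ℝ) : lp (fun _ : ℕ => 𝕜) 2 →ₗ[𝕜] PiLp 2 (fun _ : Fin 2 => 𝕜) where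
  toFun x := WithLp.toLp 2 ![x 0, (s : 𝕜) * x 1]
  map_add' x y := by
    ext i
    fin_cases i <;> simp [mul_add]
  map_smul' c x := by
    ext i
    fin_cases i <;> simp <;> ring

lemma auxL_norm_eq (s : ℝ) (hs : 0 ≤ s) (x : lp (fun _ : ℕ => 𝕜) 2) :
    ‖auxL 𝕜 s x‖ = Real.sqrt (‖x 0‖ ^ 2 + s ^ 2 * ‖x 1‖ ^ 2) := by
  rw [show (auxL 𝕜 s x : PiLp 2 (fun _ : Fin 2 => 𝕜)) =
      (WithLp.toLp 2 ![x 0, (s : 𝕜) * x 1] : EuclideanSpace 𝕜 (Fin 2)) from rfl,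
    EuclideanSpace.norm_eq]
  congr 1
  rw [Fin.sum_univ_two]
  simp [norm_mul, mul_pow, RCLike.norm_ofReal, abs_of_nonneg hs]

lemma aux_sum_le (x : lp (fun _ : ℕ => 𝕜) 2) : ‖x 0‖ ^ 2 + ‖x 1‖ ^ 2 ≤ ‖x‖ ^ 2 := by
  have h := lp.sum_rpow_le_norm_rpow (p := 2) (by norm_num) x ({0, 1} : Finset ℕ)
  have h01 : (({0, 1} : Finset ℕ)).sum (fun i => ‖x i‖ ^ (2 : ℝ≥0∞).toReal)
      = ‖x 0‖ ^ (2 : ℝ≥0∞).toReal + ‖x 1‖ ^ (2 : ℝ≥0∞).toReal := by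
    rw [Finset.sum_pair (by norm_num)]
  rw [h01] at h
  have ht : (2 : ℝ≥0∞).toReal = (2 : ℝ) := by norm_num
  rw [ht] at h
  calc ‖x 0‖ ^ 2 + ‖x 1‖ ^ 2
      = ‖x 0‖ ^ (2 : ℝ) + ‖x 1‖ ^ (2 : ℝ) := by
        rw [← Real.rpow_natCast (‖x 0‖) 2, ← Real.rpow_natCast (‖x 1‖) 2]; norm_num
    _ ≤ ‖x‖ ^ (2 : ℝ) := h
    _ = ‖x‖ ^ 2 := by rw [← Real.rpow_natCast (‖x‖) 2]; norm_num

end Aux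

set_option maxHeartbeats 1000000 in
/-- The pair `(ℓ₂, ℓ₂²)` fails the uniform strong Bishop-Phelps-Bollobás
property. -/
theorem l2_seq_l2_two_fails_uniform_sBPBp
    (𝕜 : Type*) [RCLike 𝕜] :
    ¬ UniformSBPBp 𝕜 (lp (fun _ : ℕ => 𝕜) 2) (PiLp 2 (fun _ : Fin 2 => 𝕜)) := by
  intro h
  obtain ⟨η, hη, H⟩ := h 1 one_pos
  set s : ℝ := 1 - min η 1 / 2 with hs_def
  have hs0 : 0 ≤ s := by
    have : min η 1 ≤ 1 := min_le_right _ _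
    simp only [hs_def]; linarith
  have hs1 : s < 1 := by
    have : 0 < min η 1 := lt_min hη one_pos
    simp only [hs_def]; linarith
  have hsη : 1 - η < s := by
    have : min η 1 ≤ η := min_le_left _ _
    simp only [hs_def]; linarith
  -- the operator
  have hbound : ∀ x : lp (fun _ : ℕ => 𝕜) 2, ‖auxL 𝕜 s x‖ ≤ 1 * ‖x‖ := by
    intro x
    rw [one_mul, auxL_norm_eq 𝕜 s hs0]
    have h1 : s ^ 2 * ‖x 1‖ ^ 2 ≤ ‖x 1‖ ^ 2 := by
      have : s ^ 2 ≤ 1 := by nlinarith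
      nlinarith [sq_nonneg (‖x 1‖)]
    have h2 : ‖x 0‖ ^ 2 + s ^ 2 * ‖x 1‖ ^ 2 ≤ ‖x‖ ^ 2 :=
      le_trans (by linarith) (aux_sum_le 𝕜 x)
    calc Real.sqrt (‖x 0‖ ^ 2 + s ^ 2 * ‖x 1‖ ^ 2) ≤ Real.sqrt (‖x‖ ^ 2) :=
          Real.sqrt_le_sqrt h2
      _ = ‖x‖ := Real.sqrt_sq (norm_nonneg _)
  set T : lp (fun _ : ℕ => 𝕜) 2 →L[𝕜] PiLp 2 (fun _ : Fin 2 => 𝕜) :=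
    (auxL 𝕜 s).mkContinuous 1 hbound with hT_def
  have hT_apply : ∀ x, T x = auxL 𝕜 s x := fun x => rfl
  -- basis vectors
  set e0 : lp (fun _ : ℕ => 𝕜) 2 := lp.single 2 0 (1 : 𝕜) with he0
  set e1 : lp (fun _ : ℕ => 𝕜) 2 := lp.single 2 1 (1 : 𝕜) with he1
  have hne0 : ‖e0‖ = 1 := by
    have := lp.norm_single (p := 2) (E := fun _ : ℕ => 𝕜) (by norm_num)
      0 (1 : 𝕜)
    rw [he0, this, norm_one]
  have hne1 : ‖e1‖ = 1 := by
    have := lp.norm_single (p := 2) (E := fun _ : ℕ => 𝕜) (by norm_num)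
      1 (1 : 𝕜)
    rw [he1, this, norm_one]
  have he0_0 : e0 0 = 1 := by rw [he0]; exact lp.single_apply_self (E := fun _ : ℕ => 𝕜) 2 0 (1 : 𝕜)
  have he0_1 : e0 1 = 0 := by rw [he0]; exact lp.single_apply_ne (E := fun _ : ℕ => 𝕜) 2 0 (1 : 𝕜) (by norm_num : (1:ℕ) ≠ 0)
  have he1_0 : e1 0 = 0 := by rw [he1]; exact lp.single_apply_ne (E := fun _ : ℕ => 𝕜) 2 1 (1 : 𝕜) (by norm_num : (0:ℕ) ≠ 1)
  have he1_1 : e1 1 = 1 := by rw [he1]; exact lp.single_apply_self (E := fun _ : ℕ => 𝕜) 2 1 (1 : 𝕜)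
  -- ‖T‖ = 1
  have hTe0 : ‖T e0‖ = 1 := by
    rw [hT_apply, auxL_norm_eq 𝕜 s hs0, he0_0, he0_1]
    simp
  have hTnorm : ‖T‖ = 1 := by
    refine le_antisymm ((auxL 𝕜 s).mkContinuous_norm_le one_pos.le hbound) ?_
    have := T.le_opNorm e0
    rw [hTe0, hne0, mul_one] at this
    exact this
  -- ‖T e1‖ = s > 1 - η
  have hTe1 : ‖T e1‖ = s := by
    rw [hT_apply, auxL_norm_eq 𝕜 s hs0, he1_0, he1_1, norm_zero, norm_one]
    rw [show (0:ℝ)^2 + s^2*1^2 = s^2 by ring, Real.sqrt_sq hs0]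
  obtain ⟨x₁, hx₁, hTx₁, hdist⟩ := H T hTnorm e1 hne1 (by rw [hTe1]; exact hsη)
  -- x₁ 1 = 0
  have hsum : ‖x₁ 0‖ ^ 2 + ‖x₁ 1‖ ^ 2 ≤ 1 := by
    have := aux_sum_le 𝕜 x₁
    rwa [hx₁, one_pow] at this
  have hTx₁' : ‖x₁ 0‖ ^ 2 + s ^ 2 * ‖x₁ 1‖ ^ 2 = 1 := by
    have h1 := hTx₁
    rw [hT_apply, auxL_norm_eq 𝕜 s hs0] at h1
    have := Real.sq_sqrt (by positivity : (0:ℝ) ≤ ‖x₁ 0‖ ^ 2 + s ^ 2 * ‖x₁ 1‖ ^ 2)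
    rw [h1] at this
    linarith [this]
  have hx11 : ‖x₁ 1‖ = 0 := by
    have hs2 : s ^ 2 < 1 := by nlinarith
    have ha : ‖x₁ 1‖ ^ 2 ≤ 0 := by nlinarith [sq_nonneg (‖x₁ 1‖)]
    have ha' : ‖x₁ 1‖ ^ 2 = 0 := le_antisymm ha (sq_nonneg _)
    exact (pow_eq_zero_iff two_ne_zero).mp ha'
  -- contradiction with distance
  have hkey : (1 : ℝ) ≤ ‖x₁ - e1‖ := by
    have h1 : ‖(x₁ - e1) 1‖ ≤ ‖x₁ - e1‖ :=
      lp.norm_apply_le_norm (by norm_num) (x₁ - e1) 1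
    have h2 : (x₁ - e1) 1 = x₁ 1 - 1 := by
      rw [lp.coeFn_sub, Pi.sub_apply, he1_1]
    rw [h2] at h1
    have h3 : (1 : ℝ) ≤ ‖x₁ 1 - 1‖ := by
      have := norm_sub_norm_le (x₁ 1) (1 : 𝕜)
      rw [hx11] at this
      have h4 : ‖(1 : 𝕜)‖ = 1 := norm_one
      calc (1:ℝ) = ‖(1:𝕜)‖ - ‖x₁ 1‖ := by rw [h4, hx11]; ring
        _ ≤ ‖x₁ 1 - 1‖ := by
            have := norm_sub_norm_le (x₁ 1) (1 : 𝕜)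
            linarith [abs_le.mp (abs_norm_sub_norm_le (x₁ 1) (1:𝕜))]
    linarith
  linarith
end
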